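/- arXiv:2205.11466 — 3 statements merged into one kernel-verified Lean document; each statement's English description precedes it below -/
import Mathlib

section
/- Let d ≥ m ≥ 0 and let g be a binary form of degree m and u₁', u₂' coprime binary forms of degree d − m such that g and u₁'² + u₂'² are coprime. Set u₁ = g·u₁' and u₂ = g·u₂'. Then for every binary form p of degree 2d that is a sum of squares of binary forms of degree d, there exist binary forms v₁, v₂ of degree d and a finite family of pairs (w₁⁽ⁱ⁾, w₂⁽ⁱ⁾) of binary forms of degree d with u₁w₁⁽ⁱ⁾ + u₂w₂⁽ⁱ⁾ = 0 for each i, such that p = u₁v₁ + u₂v₂ + ∑ᵢ ((w₁⁽ⁱ⁾)² + (w₂⁽ⁱ⁾)²). -/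
open MvPolynomial

section Aux

variable {K : Type} [Field K]



lemma deg_eq (d : Fin 2 →₀ ℕ) : d.degree = d 0 + d 1 := by
  rw [Finsupp.degree_apply]
  rw [Finset.sum_subset (Finset.subset_univ d.support)]
  · exact Fin.sum_univ_two d
  · intro x _ hx
    exact Finsupp.notMem_support_iff.mp hx

lemma eq_single_add (d : Fin 2 →₀ ℕ) :
    d = Finsupp.single 0 (d 0) + Finsupp.single 1 (d 1) := by
  ext j
  fin_cases j <;> simp [Finsupp.single_apply]

noncomputable def coeffMap (n : ℕ) :
    (homogeneousSubmodule (Fin 2) K n) →ₗ[K] (Fin (n+1) → K) :=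
  LinearMap.pi fun i =>
    (lcoeff K (Finsupp.single 0 (i : ℕ) + Finsupp.single 1 (n - i))).comp
      (homogeneousSubmodule (Fin 2) K n).subtype

lemma coeffMap_bijective (n : ℕ) : Function.Bijective (coeffMap (K := K) n) := by
  constructor
  · rw [← LinearMap.ker_eq_bot, LinearMap.ker_eq_bot']
    intro f hf
    ext1
    ext d
    simp only [Submodule.coe_zero, coeff_zero]
    by_cases hd : d.degree = n
    · have h0 : d 0 ≤ n := by rw [deg_eq] at hd; omega
      have := congrFun hf ⟨d 0, by omega⟩
      simp only [coeffMap, LinearMap.pi_apply, LinearMap.comp_apply,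
        Submodule.coe_subtype, lcoeff_apply, Pi.zero_apply] at this
      have hd1 : d 1 = n - d 0 := by rw [deg_eq] at hd; omega
      rwa [← hd1, ← eq_single_add] at this
    · exact (f.2 : MvPolynomial.IsHomogeneous _ n).coeff_eq_zero hd
  · intro v
    have hmem : (∑ i : Fin (n+1), monomial (Finsupp.single 0 (i : ℕ) + Finsupp.single 1 (n - i)) (v i)) ∈ homogeneousSubmodule (Fin 2) K n := by
      rw [mem_homogeneousSubmodule]
      apply MvPolynomial.IsHomogeneous.sum
      intro i _
      apply isHomogeneous_monomial
      rw [deg_eq]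
      simp [Finsupp.single_apply]
      omega
    refine ⟨⟨_, hmem⟩, ?_⟩
    funext j
    simp only [coeffMap, LinearMap.pi_apply, LinearMap.comp_apply,
      Submodule.coe_subtype, lcoeff_apply]
    rw [MvPolynomial.coeff_sum]
    rw [Finset.sum_eq_single j]
    · simp [coeff_monomial]
    · intro i _ hij
      rw [coeff_monomial, if_neg]
      intro hcon
      apply hij
      have := congrFun (congrArg (fun f : Fin 2 →₀ ℕ => (f : Fin 2 → ℕ)) hcon) 0
      simp [Finsupp.single_apply] at this
      exact Fin.ext this
    · intro h
      exact absurd (Finset.mem_univ j) h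

noncomputable def hEquiv (n : ℕ) :
    (homogeneousSubmodule (Fin 2) K n) ≃ₗ[K] (Fin (n+1) → K) :=
  LinearEquiv.ofBijective _ (coeffMap_bijective n)

instance (n : ℕ) : FiniteDimensional K (homogeneousSubmodule (Fin 2) K n) :=
  Module.Finite.equiv (hEquiv n).symm

lemma finrank_hs (n : ℕ) :
    Module.finrank K (homogeneousSubmodule (Fin 2) K n) = n + 1 := by
  rw [(hEquiv (K := K) n).finrank_eq, Module.finrank_fintype_fun_eq_card, Fintype.card_fin]



lemma hcomp_mul (F : MvPolynomial (Fin 2) K) {α : ℕ} (hF : F.IsHomogeneous α)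
    (c : MvPolynomial (Fin 2) K) (k : ℕ) :
    homogeneousComponent (α + k) (F * c) = F * homogeneousComponent k c := by
  induction c using MvPolynomial.induction_on' with
  | monomial d r =>
    have hmon : (monomial d r).IsHomogeneous d.degree := isHomogeneous_monomial r rfl
    have hFm : (F * monomial d r) ∈ homogeneousSubmodule (Fin 2) K (α + d.degree) :=
      (mem_homogeneousSubmodule _ _).mpr (hF.mul hmon)
    rw [homogeneousComponent_of_mem hFm,
      homogeneousComponent_of_mem ((mem_homogeneousSubmodule _ _).mpr hmon)]
    by_cases h : d.degree = k
    · rw [if_pos (by omega), if_pos h.symm]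
    · rw [if_neg (by omega), if_neg (Ne.symm h), mul_zero]
  | add p q hp hq =>
    rw [mul_add, map_add, map_add, hp, hq, mul_add]

lemma homog_of_mul_homog {F c : MvPolynomial (Fin 2) K} {α n : ℕ}
    (hF : F.IsHomogeneous α) (hF0 : F ≠ 0) (h : (F * c).IsHomogeneous n) :
    c.IsHomogeneous (n - α) := by
  intro d hd
  have h1 : homogeneousComponent d.degree c ≠ 0 := by
    intro hcon
    have := coeff_homogeneousComponent (φ := c) d.degree d
    rw [hcon, if_pos rfl] at this
    exact hd this.symm
  have h2 : F * homogeneousComponent d.degree c ≠ 0 := mul_ne_zero hF0 h1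
  rw [← hcomp_mul F hF] at h2
  have h3 : α + d.degree = n := by
    by_contra hcon
    rw [homogeneousComponent_of_mem ((mem_homogeneousSubmodule _ _).mpr h), if_neg hcon] at h2
    exact h2 rfl
  have hα : α ≤ n := by omega
  simp only [Finsupp.weight_apply, Pi.one_apply, smul_eq_mul, mul_one]
  show d.degree = n - α
  omega

set_option synthInstance.maxHeartbeats 1000000 in
set_option maxHeartbeats 1000000 in
lemma S1 (F G : MvPolynomial (Fin 2) K) {α β n : ℕ} (hF : F.IsHomogeneous α) (hG : G.IsHomogeneous β)
    (hF0 : F ≠ 0) (hG0 : G ≠ 0) (hrel : IsRelPrime F G)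
    (hn : α + β ≤ n)
    (h : MvPolynomial (Fin 2) K) (hh : h.IsHomogeneous n) :
    ∃ a b : MvPolynomial (Fin 2) K, a.IsHomogeneous (n - α) ∧ b.IsHomogeneous (n - β) ∧
      h = F * a + G * b := by
  classical
  have hα : α ≤ n := by omega
  have hβ : β ≤ n := by omega
  set Va := homogeneousSubmodule (Fin 2) K (n - α) with hVa
  set Vb := homogeneousSubmodule (Fin 2) K (n - β) with hVb
  set Vn := homogeneousSubmodule (Fin 2) K n with hVn
  set Vc := homogeneousSubmodule (Fin 2) K (n - α - β) with hVc
  have hΦmem : ∀ x : Va × Vb, F * (x.1 : MvPolynomial (Fin 2) K) + G * (x.2 : MvPolynomial (Fin 2) K) ∈ Vn := by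
    rintro ⟨⟨a, ha⟩, ⟨b, hb⟩⟩
    rw [hVn, mem_homogeneousSubmodule]
    rw [hVa, mem_homogeneousSubmodule] at ha
    rw [hVb, mem_homogeneousSubmodule] at hb
    have h1 := hF.mul ha
    have h2 := hG.mul hb
    rw [show α + (n - α) = n by omega] at h1
    rw [show β + (n - β) = n by omega] at h2
    exact h1.add h2
  let Φ : (Va × Vb) →ₗ[K] Vn :=
    { toFun := fun x => ⟨F * (x.1 : MvPolynomial (Fin 2) K) + G * (x.2 : MvPolynomial (Fin 2) K), hΦmem x⟩
      map_add' := by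
        rintro x y
        apply Subtype.ext
        simp only [Prod.fst_add, Prod.snd_add, Submodule.coe_add]
        ring
      map_smul' := by
        rintro r x
        apply Subtype.ext
        simp only [Prod.smul_fst, Prod.smul_snd, SetLike.val_smul, RingHom.id_apply,
          smul_eq_C_mul]
        ring }
  have hψmem1 : ∀ c : Vc, G * (c : MvPolynomial (Fin 2) K) ∈ Va := by
    rintro ⟨c, hc⟩
    rw [hVa, mem_homogeneousSubmodule]
    rw [hVc, mem_homogeneousSubmodule] at hc
    have := hG.mul hc
    rwa [show β + (n - α - β) = n - α by omega] at this
  have hψmem2 : ∀ c : Vc, -(F * (c : MvPolynomial (Fin 2) K)) ∈ Vb := by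
    rintro ⟨c, hc⟩
    rw [hVb, mem_homogeneousSubmodule]
    rw [hVc, mem_homogeneousSubmodule] at hc
    have := (hF.mul hc).neg
    rwa [show α + (n - α - β) = n - β by omega] at this
  let ψ : Vc →ₗ[K] (Va × Vb) :=
    { toFun := fun c => (⟨G * (c : MvPolynomial (Fin 2) K), hψmem1 c⟩, ⟨-(F * (c : MvPolynomial (Fin 2) K)), hψmem2 c⟩)
      map_add' := by
        rintro x y
        refine Prod.ext (Subtype.ext ?_) (Subtype.ext ?_) <;>
          simp only [Prod.fst_add, Prod.snd_add, Submodule.coe_add] <;> ring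
      map_smul' := by
        rintro r x
        refine Prod.ext (Subtype.ext ?_) (Subtype.ext ?_) <;>
          simp only [Prod.smul_fst, Prod.smul_snd, SetLike.val_smul, RingHom.id_apply,
            smul_eq_C_mul] <;> ring }
  have hψinj : Function.Injective ψ := by
    rw [← LinearMap.ker_eq_bot, LinearMap.ker_eq_bot']
    intro c hc
    have h1 : G * (c : MvPolynomial (Fin 2) K) = 0 := by
      have := congrArg (fun x : Va × Vb => (x.1 : MvPolynomial (Fin 2) K)) hc
      simpa [ψ] using this
    ext1
    simpa using (mul_eq_zero.mp h1).resolve_left hG0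
  have hrange : LinearMap.range ψ = LinearMap.ker Φ := by
    apply le_antisymm
    · rintro x ⟨c, rfl⟩
      rw [LinearMap.mem_ker]
      apply Subtype.ext
      show F * (G * (c : MvPolynomial (Fin 2) K)) + G * -(F * (c : MvPolynomial (Fin 2) K)) = 0
      ring
    · rintro ⟨⟨a, ha⟩, ⟨b, hb⟩⟩ hx
      have hab : F * a + G * b = 0 := by
        have := congrArg (fun x : Vn => (x : MvPolynomial (Fin 2) K)) hx
        simpa [Φ] using this
      have hdvd : G ∣ F * a := ⟨-b, by linear_combination hab⟩
      obtain ⟨c, hc⟩ := hrel.symm.dvd_of_dvd_mul_left hdvd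
      have hchom : c.IsHomogeneous (n - α - β) := by
        have hGc : (G * c).IsHomogeneous (n - α) := by
          rw [← hc]
          rw [hVa, mem_homogeneousSubmodule] at ha
          exact ha
        exact homog_of_mul_homog hG hG0 hGc
      have hbc : b = -(F * c) := by
        have h0 : G * (F * c + b) = 0 := by
          rw [hc] at hab
          linear_combination hab
        have := (mul_eq_zero.mp h0).resolve_left hG0
        linear_combination this
      refine ⟨⟨c, hchom⟩, ?_⟩
      refine Prod.ext (Subtype.ext ?_) (Subtype.ext ?_)
      · exact hc.symm
      · exact hbc.symm
  have hkerdim : Module.finrank K (LinearMap.ker Φ) = n - α - β + 1 := by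
    rw [← hrange, ← (LinearEquiv.ofInjective ψ hψinj).finrank_eq]
    exact finrank_hs _
  have hdom : Module.finrank K (Va × Vb) = (n - α + 1) + (n - β + 1) := by
    rw [Module.finrank_prod, hVa, hVb, finrank_hs, finrank_hs]
  have hrk := Φ.finrank_range_add_finrank_ker
  have hVnrank : Module.finrank K Vn = n + 1 := finrank_hs n
  have hrkval : Module.finrank K (LinearMap.range Φ) = Module.finrank K Vn := by
    rw [hVnrank]
    rw [hdom, hkerdim] at hrk
    omega
  have htop : LinearMap.range Φ = ⊤ := Submodule.eq_top_of_finrank_eq hrkval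
  have hmem : h ∈ Vn := (mem_homogeneousSubmodule _ _).mpr hh
  obtain ⟨⟨⟨a, ha⟩, ⟨b, hb⟩⟩, hab⟩ := LinearMap.range_eq_top.mp htop ⟨h, hmem⟩
  refine ⟨a, b, ?_, ?_, ?_⟩
  · rw [hVa, mem_homogeneousSubmodule] at ha; exact ha
  · rw [hVb, mem_homogeneousSubmodule] at hb; exact hb
  · have := congrArg (fun x : Vn => (x : MvPolynomial (Fin 2) K)) hab
    simpa [Φ] using this.symm

end Aux

section AuxC


noncomputable abbrev σc : MvPolynomial (Fin 2) ℂ →+* MvPolynomial (Fin 2) ℂ :=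
  MvPolynomial.map (starRingEnd ℂ)

noncomputable abbrev cmap : MvPolynomial (Fin 2) ℝ →+* MvPolynomial (Fin 2) ℂ :=
  MvPolynomial.map Complex.ofRealHom

lemma cmap_injective : Function.Injective cmap :=
  MvPolynomial.map_injective _ Complex.ofReal_injective

lemma σc_cmap (f : MvPolynomial (Fin 2) ℝ) : σc (cmap f) = cmap f := by
  show MvPolynomial.map (starRingEnd ℂ) (MvPolynomial.map Complex.ofRealHom f) =
    MvPolynomial.map Complex.ofRealHom f
  have hcomp : (starRingEnd ℂ).comp Complex.ofRealHom = Complex.ofRealHom := by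
    ext r
    simp
  rw [MvPolynomial.map_map, hcomp]

lemma σc_σc (P : MvPolynomial (Fin 2) ℂ) : σc (σc P) = P := by
  show MvPolynomial.map (starRingEnd ℂ) (MvPolynomial.map (starRingEnd ℂ) P) = P
  have hcomp : (starRingEnd ℂ).comp (starRingEnd ℂ) = RingHom.id ℂ := by
    ext z
    simp
  rw [MvPolynomial.map_map, hcomp, MvPolynomial.map_id]

noncomputable def rePart (P : MvPolynomial (Fin 2) ℂ) : MvPolynomial (Fin 2) ℝ :=
  ∑ d ∈ P.support, monomial d (P.coeff d).re

noncomputable def imPart (P : MvPolynomial (Fin 2) ℂ) : MvPolynomial (Fin 2) ℝ :=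
  ∑ d ∈ P.support, monomial d (P.coeff d).im

lemma coeff_rePart (P : MvPolynomial (Fin 2) ℂ) (d : Fin 2 →₀ ℕ) :
    coeff d (rePart P) = (coeff d P).re := by
  rw [rePart, coeff_sum]
  by_cases hd : d ∈ P.support
  · rw [Finset.sum_eq_single d (fun i _ hi => by rw [coeff_monomial, if_neg hi])
      (fun h => absurd hd h), coeff_monomial, if_pos rfl]
  · rw [Finset.sum_eq_zero (fun i hi => by
      rw [coeff_monomial, if_neg (by rintro rfl; exact hd hi)])]
    rw [MvPolynomial.notMem_support_iff.mp hd]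
    simp

lemma coeff_imPart (P : MvPolynomial (Fin 2) ℂ) (d : Fin 2 →₀ ℕ) :
    coeff d (imPart P) = (coeff d P).im := by
  rw [imPart, coeff_sum]
  by_cases hd : d ∈ P.support
  · rw [Finset.sum_eq_single d (fun i _ hi => by rw [coeff_monomial, if_neg hi])
      (fun h => absurd hd h), coeff_monomial, if_pos rfl]
  · rw [Finset.sum_eq_zero (fun i hi => by
      rw [coeff_monomial, if_neg (by rintro rfl; exact hd hi)])]
    rw [MvPolynomial.notMem_support_iff.mp hd]
    simp

lemma decompose_complex (P : MvPolynomial (Fin 2) ℂ) :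
    P = cmap (rePart P) + C Complex.I * cmap (imPart P) := by
  ext d
  rw [coeff_add, coeff_C_mul, coeff_map, coeff_map, coeff_rePart, coeff_imPart]
  simp only [Complex.ofRealHom_eq_coe]
  rw [mul_comm]
  exact (Complex.re_add_im _).symm

lemma real_of_conj_fixed {P : MvPolynomial (Fin 2) ℂ} (h : σc P = P) :
    cmap (rePart P) = P := by
  ext d
  rw [coeff_map, coeff_rePart]
  simp only [Complex.ofRealHom_eq_coe]
  have : (starRingEnd ℂ) (coeff d P) = coeff d P := by
    conv_rhs => rw [← h]
    rw [coeff_map]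
  exact Complex.conj_eq_iff_re.mp this

lemma rePart_homog {P : MvPolynomial (Fin 2) ℂ} {n : ℕ} (h : P.IsHomogeneous n) :
    (rePart P).IsHomogeneous n := by
  intro d hd
  apply h
  rw [coeff_rePart] at hd
  intro hcon
  rw [hcon] at hd
  simp at hd

lemma imPart_homog {P : MvPolynomial (Fin 2) ℂ} {n : ℕ} (h : P.IsHomogeneous n) :
    (imPart P).IsHomogeneous n := by
  intro d hd
  apply h
  rw [coeff_imPart] at hd
  intro hcon
  rw [hcon] at hd
  simp at hd

lemma dvd_descend {f h : MvPolynomial (Fin 2) ℝ} (hd : cmap f ∣ cmap h) : f ∣ h := by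
  rcases eq_or_ne f 0 with rfl | hf0
  · rw [map_zero] at hd
    obtain ⟨c, hc⟩ := hd
    rw [zero_mul] at hc
    rw [show h = 0 from cmap_injective (by rw [hc, map_zero])]
  · obtain ⟨c, hc⟩ := hd
    have hσ : σc (cmap h) = cmap f * σc c := by rw [hc, map_mul, σc_cmap]
    rw [σc_cmap, hc] at hσ
    have hcfix : σc c = c := (mul_left_cancel₀ (fun hcon => hf0 (cmap_injective (by rw [hcon, map_zero]))) hσ.symm)
    refine ⟨rePart c, cmap_injective ?_⟩
    rw [hc, map_mul, real_of_conj_fixed hcfix]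

lemma σc_injective : Function.Injective σc :=
  Function.LeftInverse.injective σc_σc

lemma σc_prime {π : MvPolynomial (Fin 2) ℂ} (hπ : Prime π) : Prime (σc π) := by
  refine ⟨fun h => hπ.ne_zero (σc_injective (by rw [h, map_zero])), ?_, ?_⟩
  · intro h
    exact hπ.not_unit (by
      have := IsUnit.map σc h
      rwa [σc_σc] at this)
  · intro a b hab
    have h1 : π ∣ σc a * σc b := by
      have := map_dvd σc hab
      rw [σc_σc, map_mul] at this
      exact this
    rcases hπ.2.2 _ _ h1 with h | h
    · left
      have := map_dvd σc h
      rwa [σc_σc] at this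
    · right
      have := map_dvd σc h
      rwa [σc_σc] at this

lemma hJ : (C Complex.I : MvPolynomial (Fin 2) ℂ) * C Complex.I = -1 := by
  rw [← C_mul, Complex.I_mul_I, map_neg, map_one]

lemma relprime_transfer {g u₁' u₂' : MvPolynomial (Fin 2) ℝ} (hg0 : g ≠ 0)
    (hcopg : ∀ w : MvPolynomial (Fin 2) ℝ, w ∣ g → w ∣ (u₁' ^ 2 + u₂' ^ 2) → IsUnit w) :
    IsRelPrime (cmap u₁' + C Complex.I * cmap u₂') (cmap g) := by
  set F : MvPolynomial (Fin 2) ℂ := cmap u₁' + C Complex.I * cmap u₂' with hF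
  intro w hw1 hw2
  by_contra hw
  have hw0 : w ≠ 0 := by
    rintro rfl
    obtain ⟨c, hc⟩ := hw2
    rw [zero_mul] at hc
    exact hg0 (cmap_injective (by rw [hc, map_zero]))
  obtain ⟨π, hπirr, hπdvd⟩ := WfDvdMonoid.exists_irreducible_factor hw hw0
  have hπ : Prime π := UniqueFactorizationMonoid.irreducible_iff_prime.mp hπirr
  have hπF : π ∣ F := dvd_trans hπdvd hw1
  have hπg : π ∣ cmap g := dvd_trans hπdvd hw2
  have hFσF : F * σc F = cmap (u₁' ^ 2 + u₂' ^ 2) := by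
    have hσF : σc F = cmap u₁' - C Complex.I * cmap u₂' := by
      rw [hF, map_add, map_mul, σc_cmap, σc_cmap]
      rw [show σc (C Complex.I) = C (-Complex.I) by
        rw [show σc (C Complex.I) = C ((starRingEnd ℂ) Complex.I) from MvPolynomial.map_C _ _]
        rw [Complex.conj_I]]
      rw [map_neg]
      ring
    rw [hσF, hF, map_add, map_pow, map_pow]
    linear_combination (-(cmap u₂' * cmap u₂')) * hJ
  have hπS : π ∣ cmap (u₁' ^ 2 + u₂' ^ 2) := hFσF ▸ hπF.mul_right _
  set S := u₁' ^ 2 + u₂' ^ 2 with hS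
  have hσπg : σc π ∣ cmap g := by
    have := map_dvd σc hπg
    rwa [σc_cmap] at this
  have hσπS : σc π ∣ cmap S := by
    have := map_dvd σc hπS
    rwa [σc_cmap] at this
  have hrfix : σc (π * σc π) = π * σc π := by rw [map_mul, σc_σc, mul_comm]
  have hrR := real_of_conj_fixed hrfix
  set rR := rePart (π * σc π) with hrRdef
  have hrg : rR ∣ g * g := dvd_descend (by rw [hrR, map_mul]; exact mul_dvd_mul hπg hσπg)
  have hrS : rR ∣ S * S := dvd_descend (by rw [hrR, map_mul]; exact mul_dvd_mul hπS hσπS)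
  have hrR0 : rR ≠ 0 := by
    intro h0
    rw [h0, map_zero] at hrR
    rcases mul_eq_zero.mp hrR.symm with h | h
    · exact hπ.ne_zero h
    · exact (σc_prime hπ).ne_zero h
  have hrRu : ¬IsUnit rR := by
    intro hu
    have := hu.map cmap
    rw [hrR] at this
    exact hπ.not_unit (isUnit_of_mul_isUnit_left this)
  obtain ⟨ρ, hρirr, hρdvd⟩ := WfDvdMonoid.exists_irreducible_factor hrRu hrR0
  have hρ : Prime ρ := UniqueFactorizationMonoid.irreducible_iff_prime.mp hρirr
  have hρg : ρ ∣ g := (hρ.2.2 g g (hρdvd.trans hrg)).elim id id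
  have hρS : ρ ∣ S := (hρ.2.2 S S (hρdvd.trans hrS)).elim id id
  exact hρ.not_unit (hcopg ρ hρg hρS)


lemma key (d m : ℕ) (hm : m ≤ d) (g u₁' u₂' : MvPolynomial (Fin 2) ℝ)
    (hg : g.IsHomogeneous m) (hg0 : g ≠ 0)
    (hu₁' : u₁'.IsHomogeneous (d - m)) (hu₂' : u₂'.IsHomogeneous (d - m))
    (hcop : ∀ w : MvPolynomial (Fin 2) ℝ, w ∣ u₁' → w ∣ u₂' → IsUnit w)
    (hcopg : ∀ w : MvPolynomial (Fin 2) ℝ, w ∣ g → w ∣ (u₁' ^ 2 + u₂' ^ 2) → IsUnit w)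
    (t : MvPolynomial (Fin 2) ℝ) (ht : t.IsHomogeneous d) :
    ∃ a₁ a₂ q₁ q₂ : MvPolynomial (Fin 2) ℝ,
      a₁.IsHomogeneous d ∧ a₂.IsHomogeneous d ∧ q₁.IsHomogeneous m ∧ q₂.IsHomogeneous m ∧
      t ^ 2 = (g * u₁') * a₁ + (g * u₂') * a₂ +
        ((q₁ ^ 2 + q₂ ^ 2) * (u₁' ^ 2 + u₂' ^ 2)) := by
  set e := d - m with he
  -- not both zero
  have hnz : ¬(u₁' = 0 ∧ u₂' = 0) := by
    rintro ⟨h1, h2⟩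
    have hu : IsUnit (X 0 : MvPolynomial (Fin 2) ℝ) :=
      hcop (X 0) (by rw [h1]; exact dvd_zero _) (by rw [h2]; exact dvd_zero _)
    have := hu.map (eval (fun _ => (0 : ℝ)))
    rw [eval_X] at this
    exact not_isUnit_zero this
  set F : MvPolynomial (Fin 2) ℂ := cmap u₁' + C Complex.I * cmap u₂' with hFdef
  have hF0 : F ≠ 0 := by
    intro hcon
    apply hnz
    have hco : ∀ dd : Fin 2 →₀ ℕ, coeff dd u₁' = 0 ∧ coeff dd u₂' = 0 := by
      intro dd
      have := congrArg (coeff dd) hcon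
      rw [hFdef] at this
      simp only [coeff_add, coeff_C_mul, coeff_map, Complex.ofRealHom_eq_coe, coeff_zero] at this
      constructor
      · have := congrArg Complex.re this
        simpa using this
      · have := congrArg Complex.im this
        simpa using this
    constructor
    · ext dd; simpa using (hco dd).1
    · ext dd; simpa using (hco dd).2
  have hFhom : F.IsHomogeneous e := by
    rw [hFdef]
    refine (hu₁'.map _).add ?_
    have := (isHomogeneous_C (Fin 2) Complex.I).mul (hu₂'.map Complex.ofRealHom)
    rwa [zero_add] at this
  have hgC0 : cmap g ≠ 0 := fun hcon => hg0 (cmap_injective (by rw [hcon, map_zero]))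
  have hrelC : IsRelPrime F (cmap g) := relprime_transfer hg0 hcopg
  obtain ⟨qc, cc, hqch, hcch, hq⟩ := S1 F (cmap g) hFhom (hg.map _) hF0 hgC0 hrelC
    (show e + m ≤ d by omega) (cmap t) (ht.map _)
  have hqcm : qc.IsHomogeneous m := by
    have : d - e = m := by omega
    rwa [this] at hqch
  -- conjugated identity
  have hσCI : σc (C Complex.I) = - C Complex.I := by
    rw [show σc (C Complex.I) = C ((starRingEnd ℂ) Complex.I) from MvPolynomial.map_C _ _,
      Complex.conj_I, map_neg]
  have hσF : σc F = cmap u₁' - C Complex.I * cmap u₂' := by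
    rw [hFdef, map_add, map_mul, σc_cmap, σc_cmap, hσCI]
    ring
  have hconj : cmap t = σc F * σc qc + cmap g * σc cc := by
    have h2 := congrArg σc hq
    rwa [map_add, map_mul, map_mul, σc_cmap, σc_cmap] at h2
  have hFσF : F * σc F = cmap (u₁' ^ 2 + u₂' ^ 2) := by
    rw [hσF, hFdef, map_add, map_pow, map_pow]
    linear_combination (-(cmap u₂' * cmap u₂')) * hJ
  set q₁ := rePart qc with hq₁
  set q₂ := imPart qc with hq₂
  have hqdec : qc = cmap q₁ + C Complex.I * cmap q₂ := decompose_complex qc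
  have hσqc : σc qc = cmap q₁ - C Complex.I * cmap q₂ := by
    conv_lhs => rw [hqdec]
    rw [map_add, map_mul, σc_cmap, σc_cmap, hσCI]
    ring
  have hB : qc * σc qc = cmap (q₁ ^ 2 + q₂ ^ 2) := by
    conv_lhs => rw [hσqc]
    conv_lhs => rw [hqdec]
    rw [map_add, map_pow, map_pow]
    linear_combination (-(cmap q₂ * cmap q₂)) * hJ
  set D' : MvPolynomial (Fin 2) ℂ := F * qc * σc cc + σc F * σc qc * cc + cmap g * (cc * σc cc)
    with hD'def
  have hD'fix : σc D' = D' := by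
    rw [hD'def]
    simp only [map_add, map_mul, σc_σc, σc_cmap]
    ring
  have hDr := real_of_conj_fixed hD'fix
  set Dr := rePart D' with hDrdef
  have hprod : cmap (t ^ 2) = cmap ((u₁' ^ 2 + u₂' ^ 2) * (q₁ ^ 2 + q₂ ^ 2) + g * Dr) := by
    rw [map_pow]
    calc (cmap t) ^ 2
        = (F * qc + cmap g * cc) * (σc F * σc qc + cmap g * σc cc) := by
          rw [← hq, ← hconj]; ring
      _ = (F * σc F) * (qc * σc qc) + cmap g * D' := by rw [hD'def]; ring
      _ = _ := by
          rw [hFσF, hB, ← hDr]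
          simp only [map_add, map_mul, map_pow]
  have treal : t ^ 2 = (u₁' ^ 2 + u₂' ^ 2) * (q₁ ^ 2 + q₂ ^ 2) + g * Dr :=
    cmap_injective hprod
  have hq1h : q₁.IsHomogeneous m := rePart_homog hqcm
  have hq2h : q₂.IsHomogeneous m := imPart_homog hqcm
  -- homogeneity of Dr
  have hgDr : (g * Dr).IsHomogeneous (2 * d) := by
    have h1 : (t ^ 2).IsHomogeneous (2 * d) := by
      have := ht.pow 2
      rwa [show d * 2 = 2 * d by ring] at this
    have h2 : ((u₁' ^ 2 + u₂' ^ 2) * (q₁ ^ 2 + q₂ ^ 2)).IsHomogeneous (2 * d) := by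
      have hs : (u₁' ^ 2 + u₂' ^ 2).IsHomogeneous (e * 2) := (hu₁'.pow 2).add (hu₂'.pow 2)
      have hqq : (q₁ ^ 2 + q₂ ^ 2).IsHomogeneous (m * 2) := (hq1h.pow 2).add (hq2h.pow 2)
      have := hs.mul hqq
      rwa [show e * 2 + m * 2 = 2 * d by omega] at this
    have := h1.sub h2
    rwa [show t ^ 2 - (u₁' ^ 2 + u₂' ^ 2) * (q₁ ^ 2 + q₂ ^ 2) = g * Dr by
      linear_combination treal] at this
  have hDrh : Dr.IsHomogeneous (d + e) := by
    have := homog_of_mul_homog hg hg0 hgDr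
    rwa [show 2 * d - m = d + e by omega] at this
  -- now decompose Dr = u₁' * a₁ + u₂' * a₂
  rcases eq_or_ne u₁' 0 with h1 | h1
  · have hu2u : IsUnit u₂' := hcop u₂' (by rw [h1]; exact dvd_zero _) dvd_rfl
    obtain ⟨c, hc⟩ := isUnit_iff_exists_inv.mp hu2u
    have hu₂0 : u₂' ≠ 0 := by
      intro h0
      rw [h0, zero_mul] at hc
      exact one_ne_zero hc.symm
    have hch : c.IsHomogeneous 0 := by
      have := homog_of_mul_homog hu₂' hu₂0 (by rw [hc]; exact isHomogeneous_one _ _)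
      simpa using this
    have he0 : e = 0 := by
      have h01 := hu₂'.mul hch
      rw [add_zero] at h01
      have := h01.inj_right (by rw [hc]; exact isHomogeneous_one _ _) (by
        intro h0
        rw [h0] at hc
        exact one_ne_zero hc.symm)
      omega
    refine ⟨0, c * Dr, q₁, q₂, isHomogeneous_zero _ _ _, ?_, hq1h, hq2h, ?_⟩
    · have := hch.mul hDrh
      rwa [zero_add, show d + e = d by omega] at this
    · linear_combination treal - (g * Dr) * hc
  · rcases eq_or_ne u₂' 0 with h2 | h2
    · have hu1u : IsUnit u₁' := hcop u₁' dvd_rfl (by rw [h2]; exact dvd_zero _)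
      obtain ⟨c, hc⟩ := isUnit_iff_exists_inv.mp hu1u
      have hch : c.IsHomogeneous 0 := by
        have := homog_of_mul_homog hu₁' h1 (by rw [hc]; exact isHomogeneous_one _ _)
        simpa using this
      have he0 : e = 0 := by
        have h01 := hu₁'.mul hch
        rw [add_zero] at h01
        have := h01.inj_right (by rw [hc]; exact isHomogeneous_one _ _) (by
          intro h0
          rw [h0] at hc
          exact one_ne_zero hc.symm)
        omega
      refine ⟨c * Dr, 0, q₁, q₂, ?_, isHomogeneous_zero _ _ _, hq1h, hq2h, ?_⟩
      · have := hch.mul hDrh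
        rwa [zero_add, show d + e = d by omega] at this
      · linear_combination treal - (g * Dr) * hc
    · obtain ⟨a₁, a₂, ha₁, ha₂, hDr2⟩ := S1 u₁' u₂' hu₁' hu₂' h1 h2
        (fun z hz1 hz2 => hcop z hz1 hz2) (show e + e ≤ d + e by omega) Dr hDrh
      have hde : d + e - e = d := by omega
      rw [hde] at ha₁ ha₂
      exact ⟨a₁, a₂, q₁, q₂, ha₁, ha₂, hq1h, hq2h, by linear_combination treal + g * hDr2⟩

end AuxC

/-- The case `h = 1`: if `u₁ = g u₁'`, `u₂ = g u₂'` with `u₁', u₂'` coprime and `g` coprime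
with `u₁'² + u₂'²`, then every sum of squares `p` of binary forms of degree `d` lies in
`image(A_u) + cone(σ(ker A_u))`. -/
theorem membership_when_h_eq_one
    (d m : ℕ) (hm : m ≤ d)
    (g u₁' u₂' : MvPolynomial (Fin 2) ℝ)
    (hg : g.IsHomogeneous m)
    (hu₁' : u₁'.IsHomogeneous (d - m)) (hu₂' : u₂'.IsHomogeneous (d - m))
    (hcop : ∀ w : MvPolynomial (Fin 2) ℝ, w ∣ u₁' → w ∣ u₂' → IsUnit w)
    (hcopg : ∀ w : MvPolynomial (Fin 2) ℝ, w ∣ g → w ∣ (u₁' ^ 2 + u₂' ^ 2) → IsUnit w) :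
    ∀ p : MvPolynomial (Fin 2) ℝ, p.IsHomogeneous (2 * d) →
      (∃ (N : ℕ) (t : Fin N → MvPolynomial (Fin 2) ℝ),
        (∀ i, (t i).IsHomogeneous d) ∧ p = ∑ i, (t i) ^ 2) →
      ∃ (v₁ v₂ : MvPolynomial (Fin 2) ℝ) (N : ℕ)
          (w₁ w₂ : Fin N → MvPolynomial (Fin 2) ℝ),
        v₁.IsHomogeneous d ∧ v₂.IsHomogeneous d ∧
        (∀ i, (w₁ i).IsHomogeneous d ∧ (w₂ i).IsHomogeneous d) ∧
        (∀ i, (g * u₁') * w₁ i + (g * u₂') * w₂ i = 0) ∧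
        p = (g * u₁') * v₁ + (g * u₂') * v₂ + ∑ i, ((w₁ i) ^ 2 + (w₂ i) ^ 2) := by
  intro p hp hsos
  obtain ⟨N₀, t, htH, hts⟩ := hsos
  by_cases hg0 : g = 0
  · refine ⟨0, 0, N₀, t, fun _ => 0, isHomogeneous_zero _ _ _, isHomogeneous_zero _ _ _,
      fun i => ⟨htH i, isHomogeneous_zero _ _ _⟩, fun i => by rw [hg0]; ring, ?_⟩
    rw [hg0]
    simpa using hts
  · choose a₁ a₂ q₁ q₂ ha₁ ha₂ hq₁ hq₂ heq using
      fun i => key d m hm g u₁' u₂' hg hg0 hu₁' hu₂' hcop hcopg (t i) (htH i)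
    have hdm : m + (d - m) = d := by omega
    refine ⟨∑ i, a₁ i, ∑ i, a₂ i, N₀ + N₀,
      Fin.addCases (fun i => q₁ i * u₂') (fun i => q₂ i * u₂'),
      Fin.addCases (fun i => -(q₁ i * u₁')) (fun i => -(q₂ i * u₁')),
      IsHomogeneous.sum _ _ _ (fun i _ => ha₁ i),
      IsHomogeneous.sum _ _ _ (fun i _ => ha₂ i), ?_, ?_, ?_⟩
    · intro i
      refine Fin.addCases (fun j => ?_) (fun j => ?_) i
      · simp only [Fin.addCases_left]
        exact ⟨hdm ▸ (hq₁ j).mul hu₂', (hdm ▸ (hq₁ j).mul hu₁').neg⟩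
      · simp only [Fin.addCases_right]
        exact ⟨hdm ▸ (hq₂ j).mul hu₂', (hdm ▸ (hq₂ j).mul hu₁').neg⟩
    · intro i
      refine Fin.addCases (fun j => ?_) (fun j => ?_) i
      · simp only [Fin.addCases_left]; ring
      · simp only [Fin.addCases_right]; ring
    · have hsum : (∑ i : Fin (N₀ + N₀),
          ((Fin.addCases (fun i => q₁ i * u₂') (fun i => q₂ i * u₂') i : MvPolynomial (Fin 2) ℝ) ^ 2 +
           (Fin.addCases (fun i => -(q₁ i * u₁')) (fun i => -(q₂ i * u₁')) i : MvPolynomial (Fin 2) ℝ) ^ 2)) =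
          (∑ j : Fin N₀, ((q₁ j * u₂') ^ 2 + (q₁ j * u₁') ^ 2)) +
          (∑ j : Fin N₀, ((q₂ j * u₂') ^ 2 + (q₂ j * u₁') ^ 2)) := by
        rw [Fin.sum_univ_add]
        congr 1
        · apply Finset.sum_congr rfl
          intro j _
          simp only [Fin.addCases_left]
          ring
        · apply Finset.sum_congr rfl
          intro j _
          simp only [Fin.addCases_right]
          ring
      rw [hts, hsum, Finset.mul_sum, Finset.mul_sum, ← Finset.sum_add_distrib,
        ← Finset.sum_add_distrib, ← Finset.sum_add_distrib]
      apply Finset.sum_congr rfl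
      intro i _
      linear_combination heq i
end

section
/- Let ⟪·,·⟫ be a symmetric bilinear form on MvPolynomial (Fin 2) ℝ that is positive definite on the subspace of binary forms of degree 2d, with ‖q‖² = ⟪q,q⟫. Suppose u₁ = u₁'·g·h and u₂ = u₂'·g·h are binary forms of degree d, where g is a binary form of degree m, h is a binary form of degree k, u₁', u₂' are coprime binary forms of degree d − m − k, g and u₁'² + u₂'² are coprime, and every (α,β) ∈ ℂ², (α,β) ≠ (0,0), at which h vanishes (after mapping coefficients into ℂ) is also a zero of u₁'² + u₂'². Let p be a binary form of degree 2d that is a sum of squares of binary forms of degree d, and suppose: (gradient) ⟪u₁v₁ + u₂v₂, u₁² + u₂² − p⟫ = 0 for all binary forms v₁, v₂ of degree d; (Hessian) ⟪v₁² + v₂², u₁² + u₂² − p⟫ + 2‖u₁v₁ + u₂v₂‖² ≥ 0 for all binary forms v₁, v₂ of degree d; and (membership) there exist binary forms v₁', v₂' of degree d and a finite family of pairs (w₁⁽ⁱ⁾, w₂⁽ⁱ⁾) of binary forms of degree d with u₁w₁⁽ⁱ⁾ + u₂w₂⁽ⁱ⁾ = 0 for each i, such that p = u₁'·g·x₁ᵏ·v₁'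 + u₂'·g·x₁ᵏ·v₂' + ∑ᵢ ((w₁⁽ⁱ⁾)² + (w₂⁽ⁱ⁾)²). Then u₁² + u₂² = p. -/
open MvPolynomial

noncomputable section BFAux
namespace BF



variable {K : Type*} [Field K]

lemma deg2 (d : Fin 2 →₀ ℕ) : d.degree = d 0 + d 1 := by
  rw [Finsupp.degree, ← Fin.sum_univ_two (f := fun i => d i)]
  exact Finset.sum_subset (Finset.subset_univ _)
    (fun i _ hi => Finsupp.notMem_support_iff.mp hi)

lemma homog_sum {F : MvPolynomial (Fin 2) K} {n : ℕ} (hF : F.IsHomogeneous n)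
    {d : Fin 2 →₀ ℕ} (hd : coeff d F ≠ 0) : d 0 + d 1 = n := by
  have h2 := hF hd
  rw [← deg2]
  rw [Finsupp.degree_eq_weight_one]
  exact h2

lemma homog_of (F : MvPolynomial (Fin 2) K) (n : ℕ)
    (h : ∀ d : Fin 2 →₀ ℕ, coeff d F ≠ 0 → d 0 + d 1 = n) : F.IsHomogeneous n := by
  intro d hd
  have hw : (Finsupp.weight (1 : Fin 2 → ℕ)) d = d.degree := by
    rw [Finsupp.degree_eq_weight_one]; rfl
  rw [hw, deg2]
  exact h d hd

lemma monomial_eq_prod (d : Fin 2 →₀ ℕ) (c : K) :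
    (monomial d c : MvPolynomial (Fin 2) K) = C c * X 0 ^ d 0 * X 1 ^ d 1 := by
  rw [monomial_eq, Finsupp.prod_fintype _ _ (fun i => pow_zero _), Fin.prod_univ_two, mul_assoc]

lemma eval_eq2 (α β : K) (F : MvPolynomial (Fin 2) K) :
    eval ![α, β] F = ∑ d ∈ F.support, coeff d F * (α ^ d 0 * β ^ d 1) := by
  conv_lhs => rw [F.as_sum]
  rw [map_sum]
  refine Finset.sum_congr rfl fun d _ => ?_
  rw [eval_monomial, Finsupp.prod_fintype _ _ (fun i => pow_zero _), Fin.prod_univ_two]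
  simp

lemma key_dvd (α β : K) {F : MvPolynomial (Fin 2) K} {n : ℕ} (hF : F.IsHomogeneous n) :
    (C β * X 0 - C α * X 1 : MvPolynomial (Fin 2) K) ∣
      C (β ^ n) * F - C (eval ![α, β] F) * X 1 ^ n := by
  have hFs : C (β ^ n) * F = ∑ d ∈ F.support, C (β ^ n) * monomial d (coeff d F) := by
    conv_lhs => rw [F.as_sum, Finset.mul_sum]
  rw [hFs, eval_eq2, map_sum, Finset.sum_mul, ← Finset.sum_sub_distrib]
  refine Finset.dvd_sum fun d hd => ?_
  have hdeg : d 0 + d 1 = n := homog_sum hF (mem_support_iff.mp hd)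
  have expand : C (β ^ n) * monomial d (coeff d F)
        - C (coeff d F * (α ^ d 0 * β ^ d 1)) * X 1 ^ n
      = (C (coeff d F) * C (β ^ d 1) * X 1 ^ d 1)
        * ((C β * X 0) ^ d 0 - (C α * X 1) ^ d 0) := by
    rw [monomial_eq_prod, ← hdeg]
    simp only [mul_pow, C_pow, C_mul, pow_add]
    ring
  rw [expand]
  exact Dvd.dvd.mul_left (sub_dvd_pow_sub_pow _ _ _) _

lemma key_dvd' (α β : K) {F : MvPolynomial (Fin 2) K} {n : ℕ} (hF : F.IsHomogeneous n) :
    (C β * X 0 - C α * X 1 : MvPolynomial (Fin 2) K) ∣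
      C (α ^ n) * F - C (eval ![α, β] F) * X 0 ^ n := by
  have hFs : C (α ^ n) * F = ∑ d ∈ F.support, C (α ^ n) * monomial d (coeff d F) := by
    conv_lhs => rw [F.as_sum, Finset.mul_sum]
  rw [hFs, eval_eq2, map_sum, Finset.sum_mul, ← Finset.sum_sub_distrib]
  refine Finset.dvd_sum fun d hd => ?_
  have hdeg : d 0 + d 1 = n := homog_sum hF (mem_support_iff.mp hd)
  have expand : C (α ^ n) * monomial d (coeff d F)
        - C (coeff d F * (α ^ d 0 * β ^ d 1)) * X 0 ^ n
      = (C (coeff d F) * C (α ^ d 0) * X 0 ^ d 0)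
        * ((C α * X 1) ^ d 1 - (C β * X 0) ^ d 1) := by
    rw [monomial_eq_prod, ← hdeg]
    simp only [mul_pow, C_pow, C_mul, pow_add]
    ring
  rw [expand]
  have h1 : (C β * X 0 - C α * X 1 : MvPolynomial (Fin 2) K) ∣
      ((C α * X 1) ^ d 1 - (C β * X 0) ^ d 1) := by
    have h2 := sub_dvd_pow_sub_pow (C α * X 1 : MvPolynomial (Fin 2) K) (C β * X 0) (d 1)
    have h3 : (C α * X 1 - C β * X 0 : MvPolynomial (Fin 2) K)
        = -(C β * X 0 - C α * X 1) := by ring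
    rw [h3] at h2
    exact (neg_dvd).mp h2
  exact Dvd.dvd.mul_left h1 _

-- factor theorem for binary forms
lemma lin_dvd {α β : K} (hab : ¬(α = 0 ∧ β = 0)) {F : MvPolynomial (Fin 2) K} {n : ℕ}
    (hF : F.IsHomogeneous n) (hev : eval ![α, β] F = 0) :
    (C β * X 0 - C α * X 1 : MvPolynomial (Fin 2) K) ∣ F := by
  by_cases hβ : β = 0
  · have hα : α ≠ 0 := fun h => hab ⟨h, hβ⟩
    -- use symmetric identity: swap roles of the variables
    have h := key_dvd' α β hF
    rw [hev, map_zero, zero_mul, sub_zero] at h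
    obtain ⟨c, hc⟩ := h
    refine ⟨C ((α ^ n)⁻¹) * c, ?_⟩
    have hαn : (α ^ n) ≠ 0 := pow_ne_zero _ hα
    calc F = C ((α^n)⁻¹) * (C (α^n) * F) := by
            rw [← mul_assoc, ← C_mul, inv_mul_cancel₀ hαn, C_1, one_mul]
      _ = C ((α^n)⁻¹) * ((C β * X 0 - C α * X 1) * c) := by rw [hc]
      _ = (C β * X 0 - C α * X 1) * (C ((α ^ n)⁻¹) * c) := by ring
  · have h := key_dvd α β hF
    rw [hev, map_zero, zero_mul, sub_zero] at h
    have : (C (β ^ n) : MvPolynomial (Fin 2) K) * F = C (β^n) * F := rfl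
    obtain ⟨c, hc⟩ := h
    refine ⟨C ((β ^ n)⁻¹) * c, ?_⟩
    have hβn : (β ^ n) ≠ 0 := pow_ne_zero _ hβ
    calc F = C ((β^n)⁻¹) * (C (β^n) * F) := by
            rw [← mul_assoc, ← C_mul, inv_mul_cancel₀ hβn, C_1, one_mul]
      _ = C ((β^n)⁻¹) * ((C β * X 0 - C α * X 1) * c) := by rw [hc]
      _ = (C β * X 0 - C α * X 1) * (C ((β ^ n)⁻¹) * c) := by ring





variable {K : Type*} [Field K]

/-- quotient of homogeneous by homogeneous is homogeneous -/
lemma homog_quot {b c : MvPolynomial (Fin 2) K} {n mb : ℕ}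
    (hbc : (b * c).IsHomogeneous n) (hb : b.IsHomogeneous mb) (hne : b * c ≠ 0) :
    mb ≤ n ∧ c.IsHomogeneous (n - mb) := by
  have hbne : b ≠ 0 := left_ne_zero_of_mul hne
  have hcne : c ≠ 0 := right_ne_zero_of_mul hne
  have key : ∀ i : ℕ, homogeneousComponent i c ≠ 0 → mb + i = n := by
    intro i hi
    have hile : i ≤ c.totalDegree := by
      by_contra hlt
      exact hi (homogeneousComponent_eq_zero _ c (lt_of_not_ge hlt))
    have hci : (homogeneousComponent i c).IsHomogeneous i :=
      homogeneousComponent_isHomogeneous i c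
    have hbci : b * homogeneousComponent i c ≠ 0 := mul_ne_zero hbne hi
    obtain ⟨d, hd⟩ := ne_zero_iff.mp hbci
    have hdd : d.degree = mb + i := by
      rw [deg2]; exact homog_sum (hb.mul hci) hd
    have hcoeff : coeff d (b * c) = coeff d (b * homogeneousComponent i c) := by
      have hsum : b * c
          = ∑ j ∈ Finset.range (c.totalDegree + 1), b * homogeneousComponent j c := by
        rw [← Finset.mul_sum, sum_homogeneousComponent]
      rw [hsum, coeff_sum]
      refine Finset.sum_eq_single_of_mem i (Finset.mem_range.mpr (by omega)) ?_
      intro j _ hj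
      refine (hb.mul (homogeneousComponent_isHomogeneous j c)).coeff_eq_zero ?_
      rw [hdd]; omega
    have := homog_sum hbc (hcoeff ▸ hd)
    rw [deg2] at hdd; omega
  obtain ⟨d0, hd0⟩ := ne_zero_iff.mp hcne
  have hcomp0 : homogeneousComponent d0.degree c ≠ 0 := by
    rw [ne_zero_iff]
    exact ⟨d0, by rw [coeff_homogeneousComponent]; simp [hd0]⟩
  have hmble : mb ≤ n := by have := key _ hcomp0; omega
  refine ⟨hmble, fun d hd => ?_⟩
  have hcompd : homogeneousComponent d.degree c ≠ 0 := by
    rw [ne_zero_iff]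
    exact ⟨d, by rw [coeff_homogeneousComponent]; simp [hd]⟩
  have := key _ hcompd
  have hw : (Finsupp.weight (1 : Fin 2 → ℕ)) d = d.degree := by
    rw [Finsupp.degree_eq_weight_one]; rfl
  rw [hw]
  omega

lemma eval_scale {F : MvPolynomial (Fin 2) K} {n : ℕ} (hF : F.IsHomogeneous n)
    (lam : K) (x : Fin 2 → K) :
    eval (fun i => lam * x i) F = lam ^ n * eval x F := by
  conv_lhs => rw [F.as_sum]
  conv_rhs => rw [F.as_sum]
  rw [map_sum, map_sum, Finset.mul_sum]
  refine Finset.sum_congr rfl fun d hd => ?_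
  rw [eval_monomial, eval_monomial, Finsupp.prod_fintype _ _ (fun i => pow_zero _),
    Finsupp.prod_fintype _ _ (fun i => pow_zero _), Fin.prod_univ_two, Fin.prod_univ_two]
  have hdeg := homog_sum hF (mem_support_iff.mp hd)
  rw [mul_pow, mul_pow, ← hdeg, pow_add]
  ring

lemma eval_map_ofReal (x : Fin 2 → ℝ) (p : MvPolynomial (Fin 2) ℝ) :
    eval (fun i => (x i : ℂ)) (map (algebraMap ℝ ℂ) p) = (eval x p : ℝ) := by
  rw [← eval₂_eq_eval_map]
  have h := eval₂_comp_left (algebraMap ℝ ℂ) (RingHom.id ℝ) x p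
  rw [RingHom.comp_id] at h
  exact h.symm

lemma eval_conj (x : Fin 2 → ℂ) (p : MvPolynomial (Fin 2) ℝ) :
    eval (fun i => starRingEnd ℂ (x i)) (map (algebraMap ℝ ℂ) p)
      = starRingEnd ℂ (eval x (map (algebraMap ℝ ℂ) p)) := by
  rw [← eval₂_eq_eval_map, ← eval₂_eq_eval_map,
    eval₂_comp_left (starRingEnd ℂ) (algebraMap ℝ ℂ) x p]
  congr 1
  exact RingHom.ext fun r => (Complex.conj_ofReal r).symm





variable {K : Type*} [Field K]

-- (copies from c1/c2; merged later)
/-- the exponent finsupp (i, j) -/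
def e2 (i j : ℕ) : Fin 2 →₀ ℕ := Finsupp.single 0 i + Finsupp.single 1 j

@[simp] lemma e2_apply0 (i j : ℕ) : e2 i j 0 = i := by simp [e2]
@[simp] lemma e2_apply1 (i j : ℕ) : e2 i j 1 = j := by simp [e2, Finsupp.single_apply]

lemma eq_e2 (d : Fin 2 →₀ ℕ) : d = e2 (d 0) (d 1) := by
  ext i
  fin_cases i
  · simp
  · simp

lemma e2_degree (i j : ℕ) : (e2 i j).degree = i + j := by rw [deg2]; simp

/-- dehomogenization: substitute X0 ↦ X, X1 ↦ 1 -/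
def toP : MvPolynomial (Fin 2) K →+* Polynomial K :=
  (aeval ![Polynomial.X, 1] : MvPolynomial (Fin 2) K →ₐ[K] Polynomial K).toRingHom

lemma toP_monomial (d : Fin 2 →₀ ℕ) (c : K) :
    toP (monomial d c) = Polynomial.C c * Polynomial.X ^ d 0 := by
  show aeval _ _ = _
  rw [aeval_monomial, Finsupp.prod_fintype _ _ (fun i => pow_zero _), Fin.prod_univ_two]
  simp [Algebra.smul_def]

lemma toP_as_sum (F : MvPolynomial (Fin 2) K) :
    toP F = ∑ d ∈ F.support, Polynomial.C (coeff d F) * Polynomial.X ^ d 0 := by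
  conv_lhs => rw [F.as_sum]
  rw [map_sum]
  exact Finset.sum_congr rfl fun d _ => toP_monomial d _

lemma coeff_toP {F : MvPolynomial (Fin 2) K} {n : ℕ} (hF : F.IsHomogeneous n)
    (i j : ℕ) (hij : i + j = n) : (toP F).coeff i = coeff (e2 i j) F := by
  rw [toP_as_sum, Polynomial.finset_sum_coeff]
  simp only [Polynomial.coeff_C_mul, Polynomial.coeff_X_pow]
  by_cases hmem : e2 i j ∈ F.support
  · rw [Finset.sum_eq_single_of_mem (e2 i j) hmem]
    · simp
    · intro d hd hne
      rw [if_neg, mul_zero]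
      intro hdi
      apply hne
      have hds := homog_sum hF (mem_support_iff.mp hd)
      rw [eq_e2 d, hdi]
      congr 1
      omega
  · rw [notMem_support_iff.mp hmem]
    refine Finset.sum_eq_zero fun d hd => ?_
    rw [if_neg, mul_zero]
    intro hdi
    apply hmem
    have hds := homog_sum hF (mem_support_iff.mp hd)
    have : d = e2 i j := by rw [eq_e2 d, hdi]; congr 1; omega
    rwa [← this]

lemma coeff_toP_zero {F : MvPolynomial (Fin 2) K} {n : ℕ} (hF : F.IsHomogeneous n)
    {i : ℕ} (hi : n < i) : (toP F).coeff i = 0 := by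
  rw [toP_as_sum, Polynomial.finset_sum_coeff]
  simp only [Polynomial.coeff_C_mul, Polynomial.coeff_X_pow]
  refine Finset.sum_eq_zero fun d hd => ?_
  rw [if_neg, mul_zero]
  have hds := homog_sum hF (mem_support_iff.mp hd)
  omega

lemma toP_eq_zero {F : MvPolynomial (Fin 2) K} {n : ℕ} (hF : F.IsHomogeneous n)
    (h : toP F = 0) : F = 0 := by
  ext d
  rw [coeff_zero]
  by_contra hne
  have hds := homog_sum hF hne
  have := coeff_toP hF (d 0) (d 1) hds
  rw [h, Polynomial.coeff_zero] at this
  rw [eq_e2 d] at hne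
  exact hne this.symm

lemma toP_inj {F G : MvPolynomial (Fin 2) K} {n : ℕ} (hF : F.IsHomogeneous n)
    (hG : G.IsHomogeneous n) (h : toP F = toP G) : F = G := by
  have := toP_eq_zero (hF.sub hG) (by rw [map_sub, h, sub_self])
  linear_combination (norm := ring_nf) this

lemma natDegree_toP_le {F : MvPolynomial (Fin 2) K} {n : ℕ} (hF : F.IsHomogeneous n) :
    (toP F).natDegree ≤ n := by
  refine Polynomial.natDegree_le_iff_coeff_eq_zero.mpr fun i hi => coeff_toP_zero hF hi

lemma eval_toP (t : K) (F : MvPolynomial (Fin 2) K) :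
    (toP F).eval t = eval ![t, 1] F := by
  rw [toP_as_sum]
  conv_rhs => rw [F.as_sum]
  rw [map_sum, Polynomial.eval_finset_sum]
  refine Finset.sum_congr rfl fun d _ => ?_
  rw [eval_monomial, Finsupp.prod_fintype _ _ (fun i => pow_zero _), Fin.prod_univ_two]
  simp

/-- homogenization -/
def ofP (n : ℕ) (P : Polynomial K) : MvPolynomial (Fin 2) K :=
  ∑ i ∈ Finset.range (n + 1), monomial (e2 i (n - i)) (P.coeff i)

lemma ofP_homog (n : ℕ) (P : Polynomial K) : (ofP n P).IsHomogeneous n := by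
  refine IsHomogeneous.sum _ _ _ fun i hi => isHomogeneous_monomial _ ?_
  rw [e2_degree]
  have := Finset.mem_range.mp hi
  omega

lemma toP_ofP {n : ℕ} {P : Polynomial K} (hP : P.natDegree ≤ n) : toP (ofP n P) = P := by
  rw [ofP, map_sum]
  ext i
  rw [Polynomial.finset_sum_coeff]
  simp only [toP_monomial, e2_apply0, Polynomial.coeff_C_mul, Polynomial.coeff_X_pow]
  by_cases hi : i ≤ n
  · rw [Finset.sum_eq_single_of_mem i (Finset.mem_range.mpr (by omega))]
    · simp
    · intro j _ hj
      rw [if_neg (fun hh => hj hh.symm), mul_zero]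
  · rw [Polynomial.coeff_eq_zero_of_natDegree_lt (by omega)]
    refine Finset.sum_eq_zero fun j hj => ?_
    have := Finset.mem_range.mp hj
    rw [if_neg (by omega), mul_zero]

lemma ofP_toP {F : MvPolynomial (Fin 2) K} {n : ℕ} (hF : F.IsHomogeneous n) :
    ofP n (toP F) = F :=
  toP_inj (ofP_homog n _) hF (toP_ofP (natDegree_toP_le hF))

lemma ofP_mul {r s : ℕ} {P Q : Polynomial K} (hP : P.natDegree ≤ r) (hQ : Q.natDegree ≤ s) :
    ofP (r + s) (P * Q) = ofP r P * ofP s Q := by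
  refine toP_inj (ofP_homog _ _) ((ofP_homog r P).mul (ofP_homog s Q)) ?_
  rw [map_mul, toP_ofP hP, toP_ofP hQ, toP_ofP (le_trans (Polynomial.natDegree_mul_le) (by omega))]

lemma ofP_one_one : ofP 1 (1 : Polynomial K) = X 1 := by
  rw [ofP]
  rw [Finset.sum_range_succ, Finset.sum_range_one]
  simp only [Polynomial.coeff_one]
  norm_num
  rw [show e2 0 1 = Finsupp.single 1 1 by rw [e2, Finsupp.single_zero, zero_add], X]

lemma not_isUnit_X1 : ¬ IsUnit (X 1 : MvPolynomial (Fin 2) K) := by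
  intro hu
  have := hu.map (eval (fun _ => (0 : K)))
  simp only [eval_X] at this
  exact not_isUnit_zero this

lemma not_isUnit_X0 : ¬ IsUnit (X 0 : MvPolynomial (Fin 2) K) := by
  intro hu
  have := hu.map (eval (fun _ => (0 : K)))
  simp only [eval_X] at this
  exact not_isUnit_zero this




variable {K : Type*} [Field K]

lemma homog_zero_eq_C {a : MvPolynomial (Fin 2) K} (ha : a.IsHomogeneous 0) :
    a = C (coeff 0 a) := by
  ext d
  rcases eq_or_ne d 0 with rfl | hd
  · simp
  · rw [coeff_C, if_neg (Ne.symm hd)]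
    by_contra hne
    have hds := homog_sum ha hne
    apply hd
    have h0 : d 0 = 0 := by omega
    have h1 : d 1 = 0 := by omega
    rw [eq_e2 d, h0, h1, e2]
    simp

lemma poly_solve {n j : ℕ} (hnj : n ≤ j) {A B T : Polynomial K} (hAB : IsCoprime A B)
    (hA : A.natDegree ≤ n) (hBn : B.natDegree = n) (hBne : B ≠ 0) (hT : T.natDegree ≤ n + j) :
    ∃ V W : Polynomial K, V.natDegree ≤ j ∧ W.natDegree ≤ j ∧ A * V + B * W = T := by
  obtain ⟨S, R, hSR⟩ := hAB
  set lc := B.leadingCoeff with hlc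
  have hlcne : lc ≠ 0 := Polynomial.leadingCoeff_ne_zero.mpr hBne
  set Bm := B * Polynomial.C lc⁻¹ with hBm
  have hBmm : Bm.Monic := Polynomial.monic_mul_leadingCoeff_inv hBne
  have hBmdeg : Bm.natDegree = n := by
    rw [hBm, Polynomial.natDegree_mul_C (inv_ne_zero hlcne), hBn]
  set V := (S * T) %ₘ Bm with hV
  set q := (S * T) /ₘ Bm with hq
  have hdiv : V + Bm * q = S * T := Polynomial.modByMonic_add_div (S * T) Bm
  have hVdeg : V.natDegree ≤ j := by
    rcases eq_or_ne V 0 with h0 | h0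
    · rw [h0]; simp
    rcases eq_or_ne Bm 1 with hB1 | hB1
    · rw [hV, hB1, Polynomial.modByMonic_one] at h0; exact absurd rfl h0
    · have h5 : V.natDegree < n := by
        rw [hV, ← hBmdeg]
        exact Polynomial.natDegree_modByMonic_lt _ hBmm hB1
      omega
  set W := T * R + Polynomial.C lc⁻¹ * (A * q) with hW
  have h1 : Bm * q = S * T - V := by rw [← hdiv]; ring
  have hBW : B * W = T - A * V := by
    calc B * W = T * R * B + A * (Bm * q) := by rw [hW, hBm]; ring
      _ = T * R * B + A * (S * T) - A * V := by rw [h1]; ring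
      _ = T * (S * A + R * B) - A * V := by ring
      _ = T - A * V := by rw [hSR]; ring
  have hWdeg : W.natDegree ≤ j := by
    rcases eq_or_ne W 0 with h0 | h0
    · rw [h0]; simp
    have hBWdeg : (B * W).natDegree = n + W.natDegree := by
      rw [Polynomial.natDegree_mul hBne h0, hBn]
    have hsub : (T - A * V).natDegree ≤ n + j := by
      refine le_trans (Polynomial.natDegree_sub_le _ _) ?_
      refine max_le hT (le_trans Polynomial.natDegree_mul_le (by omega))
    rw [hBW] at hBWdeg
    omega
  exact ⟨V, W, hVdeg, hWdeg, by rw [hBW]; ring⟩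

lemma sylvester {n j : ℕ} (hnj : n ≤ j) {a b : MvPolynomial (Fin 2) K}
    (ha : a.IsHomogeneous n) (hb : b.IsHomogeneous n)
    (hcop : ∀ w : MvPolynomial (Fin 2) K, w ∣ a → w ∣ b → IsUnit w)
    {t : MvPolynomial (Fin 2) K} (ht : t.IsHomogeneous (n + j)) :
    ∃ v w : MvPolynomial (Fin 2) K,
      v.IsHomogeneous j ∧ w.IsHomogeneous j ∧ a * v + b * w = t := by
  classical
  -- first: the unit case
  have unitcase : ∀ a b : MvPolynomial (Fin 2) K, a.IsHomogeneous n → b.IsHomogeneous n →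
      IsUnit a → ∃ v w : MvPolynomial (Fin 2) K,
        v.IsHomogeneous j ∧ w.IsHomogeneous j ∧ a * v + b * w = t := by
    intro a b ha hb hu
    obtain ⟨c, hc⟩ := hu.exists_right_inv
    have hane : a ≠ 0 := left_ne_zero_of_mul (hc ▸ one_ne_zero)
    have hn0 : n = 0 := by
      have h1 : (a * c).IsHomogeneous 0 := hc ▸ isHomogeneous_one _ _
      have := homog_quot (n := 0) (mb := n) h1 ha (hc ▸ one_ne_zero)
      omega
    -- a = C r with r ≠ 0
    subst hn0
    have haC : a = C (coeff 0 a) := homog_zero_eq_C ha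
    have hr : coeff 0 a ≠ 0 := fun h => hane (by rw [haC, h, C_0])
    refine ⟨C (coeff 0 a)⁻¹ * t, 0, ?_, isHomogeneous_zero _ _ _, ?_⟩
    · have : t.IsHomogeneous j := by simpa using ht
      simpa using this.C_mul _
    · rw [mul_zero, add_zero]
      nth_rewrite 1 [haC]
      rw [← mul_assoc, ← C_mul, mul_inv_cancel₀ hr, C_1, one_mul]
  rcases eq_or_ne a 0 with ha0 | hane
  · -- b is a unit
    have hub : IsUnit b := hcop b (ha0 ▸ dvd_zero b) dvd_rfl
    obtain ⟨v, w, hv, hw, hvw⟩ := unitcase b a hb ha hub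
    exact ⟨w, v, hw, hv, by rw [← hvw]; ring⟩
  rcases eq_or_ne b 0 with hb0 | hbne
  · exact unitcase a b ha hb (hcop a dvd_rfl (hb0 ▸ dvd_zero a))
  -- main case
  set A := toP a with hA
  set B := toP b with hB
  have hAne : A ≠ 0 := fun h => hane (toP_eq_zero ha h)
  have hBne : B ≠ 0 := fun h => hbne (toP_eq_zero hb h)
  have hAdeg : A.natDegree ≤ n := natDegree_toP_le ha
  have hBdeg : B.natDegree ≤ n := natDegree_toP_le hb
  -- coprimality of A and B
  have hABcop : IsCoprime A B := by
    rw [← EuclideanDomain.gcd_isUnit_iff]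
    by_contra hnu
    set G := EuclideanDomain.gcd A B with hG
    have hGne : G ≠ 0 := fun h => hAne (EuclideanDomain.gcd_eq_zero_iff.mp h).1
    have hGdeg : 1 ≤ G.natDegree := by
      by_contra hd
      push_neg at hd
      obtain ⟨c, hc⟩ := Polynomial.natDegree_eq_zero.mp (Nat.lt_one_iff.mp hd)
      exact hnu (hc ▸ (Polynomial.isUnit_C.mpr (isUnit_iff_ne_zero.mpr (fun h0 => hGne (by rw [← hc, h0, map_zero])))))
    set r := G.natDegree with hr
    -- lift the common factor
    have lift : ∀ F : MvPolynomial (Fin 2) K, F.IsHomogeneous n → F ≠ 0 → G ∣ toP F →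
        ofP r G ∣ F := by
      intro F hF hFne hdvd
      obtain ⟨D, hD⟩ := hdvd
      have hrle : r ≤ n := le_trans (Polynomial.natDegree_le_of_dvd ⟨D, hD⟩
        (fun h => hFne (toP_eq_zero hF h))) (natDegree_toP_le hF)
      have hDdeg : D.natDegree ≤ n - r := by
        have hFne' : toP F ≠ 0 := fun h => hFne (toP_eq_zero hF h)
        have hDne : D ≠ 0 := fun h => hFne' (by rw [hD, h, mul_zero])
        have := Polynomial.natDegree_mul hGne hDne
        rw [← hD] at this
        have := natDegree_toP_le hF
        omega
      refine ⟨ofP (n - r) D, ?_⟩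
      rw [← ofP_mul (le_of_eq hr.symm) hDdeg, ← hD]
      rw [show r + (n - r) = n by omega]
      exact (ofP_toP hF).symm
    have h1 := lift a ha hane (EuclideanDomain.gcd_dvd_left A B)
    have h2 := lift b hb hbne (EuclideanDomain.gcd_dvd_right A B)
    have hu := hcop _ h1 h2
    have := hu.map (toP (K := K))
    rw [toP_ofP (le_of_eq rfl)] at this
    exact hnu this
  have hT : (toP t).natDegree ≤ n + j := natDegree_toP_le ht
  -- not both top coefficients vanish
  have htop : B.coeff n ≠ 0 ∨ A.coeff n ≠ 0 := by
    by_contra hc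
    push_neg at hc
    obtain ⟨hcB, hcA⟩ := hc
    -- then X 1 divides both a and b
    have hn1 : 1 ≤ n := by
      by_contra hn
      push_neg at hn
      interval_cases n
      · apply hAne
        have : A = Polynomial.C (A.coeff 0) := Polynomial.eq_C_of_natDegree_le_zero hAdeg
        rw [this, hcA, map_zero]
    have hX1 : ∀ F : MvPolynomial (Fin 2) K, F.IsHomogeneous n → F ≠ 0 →
        (toP F).coeff n = 0 → X 1 ∣ F := by
      intro F hF hFne hcF
      have hFdeg : (toP F).natDegree ≤ n - 1 := by
        have h2 : (toP F).natDegree ≤ n := natDegree_toP_le hF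
        have h3 : (toP F).natDegree ≠ n := by
          intro h4
          have := Polynomial.leadingCoeff_ne_zero.mpr
            (fun h5 => hFne (toP_eq_zero hF h5))
          rw [Polynomial.leadingCoeff, h4] at this
          exact this hcF
        omega
      refine ⟨ofP (n - 1) (toP F), ?_⟩
      rw [← ofP_one_one, ← ofP_mul (by simp) hFdeg, one_mul,
        show 1 + (n - 1) = n by omega]
      exact (ofP_toP hF).symm
    exact not_isUnit_X1 (hcop _ (hX1 a ha hane hcA) (hX1 b hb hbne hcB))
  rcases htop with htopB | htopA
  · have hBn : B.natDegree = n :=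
      le_antisymm hBdeg (Polynomial.le_natDegree_of_ne_zero htopB)
    obtain ⟨V, W, hV, hW, hVW⟩ := poly_solve hnj hABcop hAdeg hBn hBne hT
    refine ⟨ofP j V, ofP j W, ofP_homog j V, ofP_homog j W, ?_⟩
    refine toP_inj ((ha.mul (ofP_homog j V)).add (hb.mul (ofP_homog j W))) ht ?_
    rw [map_add, map_mul, map_mul, toP_ofP hV, toP_ofP hW]
    exact hVW
  · have hAn : A.natDegree = n :=
      le_antisymm hAdeg (Polynomial.le_natDegree_of_ne_zero htopA)
    obtain ⟨V, W, hV, hW, hVW⟩ := poly_solve hnj hABcop.symm hBdeg hAn hAne hT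
    refine ⟨ofP j W, ofP j V, ofP_homog j W, ofP_homog j V, ?_⟩
    refine toP_inj ((ha.mul (ofP_homog j W)).add (hb.mul (ofP_homog j V))) ht ?_
    rw [map_add, map_mul, map_mul, toP_ofP hV, toP_ofP hW]
    rw [← hVW]
    ring


lemma vec_coe (x : Fin 2 → ℝ) : (fun i => ((x i : ℝ) : ℂ)) = ![(x 0 : ℂ), (x 1 : ℂ)] := by
  funext i; fin_cases i <;> simp

lemma eval_one_zero {K : Type*} [Field K] {F : MvPolynomial (Fin 2) K} {n : ℕ}
    (hF : F.IsHomogeneous n) : eval ![1, 0] F = coeff (e2 n 0) F := by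
  rw [eval_eq2]
  by_cases hmem : e2 n 0 ∈ F.support
  · rw [Finset.sum_eq_single_of_mem _ hmem]
    · rw [e2_apply0, e2_apply1]; simp
    · intro d hd hne
      have hds := homog_sum hF (mem_support_iff.mp hd)
      rcases Nat.eq_zero_or_pos (d 1) with h1 | h1
      · exact absurd (by rw [eq_e2 d, h1]; congr 1; omega) hne
      · rw [zero_pow (by omega : d 1 ≠ 0)]; ring
  · rw [notMem_support_iff.mp hmem]
    refine Finset.sum_eq_zero fun d hd => ?_
    have hds := homog_sum hF (mem_support_iff.mp hd)
    rcases Nat.eq_zero_or_pos (d 1) with h1 | h1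
    · exact absurd (by rw [eq_e2 d, h1, show d 0 = n by omega] at hd; exact hd) hmem
    · rw [zero_pow (by omega : d 1 ≠ 0)]; ring

/-- every nonconstant complex binary form has a nontrivial projective zero -/
lemma exists_zero {F : MvPolynomial (Fin 2) ℂ} {n : ℕ} (hF : F.IsHomogeneous n)
    (hn : 1 ≤ n) :
    ∃ α β : ℂ, ¬(α = 0 ∧ β = 0) ∧ eval ![α, β] F = 0 := by
  rcases eq_or_ne (eval ![1, 0] F) 0 with h10 | h10
  · exact ⟨1, 0, fun hh => one_ne_zero hh.1, h10⟩
  · have hco : (toP F).coeff n ≠ 0 := by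
      rw [coeff_toP hF n 0 (add_zero n)]
      rw [eval_one_zero hF] at h10
      exact h10
    have hdeg : 0 < (toP F).degree := by
      have h1 : (n : WithBot ℕ) ≤ (toP F).degree := Polynomial.le_degree_of_ne_zero hco
      refine lt_of_lt_of_le ?_ h1
      exact_mod_cast (by omega : 0 < n)
    obtain ⟨z, hz⟩ := Complex.exists_root hdeg
    refine ⟨z, 1, fun hh => one_ne_zero hh.2, ?_⟩
    rw [← eval_toP]
    exact hz

/-- real divisibility from complex divisibility -/
lemma real_dvd {a b : MvPolynomial (Fin 2) ℝ}
    (h : map (algebraMap ℝ ℂ) a ∣ map (algebraMap ℝ ℂ) b) : a ∣ b := by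
  classical
  obtain ⟨c', hc⟩ := h
  set cre : MvPolynomial (Fin 2) ℝ := ∑ e ∈ c'.support, monomial e ((coeff e c').re) with hcre
  set cim : MvPolynomial (Fin 2) ℝ := ∑ e ∈ c'.support, monomial e ((coeff e c').im) with hcim
  have hre : ∀ d, coeff d cre = (coeff d c').re := by
    intro d
    rw [hcre, coeff_sum]
    simp only [coeff_monomial]
    by_cases hd : d ∈ c'.support
    · rw [Finset.sum_eq_single_of_mem d hd (fun e _ hne => if_neg hne)]
      rw [if_pos rfl]
    · rw [Finset.sum_eq_zero (fun e he => if_neg (fun hh => hd (by rw [← hh]; exact he))),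
        notMem_support_iff.mp hd]
      simp
  have him : ∀ d, coeff d cim = (coeff d c').im := by
    intro d
    rw [hcim, coeff_sum]
    simp only [coeff_monomial]
    by_cases hd : d ∈ c'.support
    · rw [Finset.sum_eq_single_of_mem d hd (fun e _ hne => if_neg hne)]
      rw [if_pos rfl]
    · rw [Finset.sum_eq_zero (fun e he => if_neg (fun hh => hd (by rw [← hh]; exact he))),
        notMem_support_iff.mp hd]
      simp
  have hc' : c' = map (algebraMap ℝ ℂ) cre + C Complex.I * map (algebraMap ℝ ℂ) cim := by
    ext d
    rw [coeff_add, coeff_C_mul, coeff_map, coeff_map, hre, him]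
    simp only [Complex.coe_algebraMap]
    rw [mul_comm]
    exact (Complex.re_add_im _).symm
  refine ⟨cre, ?_⟩
  have key : map (algebraMap ℝ ℂ) b = map (algebraMap ℝ ℂ) (a * cre)
      + C Complex.I * map (algebraMap ℝ ℂ) (a * cim) := by
    rw [hc, hc', map_mul, map_mul]
    ring
  ext d
  have hco := congrArg (coeff d) key
  rw [coeff_add, coeff_C_mul, coeff_map, coeff_map, coeff_map] at hco
  simp only [Complex.coe_algebraMap] at hco
  have him0 : coeff d (a * cim) = 0 := by
    have h9 := congrArg Complex.im hco
    simpa using h9.symm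
  have := congrArg Complex.re hco
  rw [him0] at this
  simpa using this

/-- two conjugate linear factors divide -/
lemma pair_dvd {α β : ℂ} (hind : β * (starRingEnd ℂ) α ≠ α * (starRingEnd ℂ) β)
    {F : MvPolynomial (Fin 2) ℂ} {n : ℕ} (hF : F.IsHomogeneous n)
    (h1 : eval ![α, β] F = 0)
    (h2 : eval ![(starRingEnd ℂ) α, (starRingEnd ℂ) β] F = 0) :
    (C β * X 0 - C α * X 1) * (C ((starRingEnd ℂ) β) * X 0 - C ((starRingEnd ℂ) α) * X 1) ∣ F := by
  have hab : ¬(α = 0 ∧ β = 0) := by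
    rintro ⟨rfl, rfl⟩
    simp at hind
  rcases eq_or_ne F 0 with rfl | hFne
  · exact dvd_zero _
  obtain ⟨D, hD⟩ := lin_dvd hab hF h1
  have hq := homog_quot (hD ▸ hF) (((isHomogeneous_C_mul_X β 0).sub
    (isHomogeneous_C_mul_X α 1))) (hD ▸ hFne)
  have hDev : eval ![(starRingEnd ℂ) α, (starRingEnd ℂ) β] D = 0 := by
    have := h2
    rw [hD, map_mul] at this
    have hlev : eval ![(starRingEnd ℂ) α, (starRingEnd ℂ) β]
        (C β * X 0 - C α * X 1) = β * (starRingEnd ℂ) α - α * (starRingEnd ℂ) β := by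
      simp
    rw [hlev] at this
    exact (mul_eq_zero.mp this).resolve_left (sub_ne_zero_of_ne hind)
  have hab' : ¬((starRingEnd ℂ) α = 0 ∧ (starRingEnd ℂ) β = 0) := by
    rintro ⟨ha, hb⟩
    exact hab ⟨by simpa using congrArg (starRingEnd ℂ) ha,
      by simpa using congrArg (starRingEnd ℂ) hb⟩
  obtain ⟨D2, hD2⟩ := lin_dvd hab' hq.2 hDev
  exact ⟨D2, by rw [hD, hD2]; ring⟩

/-- extract a real homogeneous factor of c dividing e, from the complex root condition -/
lemma extract_factor {c e : MvPolynomial (Fin 2) ℝ} {n ne : ℕ}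
    (hc : c.IsHomogeneous n) (hn : 1 ≤ n) (hcne : c ≠ 0)
    (he : e.IsHomogeneous ne)
    (hz : ∀ α β : ℂ, ¬(α = 0 ∧ β = 0) → eval ![α, β] (map (algebraMap ℝ ℂ) c) = 0 →
          eval ![α, β] (map (algebraMap ℝ ℂ) e) = 0) :
    ∃ (γ : MvPolynomial (Fin 2) ℝ) (r : ℕ), 1 ≤ r ∧ γ.IsHomogeneous r ∧ γ ∣ c ∧ γ ∣ e := by
  set C' := map (algebraMap ℝ ℂ) c with hC'
  set E' := map (algebraMap ℝ ℂ) e with hE'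
  have hC'h : C'.IsHomogeneous n := hc.map _
  have hE'h : E'.IsHomogeneous ne := he.map _
  obtain ⟨α, β, hab, hCz⟩ := exists_zero hC'h hn
  have hEz : eval ![α, β] E' = 0 := hz α β hab hCz
  -- conjugate zeros
  have hCzc : eval ![(starRingEnd ℂ) α, (starRingEnd ℂ) β] C' = 0 := by
    have h := eval_conj ![α, β] c
    have hv : (fun i => (starRingEnd ℂ) (![α, β] i))
        = ![(starRingEnd ℂ) α, (starRingEnd ℂ) β] := by
      funext i; fin_cases i <;> simp
    rw [hv] at h
    rw [h, ← hC', hCz, map_zero]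
  have hEzc : eval ![(starRingEnd ℂ) α, (starRingEnd ℂ) β] E' = 0 := by
    have h := eval_conj ![α, β] e
    have hv : (fun i => (starRingEnd ℂ) (![α, β] i))
        = ![(starRingEnd ℂ) α, (starRingEnd ℂ) β] := by
      funext i; fin_cases i <;> simp
    rw [hv] at h
    rw [h, ← hE', hEz, map_zero]
  by_cases hdep : β * (starRingEnd ℂ) α = α * (starRingEnd ℂ) β
  · -- dependent case: a real projective zero
    obtain ⟨aR, bR, lam, hlam, habR, hαβ⟩ :
        ∃ (aR bR : ℝ) (lam : ℂ), lam ≠ 0 ∧ ¬(aR = 0 ∧ bR = 0)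
          ∧ (α = lam * aR ∧ β = lam * bR) := by
      rcases eq_or_ne β 0 with rfl | hβ
      · have hα : α ≠ 0 := fun hh => hab ⟨hh, rfl⟩
        exact ⟨1, 0, α, hα, fun hh => one_ne_zero hh.1, by simp⟩
      · have hβc : (starRingEnd ℂ) β ≠ 0 :=
          fun h => hβ (by simpa using congrArg (starRingEnd ℂ) h)
        have ht : (starRingEnd ℂ) (α / β) = α / β := by
          rw [map_div₀, div_eq_div_iff hβc hβ]
          linear_combination hdep
        obtain ⟨r, hr⟩ := Complex.conj_eq_iff_real.mp ht
        refine ⟨r, 1, β, hβ, fun hh => one_ne_zero hh.2, ?_, by simp⟩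
        have har : α = β * (α / β) := by field_simp
        rw [har, hr]
    -- scale down the zeros
    have hzero : ∀ (F : MvPolynomial (Fin 2) ℝ) (nf : ℕ), F.IsHomogeneous nf →
        eval ![α, β] (map (algebraMap ℝ ℂ) F) = 0 → eval ![aR, bR] F = 0 := by
      intro F nf hFh hFz
      have hscale := eval_scale (hFh.map (algebraMap ℝ ℂ)) lam ![(aR : ℂ), (bR : ℂ)]
      have hv : (fun i => lam * (![(aR : ℂ), (bR : ℂ)]) i) = ![α, β] := by
        funext i; fin_cases i <;> simp [hαβ.1, hαβ.2]
      rw [hv, hFz] at hscale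
      have h0 : eval ![(aR : ℂ), (bR : ℂ)] (map (algebraMap ℝ ℂ) F) = 0 := by
        rcases mul_eq_zero.mp hscale.symm with h | h
        · exact absurd h (pow_ne_zero _ hlam)
        · exact h
      have := eval_map_ofReal ![aR, bR] F
      rw [vec_coe] at this
      simp only [Matrix.cons_val_zero, Matrix.cons_val_one, Matrix.head_cons] at this h0
      rw [this] at h0
      exact_mod_cast h0
    refine ⟨C bR * X 0 - C aR * X 1, 1,
      le_refl 1, (isHomogeneous_C_mul_X bR 0).sub (isHomogeneous_C_mul_X aR 1),
      lin_dvd habR hc (hzero c n hc hCz), lin_dvd habR he (hzero e ne he hEz)⟩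
  · -- independent case: quadratic real factor
    have hpc := pair_dvd hdep hC'h hCz hCzc
    have hpe := pair_dvd hdep hE'h hEz hEzc
    set s2 : ℝ := 2 * (α * (starRingEnd ℂ) β).re with hs2
    set gr : MvPolynomial (Fin 2) ℝ :=
      C (Complex.normSq β) * (X 0 * X 0)
        - C s2 * (X 0 * X 1)
        + C (Complex.normSq α) * (X 1 * X 1) with hgr
    have hmap : map (algebraMap ℝ ℂ) gr
        = (C β * X 0 - C α * X 1)
          * (C ((starRingEnd ℂ) β) * X 0 - C ((starRingEnd ℂ) α) * X 1) := by
      rw [hgr]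
      simp only [map_add, map_sub, map_mul, map_C, map_X]
      simp only [Complex.coe_algebraMap]
      have h1 : ((Complex.normSq β : ℝ) : ℂ) = β * (starRingEnd ℂ) β := by
        rw [Complex.mul_conj]
      have h2 : ((Complex.normSq α : ℝ) : ℂ) = α * (starRingEnd ℂ) α := by
        rw [Complex.mul_conj]
      have h3 : ((s2 : ℝ) : ℂ)
          = α * (starRingEnd ℂ) β + (starRingEnd ℂ) α * β := by
        rw [hs2]
        rw [← Complex.add_conj]
        simp [map_mul]
      rw [h1, h2, h3]
      simp only [C_add, C_mul]
      ring
    have hgrh : gr.IsHomogeneous 2 := by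
      have h00 : (X 0 * X 0 : MvPolynomial (Fin 2) ℝ).IsHomogeneous 2 :=
        (isHomogeneous_X _ 0).mul (isHomogeneous_X _ 0)
      have h01 : (X 0 * X 1 : MvPolynomial (Fin 2) ℝ).IsHomogeneous 2 :=
        (isHomogeneous_X _ 0).mul (isHomogeneous_X _ 1)
      have h11 : (X 1 * X 1 : MvPolynomial (Fin 2) ℝ).IsHomogeneous 2 :=
        (isHomogeneous_X _ 1).mul (isHomogeneous_X _ 1)
      rw [hgr]
      exact ((h00.C_mul _).sub (h01.C_mul _)).add (h11.C_mul _)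
    refine ⟨gr, 2, by omega, hgrh, real_dvd ?_, real_dvd ?_⟩
    · rw [hmap]; exact hpc
    · rw [hmap]; exact hpe


lemma homog_cast {F : MvPolynomial (Fin 2) ℝ} {n1 n2 : ℕ} (h : F.IsHomogeneous n1)
    (hEq : n1 = n2) : F.IsHomogeneous n2 := hEq ▸ h

lemma e2_add (i j i' j' : ℕ) : e2 i j + e2 i' j' = e2 (i + i') (j + j') := by
  rw [e2, e2, e2, Finsupp.single_add, Finsupp.single_add]
  abel

end BF
end BFAux

open BF in
set_option maxHeartbeats 1600000 in
/-- General case (condition C3): with the decomposition `u₁ = u₁' g h`, `u₂ = u₂' g h`, if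
`u` is a second-order critical point of `f_p` and
`p ∈ image(A_{u x₁ᵏ / h}) + cone(σ(ker A_u))`, then `u₁² + u₂² = p`. -/
theorem general_case_second_order_sufficient
    (d m k : ℕ)
    (B : MvPolynomial (Fin 2) ℝ →ₗ[ℝ] MvPolynomial (Fin 2) ℝ →ₗ[ℝ] ℝ)
    (hsymm : ∀ a b : MvPolynomial (Fin 2) ℝ, B a b = B b a)
    (hpos : ∀ q : MvPolynomial (Fin 2) ℝ, q.IsHomogeneous (2 * d) → q ≠ 0 → 0 < B q q)
    (g h u₁' u₂' : MvPolynomial (Fin 2) ℝ)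
    (hg : g.IsHomogeneous m) (hh : h.IsHomogeneous k)
    (hu₁' : u₁'.IsHomogeneous (d - m - k)) (hu₂' : u₂'.IsHomogeneous (d - m - k))
    (u₁ u₂ : MvPolynomial (Fin 2) ℝ)
    (hu₁def : u₁ = u₁' * g * h) (hu₂def : u₂ = u₂' * g * h)
    (hu₁ : u₁.IsHomogeneous d) (hu₂ : u₂.IsHomogeneous d)
    (hcop : ∀ w : MvPolynomial (Fin 2) ℝ, w ∣ u₁' → w ∣ u₂' → IsUnit w)
    (hcopg : ∀ w : MvPolynomial (Fin 2) ℝ, w ∣ g → w ∣ (u₁' ^ 2 + u₂' ^ 2) → IsUnit w)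
    (hroots : ∀ α β : ℂ, (α, β) ≠ (0, 0) →
      eval ![α, β] (map (algebraMap ℝ ℂ) h) = 0 →
      eval ![α, β] (map (algebraMap ℝ ℂ) (u₁' ^ 2 + u₂' ^ 2)) = 0)
    (p : MvPolynomial (Fin 2) ℝ)
    (hp : p.IsHomogeneous (2 * d))
    (hpsos : ∃ (N : ℕ) (t : Fin N → MvPolynomial (Fin 2) ℝ),
      (∀ i, (t i).IsHomogeneous d) ∧ p = ∑ i, (t i) ^ 2)
    (hgrad : ∀ v₁ v₂ : MvPolynomial (Fin 2) ℝ, v₁.IsHomogeneous d → v₂.IsHomogeneous d →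
      B (u₁ * v₁ + u₂ * v₂) (u₁ ^ 2 + u₂ ^ 2 - p) = 0)
    (hhess : ∀ v₁ v₂ : MvPolynomial (Fin 2) ℝ, v₁.IsHomogeneous d → v₂.IsHomogeneous d →
      0 ≤ B (v₁ ^ 2 + v₂ ^ 2) (u₁ ^ 2 + u₂ ^ 2 - p)
        + 2 * B (u₁ * v₁ + u₂ * v₂) (u₁ * v₁ + u₂ * v₂))
    (hmem : ∃ (v₁' v₂' : MvPolynomial (Fin 2) ℝ) (N : ℕ)
        (w₁ w₂ : Fin N → MvPolynomial (Fin 2) ℝ),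
      v₁'.IsHomogeneous d ∧ v₂'.IsHomogeneous d ∧
      (∀ i, (w₁ i).IsHomogeneous d ∧ (w₂ i).IsHomogeneous d) ∧
      (∀ i, u₁ * w₁ i + u₂ * w₂ i = 0) ∧
      p = u₁' * g * (X 0 : MvPolynomial (Fin 2) ℝ) ^ k * v₁'
        + u₂' * g * (X 0 : MvPolynomial (Fin 2) ℝ) ^ k * v₂'
        + ∑ i, ((w₁ i) ^ 2 + (w₂ i) ^ 2)) :
    u₁ ^ 2 + u₂ ^ 2 = p := by
  classical
  set q : MvPolynomial (Fin 2) ℝ := u₁ ^ 2 + u₂ ^ 2 - p with hqdef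
  -- u₁', u₂' not both zero
  have hnb : ¬(u₁' = 0 ∧ u₂' = 0) := by
    rintro ⟨h1, h2⟩
    exact not_isUnit_zero (hcop 0 (zero_dvd_iff.mpr h1) (zero_dvd_iff.mpr h2))
  have he2h : (u₁' ^ 2 + u₂' ^ 2).IsHomogeneous ((d - m - k) + (d - m - k)) := by
    rw [pow_two, pow_two]
    exact (hu₁'.mul hu₁').add (hu₂'.mul hu₂')
  have hene : (u₁' ^ 2 + u₂' ^ 2) ≠ 0 := by
    intro h0
    apply hnb
    have hev : ∀ x : Fin 2 → ℝ, eval x u₁' = 0 ∧ eval x u₂' = 0 := by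
      intro x
      have h1 := congrArg (eval x) h0
      rw [map_add, map_pow, map_pow, map_zero] at h1
      constructor <;> nlinarith [sq_nonneg (eval x u₁'), sq_nonneg (eval x u₂'),
        (rfl : eval x u₁' ^ 2 + eval x u₂' ^ 2 = eval x u₁' ^ 2 + eval x u₂' ^ 2)]
    constructor
    · exact MvPolynomial.funext fun x => by rw [(hev x).1, map_zero]
    · exact MvPolynomial.funext fun x => by rw [(hev x).2, map_zero]
  -- h ≠ 0
  have hhne : h ≠ 0 := by
    intro h0
    apply hene
    have hXne : (X 0 : MvPolynomial (Fin 2) ℝ) ≠ 0 := X_ne_zero 0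
    have hmul : (u₁' ^ 2 + u₂' ^ 2) * X 0 = 0 := by
      apply MvPolynomial.funext
      intro x
      rw [map_zero, map_mul, eval_X]
      rcases eq_or_ne (x 0) 0 with hx0 | hx0
      · rw [hx0, mul_zero]
      · have hz := hroots (x 0 : ℂ) (x 1 : ℂ)
          (by simp [Prod.ext_iff, hx0])
          (by rw [h0, map_zero, map_zero])
        have heq := eval_map_ofReal x (u₁' ^ 2 + u₂' ^ 2)
        rw [vec_coe] at heq
        have hx : eval x (u₁' ^ 2 + u₂' ^ 2) = 0 := by
          have : ((eval x (u₁' ^ 2 + u₂' ^ 2) : ℝ) : ℂ) = 0 := by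
            rw [← heq]
            convert hz using 2
          exact_mod_cast this
        rw [hx, zero_mul]
    exact (mul_eq_zero.mp hmul).resolve_right hXne
  -- MAIN : orthogonality to g * (anything of degree k + ((d-m-k) + d))
  have MAIN : ∀ t : MvPolynomial (Fin 2) ℝ,
      t.IsHomogeneous (k + ((d - m - k) + d)) → B (g * t) q = 0 := by
    rcases eq_or_ne g 0 with rfl | hgne
    · intro t _; rw [zero_mul, map_zero, LinearMap.zero_apply]
    · -- nondegenerate case
      have hmkd : m + k ≤ d := by
        by_contra hlt
        push_neg at hlt
        have hne12 : u₁' ≠ 0 ∨ u₂' ≠ 0 := by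
          by_contra hcon
          push_neg at hcon
          exact hnb ⟨hcon.1, hcon.2⟩
        have key : ∀ u u' : MvPolynomial (Fin 2) ℝ, u = u' * g * h → u.IsHomogeneous d →
            u'.IsHomogeneous (d - m - k) → u' ≠ 0 → False := by
          intro u u' hudef hu hu' hu'ne
          have hune : u ≠ 0 := by
            rw [hudef]
            exact mul_ne_zero (mul_ne_zero hu'ne hgne) hhne
          have h1 : u.IsHomogeneous ((d - m - k) + m + k) := by
            rw [hudef]
            exact (hu'.mul hg).mul hh
          have := IsHomogeneous.inj_right h1 hu hune
          omega
        rcases hne12 with h1 | h2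
        · exact key u₁ u₁' hu₁def hu₁ hu₁' h1
        · exact key u₂ u₂' hu₂def hu₂ hu₂' h2
      have hd_eq : d = (d - m - k) + m + k := by omega
      -- the perturbation lemma
      have PERT : ∀ a : MvPolynomial (Fin 2) ℝ, a.IsHomogeneous (m + k) →
          B ((u₁' ^ 2 + u₂' ^ 2) * (a * a)) q = 0 →
          ∀ s : MvPolynomial (Fin 2) ℝ, s.IsHomogeneous ((d - m - k) + d) →
          B (a * s) q = 0 := by
        intro a hah ha0 s hsh
        obtain ⟨w₁, w₂, hw₁, hw₂, hs⟩ := sylvester (by omega : d - m - k ≤ d) hu₂' hu₁'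
          (fun w hw2 hw1 => hcop w hw1 hw2) hsh
        set W₂ : MvPolynomial (Fin 2) ℝ := -w₂ with hW₂
        have hW₂h : W₂.IsHomogeneous d := hw₂.neg
        set v₁ : MvPolynomial (Fin 2) ℝ := u₂' * a with hv₁
        set v₂ : MvPolynomial (Fin 2) ℝ := -(u₁' * a) with hv₂
        have hv₁h : v₁.IsHomogeneous d := homog_cast (hu₂'.mul hah) (by omega)
        have hv₂h : v₂.IsHomogeneous d := (homog_cast (hu₁'.mul hah) (by omega)).neg
        have hker : u₁ * v₁ + u₂ * v₂ = 0 := by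
          rw [hv₁, hv₂, hu₁def, hu₂def]; ring
        set c1 : ℝ := B (a * s) q with hc1
        set c2 : ℝ := B (w₁ ^ 2 + W₂ ^ 2) q
          + 2 * B (u₁ * w₁ + u₂ * W₂) (u₁ * w₁ + u₂ * W₂) with hc2
        have hc2nn : 0 ≤ c2 := hhess w₁ W₂ hw₁ hW₂h
        have hineq : ∀ ε : ℝ, 0 ≤ ε * (2 * c1) + ε ^ 2 * c2 := by
          intro ε
          have hmain := hhess (v₁ + C ε * w₁) (v₂ + C ε * W₂)
            (hv₁h.add (homog_cast ((isHomogeneous_C _ ε).mul hw₁) (by omega)))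
            (hv₂h.add (homog_cast ((isHomogeneous_C _ ε).mul hW₂h) (by omega)))
          -- expand the polynomial arguments
          have hexp1 : (v₁ + C ε * w₁) ^ 2 + (v₂ + C ε * W₂) ^ 2
              = ((u₁' ^ 2 + u₂' ^ 2) * (a * a)) + (C ε * (a * s) + C ε * (a * s))
                + C ε * (C ε * (w₁ ^ 2 + W₂ ^ 2)) := by
            rw [hv₁, hv₂, hW₂, ← hs]
            ring
          have hexp2 : u₁ * (v₁ + C ε * w₁) + u₂ * (v₂ + C ε * W₂)
              = ε • (u₁ * w₁ + u₂ * W₂) := by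
            rw [smul_eq_C_mul]
            have hh2 : u₁ * (v₁ + C ε * w₁) + u₂ * (v₂ + C ε * W₂)
                = (u₁ * v₁ + u₂ * v₂) + C ε * (u₁ * w₁ + u₂ * W₂) := by ring
            rw [hh2, hker, zero_add]
          rw [hexp1, hexp2] at hmain
          simp only [← smul_eq_C_mul, map_add, map_smul, LinearMap.add_apply,
            LinearMap.smul_apply, smul_eq_mul, ha0] at hmain
          rw [hc1, hc2]
          simp only [map_add, LinearMap.add_apply]
          nlinarith [hmain]
        -- conclude c1 = 0
        by_contra hc1ne
        have h3 : 0 < c2 + 1 := by linarith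
        have h4 := hineq (-(c1 / (c2 + 1)))
        have h5 : 0 < c1 ^ 2 := by positivity
        have e1 : (-(c1 / (c2 + 1))) * (2 * c1) + (-(c1 / (c2 + 1))) ^ 2 * c2
            = (-(2 * c1 ^ 2) * (c2 + 1) + c1 ^ 2 * c2) / (c2 + 1) ^ 2 := by
          field_simp
        rw [e1, le_div_iff₀ (by positivity)] at h4
        rw [zero_mul] at h4
        nlinarith [mul_pos h5 (show (0:ℝ) < c2 + 2 by linarith)]
      have CLAIM : ∀ nn : ℕ, ∀ δ c : MvPolynomial (Fin 2) ℝ, nn ≤ k → δ * c = h →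
          δ.IsHomogeneous (k - nn) → c.IsHomogeneous nn →
          ∀ t : MvPolynomial (Fin 2) ℝ, t.IsHomogeneous (nn + ((d - m - k) + d)) →
          B (g * (δ * t)) q = 0 := by
        intro nn
        induction nn using Nat.strong_induction_on with
        | _ nn IH =>
          intro δ c hnn hδc hδh hch t hth
          rcases Nat.eq_zero_or_pos nn with h0 | hposn
          · subst h0
            have hcC : c = C (coeff 0 c) := homog_zero_eq_C hch
            have hrne : coeff 0 c ≠ 0 := by
              intro h0'
              apply hhne
              rw [← hδc, hcC, h0', C_0, mul_zero]
            obtain ⟨v₁, v₂, hv₁, hv₂, hvs⟩ := sylvester (by omega : d - m - k ≤ d) hu₁' hu₂'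
              hcop (t := t) (by simpa using hth)
            have hδh2 : δ * C (coeff 0 c) = h := by rw [← hcC]; exact hδc
            have hCC : (C ((coeff 0 c)⁻¹) * C (coeff 0 c) : MvPolynomial (Fin 2) ℝ) = 1 := by
              rw [← C_mul, inv_mul_cancel₀ hrne, C_1]
            have expand : u₁ * v₁ + u₂ * v₂ = C (coeff 0 c) * (g * (δ * t)) := by
              rw [hu₁def, hu₂def, ← hδh2, ← hvs]
              ring
            have harg : g * (δ * t) = (coeff 0 c)⁻¹ • (u₁ * v₁ + u₂ * v₂) := by
              rw [smul_eq_C_mul, expand,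
                show C ((coeff 0 c)⁻¹) * (C (coeff 0 c) * (g * (δ * t)))
                  = (C ((coeff 0 c)⁻¹) * C (coeff 0 c)) * (g * (δ * t)) from by ring,
                hCC, one_mul]
            rw [harg, map_smul, LinearMap.smul_apply, hgrad v₁ v₂ hv₁ hv₂, smul_zero]
          · -- inductive step
            have hcne2 : c ≠ 0 := fun h0' => hhne (by rw [← hδc, h0', mul_zero])
            have hczero : ∀ α β : ℂ, ¬(α = 0 ∧ β = 0) →
                eval ![α, β] (map (algebraMap ℝ ℂ) c) = 0 →
                eval ![α, β] (map (algebraMap ℝ ℂ) (u₁' ^ 2 + u₂' ^ 2)) = 0 := by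
              intro α β hne hcz
              refine hroots α β
                (fun hp' => hne ⟨congrArg Prod.fst hp', congrArg Prod.snd hp'⟩) ?_
              rw [← hδc, map_mul, map_mul, hcz, mul_zero]
            obtain ⟨γ, r, hr1, hγh, hγc, hγe⟩ := extract_factor hch hposn hcne2 he2h hczero
            obtain ⟨c₂, hc₂⟩ := hγc
            obtain ⟨f, hf⟩ := hγe
            have hqc := homog_quot (hc₂ ▸ hch) hγh (hc₂ ▸ hcne2)
            have hqe := homog_quot (hf ▸ he2h) hγh (hf ▸ hene)
            have hIH := IH (nn - r) (by omega) (δ * γ) c₂ (by omega)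
              (by rw [mul_assoc, ← hc₂]; exact hδc)
              (homog_cast (hδh.mul hγh) (by omega)) hqc.2
            have hPapp : ∀ c' : MvPolynomial (Fin 2) ℝ, c'.IsHomogeneous nn →
                ∀ s : MvPolynomial (Fin 2) ℝ, s.IsHomogeneous ((d - m - k) + d) →
                B ((g * (δ * c')) * s) q = 0 := by
              intro c' hc'h s hsh
              refine PERT (g * (δ * c'))
                (homog_cast (hg.mul (hδh.mul hc'h)) (by omega)) ?_ s hsh
              have harg : (u₁' ^ 2 + u₂' ^ 2) * ((g * (δ * c')) * (g * (δ * c')))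
                  = g * ((δ * γ) * (f * (g * (δ * (c' * c'))))) := by
                rw [hf]; ring
              rw [harg]
              refine hIH _ (homog_cast
                (hqe.2.mul (hg.mul (hδh.mul (hc'h.mul hc'h)))) (by omega))
            have hsum : g * (δ * t) = ∑ dd ∈ t.support, g * (δ * monomial dd (coeff dd t)) := by
              conv_lhs => rw [t.as_sum]
              rw [Finset.mul_sum, Finset.mul_sum]
            rw [hsum, map_sum, LinearMap.sum_apply]
            refine Finset.sum_eq_zero fun dd hdd => ?_
            have hdeg : dd 0 + dd 1 = nn + ((d - m - k) + d) :=
              homog_sum hth (mem_support_iff.mp hdd)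
            set i := min (dd 0) nn with hi
            have hile : i ≤ dd 0 ∧ i ≤ nn := ⟨min_le_left _ _, min_le_right _ _⟩
            have hkey : e2 i (nn - i) + e2 (dd 0 - i) (dd 1 - (nn - i)) = dd := by
              rw [e2_add, show i + (dd 0 - i) = dd 0 by omega,
                show (nn - i) + (dd 1 - (nn - i)) = dd 1 by omega]
              exact (eq_e2 dd).symm
            have hmono : monomial dd (coeff dd t)
                = monomial (e2 i (nn - i)) (coeff dd t)
                  * monomial (e2 (dd 0 - i) (dd 1 - (nn - i))) 1 := by
              rw [monomial_mul, hkey, mul_one]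
            have hc'h : (monomial (e2 i (nn - i)) (coeff dd t)).IsHomogeneous nn :=
              isHomogeneous_monomial _ (by rw [e2_degree]; omega)
            have hsh : (monomial (e2 (dd 0 - i) (dd 1 - (nn - i)))
                (1:ℝ)).IsHomogeneous ((d - m - k) + d) :=
              isHomogeneous_monomial _ (by rw [e2_degree]; omega)
            have harg2 : g * (δ * (monomial dd (coeff dd t)))
                = (g * (δ * monomial (e2 i (nn - i)) (coeff dd t)))
                  * monomial (e2 (dd 0 - i) (dd 1 - (nn - i))) 1 := by
              rw [hmono]; ring
            rw [harg2]
            exact hPapp _ hc'h _ hsh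
      intro t ht
      have hone : (1 : MvPolynomial (Fin 2) ℝ).IsHomogeneous (k - k) := by
        have := isHomogeneous_one (Fin 2) ℝ
        exact homog_cast this (by omega)
      have hres := CLAIM k 1 h (le_refl k) (one_mul h) hone hh t ht
      rw [one_mul] at hres
      exact hres

  obtain ⟨v₁', v₂', N, w₁, w₂, hv₁'h, hv₂'h, hwh, hkerw, hpeq⟩ := hmem
  set t₀ : MvPolynomial (Fin 2) ℝ := X 0 ^ k * (u₁' * v₁' + u₂' * v₂') with ht₀def
  have ht₀h : t₀.IsHomogeneous (k + ((d - m - k) + d)) := by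
    rw [ht₀def]
    exact (isHomogeneous_X_pow 0 k).mul ((hu₁'.mul hv₁'h).add (hu₂'.mul hv₂'h))
  have hgt : B (g * t₀) q = 0 := MAIN t₀ ht₀h
  have hfirst : u₁' * g * X 0 ^ k * v₁' + u₂' * g * X 0 ^ k * v₂' = g * t₀ := by
    rw [ht₀def]; ring
  have hp' : p = g * t₀ + ∑ i, (w₁ i ^ 2 + w₂ i ^ 2) := by rw [hpeq, hfirst]
  have hterm : ∀ i, 0 ≤ B (w₁ i ^ 2 + w₂ i ^ 2) q := by
    intro i
    have hmain := hhess (w₁ i) (w₂ i) (hwh i).1 (hwh i).2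
    rw [hkerw i] at hmain
    simpa using hmain
  have hBp : 0 ≤ B p q := by
    rw [hp', map_add, LinearMap.add_apply, hgt, zero_add, map_sum, LinearMap.sum_apply]
    exact Finset.sum_nonneg fun i _ => hterm i
  have hBu : B (u₁ ^ 2 + u₂ ^ 2) q = 0 := by
    have hgr := hgrad u₁ u₂ hu₁ hu₂
    rw [show u₁ * u₁ + u₂ * u₂ = u₁ ^ 2 + u₂ ^ 2 by ring] at hgr
    exact hgr
  have hqle : B q q ≤ 0 := by
    have h1 : B q q = B (u₁ ^ 2 + u₂ ^ 2) q - B p q := by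
      nth_rewrite 1 [hqdef]
      simp only [map_sub, LinearMap.sub_apply]
    rw [h1, hBu, zero_sub]
    linarith
  have hq2d : q.IsHomogeneous (2 * d) := by
    rw [hqdef]
    refine IsHomogeneous.sub ?_ hp
    exact (homog_cast (hu₁.pow 2) (by omega)).add (homog_cast (hu₂.pow 2) (by omega))
  rcases eq_or_ne q 0 with h0 | hne
  · exact sub_eq_zero.mp (hqdef ▸ h0)
  · exact absurd (hpos q hq2d hne) (not_lt.mpr hqle)
end

section
/- Let ⟪·,·⟫ be a symmetric bilinear form on MvPolynomial (Fin 2) ℝ that is positive definite on the subspace of binary forms of degree 2d, with ‖q‖² = ⟪q,q⟫. Let u₁, u₂ be binary forms of degree d and let p be any binary form of degree 2d. Suppose: (gradient) ⟪u₁v₁ + u₂v₂, u₁² + u₂² − p⟫ = 0 for all binary forms v₁, v₂ of degree d; and (Hessian) ⟪v₁² + v₂², u₁² + u₂² − p⟫ + 2‖u₁v₁ + u₂v₂‖² ≥ 0 for all binary forms v₁, v₂ of degree d. Then for every binary form q of degree 2d that is a sum of squares of binary forms of degree d, ‖u₁² + u₂² − p‖² ≤ ‖q − p‖²; that is, u₁²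 + u₂² is the projection of p onto the cone of sums of squares with respect to the norm induced by ⟪·,·⟫. -/
open MvPolynomial Polynomial

namespace SOCP

/-- Dehomogenization of a binary form: substitute `x := X`, `y := 1`. -/
noncomputable def toUni : MvPolynomial (Fin 2) ℝ →ₐ[ℝ] Polynomial ℝ :=
  MvPolynomial.aeval ![Polynomial.X, 1]

/-- Homogenization of a univariate polynomial to degree `n`. -/
noncomputable def homog (P : Polynomial ℝ) (n : ℕ) : MvPolynomial (Fin 2) ℝ :=
  ∑ i ∈ Finset.range (n + 1),
    MvPolynomial.monomial
      (Finsupp.single (0 : Fin 2) i + Finsupp.single (1 : Fin 2) (n - i)) (P.coeff i)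

lemma fin2_degree (m : Fin 2 →₀ ℕ) : m.degree = m 0 + m 1 := by
  classical
  rw [Finsupp.degree_apply]
  rw [show m.support = Finset.univ.filter (fun i => m i ≠ 0) from ?_]
  · rw [Finset.sum_filter_of_ne (fun x _ h => by simpa using h)]
    simp [Fin.sum_univ_two]
  · ext i; simp [Finsupp.mem_support_iff]

lemma fin2_decomp (m : Fin 2 →₀ ℕ) :
    m = Finsupp.single 0 (m 0) + Finsupp.single 1 (m 1) := by
  ext i
  match i with
  | 0 => simp
  | 1 => simp [Finsupp.single_apply]

lemma homog_isHomogeneous (P : Polynomial ℝ) (n : ℕ) : (homog P n).IsHomogeneous n := by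
  apply MvPolynomial.IsHomogeneous.sum
  intro i hi
  apply MvPolynomial.isHomogeneous_monomial
  rw [fin2_degree]
  simp only [Finsupp.add_apply, Finsupp.single_apply]
  simp only [Finset.mem_range] at hi
  norm_num
  omega

lemma homog_add (P Q : Polynomial ℝ) (n : ℕ) :
    homog (P + Q) n = homog P n + homog Q n := by
  rw [homog, homog, homog, ← Finset.sum_add_distrib]
  refine Finset.sum_congr rfl fun i _ => ?_
  rw [Polynomial.coeff_add, map_add]

lemma homog_smul (a : ℝ) (P : Polynomial ℝ) (n : ℕ) :
    homog (Polynomial.C a * P) n = a • homog P n := by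
  rw [homog, homog, Finset.smul_sum]
  refine Finset.sum_congr rfl fun i _ => ?_
  rw [Polynomial.coeff_C_mul, ← map_smul, smul_eq_mul]

lemma homog_zero (n : ℕ) : homog 0 n = 0 := by
  simp [homog]

lemma toUni_monomial (m : Fin 2 →₀ ℕ) (c : ℝ) :
    toUni (MvPolynomial.monomial m c) = Polynomial.C c * Polynomial.X ^ (m 0) := by
  rw [toUni, MvPolynomial.aeval_monomial]
  rw [Finsupp.prod_fintype _ _ (fun i => pow_zero _)]
  rw [Fin.prod_univ_two]
  simp [Algebra.algebraMap_self]

/-- the diagonal exponent -/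
noncomputable def mj (n j : ℕ) : Fin 2 →₀ ℕ := Finsupp.single 0 j + Finsupp.single 1 (n - j)

lemma mj_apply0 (n j : ℕ) : mj n j 0 = j := by simp [mj]
lemma mj_apply1 (n j : ℕ) : mj n j 1 = n - j := by simp [mj, Finsupp.single_apply]

lemma ishomog_support_sum {f : MvPolynomial (Fin 2) ℝ} {n : ℕ} (hf : f.IsHomogeneous n)
    {m : Fin 2 →₀ ℕ} (hm : MvPolynomial.coeff m f ≠ 0) : m 0 + m 1 = n := by
  have h := hf hm
  change (Finsupp.weight (fun _ => 1)) m = n at h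
  rw [← Finsupp.degree_eq_weight_one] at h
  rw [← fin2_degree m]; exact h

lemma mj_eq {n : ℕ} {m : Fin 2 →₀ ℕ} {j : ℕ} (h0 : m 0 = j) (hsum : m 0 + m 1 = n) :
    m = mj n j := by
  rw [mj, ← h0]
  have : m 1 = n - m 0 := by omega
  rw [← this]
  exact fin2_decomp m

lemma toUni_coeff {f : MvPolynomial (Fin 2) ℝ} {n : ℕ} (hf : f.IsHomogeneous n) (j : ℕ) :
    (toUni f).coeff j = MvPolynomial.coeff (mj n j) f := by
  classical
  conv_lhs => rw [f.as_sum]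
  rw [map_sum, Polynomial.finset_sum_coeff]
  have hterm : ∀ m : Fin 2 →₀ ℕ,
      (toUni (MvPolynomial.monomial m (MvPolynomial.coeff m f))).coeff j
      = if m 0 = j then MvPolynomial.coeff m f else 0 := by
    intro m
    rw [toUni_monomial]
    simp [Polynomial.coeff_C_mul, Polynomial.coeff_X_pow]
    by_cases h : m 0 = j <;> simp [h]
    intro h'; exact absurd h'.symm h
  rw [Finset.sum_congr rfl (fun m _ => hterm m)]
  rcases eq_or_ne (MvPolynomial.coeff (mj n j) f) 0 with h0 | h0
  · rw [h0]
    apply Finset.sum_eq_zero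
    intro m hm
    rw [MvPolynomial.mem_support_iff] at hm
    by_cases h : m 0 = j
    · exfalso
      have := mj_eq h (ishomog_support_sum hf hm)
      rw [this] at hm; exact hm h0
    · simp [h]
  · rw [Finset.sum_eq_single (mj n j)]
    · simp [mj_apply0]
    · intro m hm hne
      rw [MvPolynomial.mem_support_iff] at hm
      by_cases h : m 0 = j
      · exfalso
        exact hne (mj_eq h (ishomog_support_sum hf hm))
      · simp [h]
    · intro h
      rw [MvPolynomial.notMem_support_iff] at h
      exact absurd h h0

end SOCP

namespace SOCP
open MvPolynomial Polynomial

lemma toUni_inj {f g : MvPolynomial (Fin 2) ℝ} {n : ℕ} (hf : f.IsHomogeneous n)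
    (hg : g.IsHomogeneous n) (h : toUni f = toUni g) : f = g := by
  ext m
  by_cases hd : m 0 + m 1 = n
  · have hm : m = mj n (m 0) := mj_eq rfl hd
    rw [hm, ← toUni_coeff hf, ← toUni_coeff hg, h]
  · rcases eq_or_ne (MvPolynomial.coeff m f) 0 with h0 | h0
    · rw [h0]
      by_contra hne
      exact hd (ishomog_support_sum hg (Ne.symm hne))
    · exact absurd (ishomog_support_sum hf h0) hd

lemma toUni_homog {P : Polynomial ℝ} {n : ℕ} (hP : P.natDegree ≤ n) :
    toUni (homog P n) = P := by
  rw [homog, map_sum]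
  have : ∀ i ∈ Finset.range (n+1),
      toUni (MvPolynomial.monomial
        (Finsupp.single (0 : Fin 2) i + Finsupp.single (1 : Fin 2) (n - i)) (P.coeff i))
      = Polynomial.C (P.coeff i) * Polynomial.X ^ i := by
    intro i _
    rw [toUni_monomial]
    congr 1
    simp
  rw [Finset.sum_congr rfl this]
  conv_rhs => rw [P.as_sum_range' (n+1) (Nat.lt_succ_of_le hP)]
  refine Finset.sum_congr rfl fun i _ => ?_
  rw [Polynomial.C_mul_X_pow_eq_monomial]

lemma natDegree_toUni {f : MvPolynomial (Fin 2) ℝ} {n : ℕ} (hf : f.IsHomogeneous n) :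
    (toUni f).natDegree ≤ n := by
  rw [Polynomial.natDegree_le_iff_coeff_eq_zero]
  intro j hj
  rw [toUni_coeff hf]
  by_contra h0
  have := ishomog_support_sum hf h0
  rw [mj_apply0, mj_apply1] at this
  omega

lemma homog_toUni {f : MvPolynomial (Fin 2) ℝ} {n : ℕ} (hf : f.IsHomogeneous n) :
    homog (toUni f) n = f :=
  toUni_inj (homog_isHomogeneous _ _) hf (toUni_homog (natDegree_toUni hf))

/-- Two standard generators -/
lemma toUni_X0 : toUni (MvPolynomial.X 0) = Polynomial.X := by
  simp [toUni]

lemma toUni_X1 : toUni (MvPolynomial.X 1) = 1 := by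
  simp [toUni]

end SOCP

namespace SOCP
open Polynomial

lemma BL (p₁ p₂ F : Polynomial ℝ) (N : ℕ) (hp₁ : p₁ ≠ 0) (hp₂ : p₂ ≠ 0)
    (hd₁ : p₁.natDegree ≤ N) (hd₂ : p₂.natDegree ≤ N) (hdF : F.natDegree ≤ N)
    (hN : p₁.natDegree + p₂.natDegree ≤ N + (EuclideanDomain.gcd p₁ p₂).natDegree + 1)
    (hdvd : EuclideanDomain.gcd p₁ p₂ ∣ F) :
    ∃ A B₀ : Polynomial ℝ, F = A * p₁ + B₀ * p₂ ∧ A.natDegree + p₁.natDegree ≤ N ∧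
      B₀.natDegree + p₂.natDegree ≤ N ∧
      (B₀ = 0 ∨ B₀.natDegree + (EuclideanDomain.gcd p₁ p₂).natDegree + 1 ≤ p₁.natDegree) := by
  classical
  set δ := EuclideanDomain.gcd p₁ p₂ with hδ
  have hδ0 : δ ≠ 0 := by
    rw [hδ, Ne, EuclideanDomain.gcd_eq_zero_iff]
    rintro ⟨h, -⟩; exact hp₁ h
  rcases eq_or_ne F 0 with rfl | hF0
  · exact ⟨0, 0, by ring, by simpa using hd₁, by simpa using hd₂, Or.inl rfl⟩
  obtain ⟨G, hG⟩ : ∃ G, F = δ * G := by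
    obtain ⟨G, hG⟩ := hdvd; exact ⟨G, hG⟩
  have hG0 : G ≠ 0 := by rintro rfl; rw [mul_zero] at hG; exact hF0 hG
  have hdegG : G.natDegree + δ.natDegree ≤ N := by
    have := Polynomial.natDegree_mul hδ0 hG0
    rw [← hG] at this; omega
  have hdvd1 : δ ∣ p₁ := EuclideanDomain.gcd_dvd_left _ _
  have hdvd2 : δ ∣ p₂ := EuclideanDomain.gcd_dvd_right _ _
  obtain ⟨π₁, hπ₁⟩ := hdvd1
  obtain ⟨π₂, hπ₂⟩ := hdvd2
  have hπ₁0 : π₁ ≠ 0 := by rintro rfl; rw [mul_zero] at hπ₁; exact hp₁ hπ₁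
  have hπ₂0 : π₂ ≠ 0 := by rintro rfl; rw [mul_zero] at hπ₂; exact hp₂ hπ₂
  have hdegπ₁ : δ.natDegree + π₁.natDegree = p₁.natDegree := by
    rw [hπ₁, Polynomial.natDegree_mul hδ0 hπ₁0]
  have hbez : δ = p₁ * EuclideanDomain.gcdA p₁ p₂ + p₂ * EuclideanDomain.gcdB p₁ p₂ :=
    EuclideanDomain.gcd_eq_gcd_ab p₁ p₂
  set a := EuclideanDomain.gcdA p₁ p₂
  set b := EuclideanDomain.gcdB p₁ p₂
  have hswap : p₂ * π₁ = p₁ * π₂ := by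
    have : δ * (p₂ * π₁) = δ * (p₁ * π₂) := by
      rw [show δ * (p₂ * π₁) = p₂ * (δ * π₁) by ring, ← hπ₁,
        show δ * (p₁ * π₂) = p₁ * (δ * π₂) by ring, ← hπ₂]
      ring
    exact mul_left_cancel₀ hδ0 this
  rcases Nat.eq_zero_or_pos π₁.natDegree with hc | hc
  · -- π₁ is a nonzero constant
    obtain ⟨c, hcc⟩ := Polynomial.natDegree_eq_zero.mp hc
    have hcne : c ≠ 0 := by rintro rfl; rw [← hcc] at hπ₁0; simp at hπ₁0
    refine ⟨Polynomial.C c⁻¹ * G, 0, ?_, ?_, by simpa using hd₂, Or.inl rfl⟩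
    · rw [hG, hπ₁, ← hcc]
      rw [show Polynomial.C c⁻¹ * G * (δ * Polynomial.C c) =
        (Polynomial.C c⁻¹ * Polynomial.C c) * (δ * G) by ring, ← Polynomial.C_mul,
        inv_mul_cancel₀ hcne]
      simp
    · have h1 : (Polynomial.C c⁻¹ * G).natDegree ≤ G.natDegree := by
        refine le_trans (Polynomial.natDegree_mul_le) ?_
        simp
      have : p₁.natDegree = δ.natDegree := by omega
      omega
  · -- π₁ has positive degree
    have hlc : π₁.leadingCoeff ≠ 0 := Polynomial.leadingCoeff_ne_zero.mpr hπ₁0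
    set π₁m := π₁ * Polynomial.C π₁.leadingCoeff⁻¹ with hπ₁m
    have hmon : π₁m.Monic := Polynomial.monic_mul_leadingCoeff_inv hπ₁0
    set B₀ := (b * G) %ₘ π₁m with hB₀
    set q := (b * G) /ₘ π₁m with hq
    have hmoddiv : B₀ + π₁m * q = b * G := Polynomial.modByMonic_add_div (b * G) π₁m
    have hdegmod : B₀.degree < π₁m.degree := Polynomial.degree_modByMonic_lt (b * G) hmon
    have hdegπ₁m : π₁m.degree = π₁.degree := Polynomial.degree_mul_leadingCoeff_inv π₁ hπ₁0
    have hBor : B₀ = 0 ∨ B₀.natDegree < π₁.natDegree := by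
      rcases eq_or_ne B₀ 0 with h | h
      · exact Or.inl h
      · refine Or.inr ?_
        have := Polynomial.natDegree_lt_natDegree h (hdegmod.trans_le hdegπ₁m.le)
        exact this
    set A := G * a + π₂ * (Polynomial.C π₁.leadingCoeff⁻¹ * q) with hA
    have hFeq : F = A * p₁ + B₀ * p₂ := by
      have h1 : F = p₁ * (G * a) + p₂ * (b * G) := by
        rw [hG]
        conv_lhs => rw [show δ * G = G * δ by ring, hbez]
        ring
      rw [h1, ← hmoddiv, hπ₁m]
      rw [show p₂ * (B₀ + π₁ * Polynomial.C π₁.leadingCoeff⁻¹ * q)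
        = B₀ * p₂ + (p₂ * π₁) * (Polynomial.C π₁.leadingCoeff⁻¹ * q) by ring, hswap]
      ring
    have hBclause : B₀ = 0 ∨ B₀.natDegree + δ.natDegree + 1 ≤ p₁.natDegree := by
      rcases hBor with h | h
      · exact Or.inl h
      · exact Or.inr (by omega)
    have hB1 : B₀.natDegree + p₂.natDegree ≤ N := by
      rcases hBclause with h | h
      · rw [h]; simpa using hd₂
      · omega
    refine ⟨A, B₀, hFeq, ?_, hB1, hBclause⟩
    rcases eq_or_ne A 0 with h | h
    · rw [h]; simpa using hd₁
    · have hmul : (A * p₁).natDegree = A.natDegree + p₁.natDegree :=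
        Polynomial.natDegree_mul h hp₁
      have hsub : A * p₁ = F - B₀ * p₂ := by rw [hFeq]; ring
      have : (A * p₁).natDegree ≤ N := by
        rw [hsub]
        refine le_trans (Polynomial.natDegree_sub_le _ _) ?_
        rcases eq_or_ne B₀ 0 with h0 | h0
        · simp [h0, hdF]
        · have := Polynomial.natDegree_mul h0 hp₂
          rw [max_le_iff]
          exact ⟨hdF, by omega⟩
      omega

end SOCP

namespace SOCP
open Polynomial Complex

lemma sq_add_sq_ne_zero {P Q : Polynomial ℝ} (hP : P ≠ 0) : P^2 + Q^2 ≠ 0 := by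
  intro h
  apply hP
  apply Polynomial.funext
  intro x
  have := congrArg (Polynomial.eval x) h
  simp only [Polynomial.eval_add, Polynomial.eval_pow, Polynomial.eval_zero] at this
  have h1 : P.eval x = 0 := by nlinarith [sq_nonneg (P.eval x), sq_nonneg (Q.eval x)]
  simpa using h1

/-- evaluation of a real polynomial (mapped to ℂ) at a conjugate point -/
lemma eval_conj_map (P : Polynomial ℝ) (z : ℂ) :
    (P.map (algebraMap ℝ ℂ)).eval (starRingEnd ℂ z) = starRingEnd ℂ ((P.map (algebraMap ℝ ℂ)).eval z) := by
  rw [Polynomial.eval_map, Polynomial.eval_map, Polynomial.hom_eval₂]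
  congr 1
  ext x
  simp [Complex.conj_ofReal]

/-- Real monic irreducible polynomials of degree ≥ 2 are quadratics of the form
`(X - C b)^2 + C μ` with `μ > 0`. -/
lemma irreducible_shape {σ : Polynomial ℝ} (hmon : σ.Monic) (hirr : Irreducible σ)
    (hdeg : 2 ≤ σ.natDegree) :
    ∃ b μ : ℝ, 0 < μ ∧ σ = (Polynomial.X - Polynomial.C b)^2 + Polynomial.C μ := by
  classical
  have hσ0 : σ ≠ 0 := hmon.ne_zero
  have hσc0 : σ.map (algebraMap ℝ ℂ) ≠ 0 := by
    simpa [Polynomial.map_eq_zero] using hσ0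
  have hdegnat : (σ.map (algebraMap ℝ ℂ)).natDegree = σ.natDegree :=
    Polynomial.natDegree_map _
  obtain ⟨z, hz⟩ := Complex.exists_root (f := σ.map (algebraMap ℝ ℂ)) (by
    rw [Polynomial.degree_eq_natDegree hσc0, hdegnat]
    exact_mod_cast Nat.lt_of_lt_of_le (by norm_num) hdeg)
  have him : z.im ≠ 0 := by
    intro him0
    have hroot : σ.eval z.re = 0 := by
      have h1 : (σ.map (algebraMap ℝ ℂ)).eval ((algebraMap ℝ ℂ) z.re)
          = (algebraMap ℝ ℂ) (σ.eval z.re) := by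
        rw [Polynomial.eval_map, Polynomial.eval₂_hom]
      have hzre : (algebraMap ℝ ℂ) z.re = z := by
        apply Complex.ext <;> simp [him0]
      rw [hzre, hz] at h1
      have : ((σ.eval z.re : ℝ) : ℂ) = 0 := h1.symm
      exact_mod_cast this
    have hdvd : (Polynomial.X - Polynomial.C z.re) ∣ σ := Polynomial.dvd_iff_isRoot.mpr hroot
    obtain ⟨w, hw⟩ := hdvd
    rcases hirr.isUnit_or_isUnit hw with h | h
    · exact (Polynomial.not_isUnit_X_sub_C _) h
    · have hdw : w ≠ 0 := by rintro rfl; rw [mul_zero] at hw; exact hσ0 hw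
      have hw0 : w.natDegree = 0 :=
        Polynomial.natDegree_eq_of_degree_eq_some (Polynomial.isUnit_iff_degree_eq_zero.mp h)
      have := congrArg Polynomial.natDegree hw
      rw [Polynomial.natDegree_mul (Polynomial.X_sub_C_ne_zero z.re) hdw,
        Polynomial.natDegree_X_sub_C, hw0] at this
      omega
  have hzbar : (σ.map (algebraMap ℝ ℂ)).IsRoot (starRingEnd ℂ z) := by
    have := eval_conj_map σ z
    rw [Polynomial.IsRoot, this, hz]
    simp
  set σ₀ : Polynomial ℝ := (Polynomial.X - Polynomial.C z.re)^2 + Polynomial.C (z.im^2) with hσ₀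
  have hσ₀mon : σ₀.Monic := by
    have h1 : ((Polynomial.X - Polynomial.C z.re)^2 : Polynomial ℝ).Monic :=
      (Polynomial.monic_X_sub_C z.re).pow 2
    apply h1.add_of_left
    have h2 : ((Polynomial.X - Polynomial.C z.re)^2 : Polynomial ℝ).degree = 2 := by
      rw [Polynomial.degree_pow, Polynomial.degree_X_sub_C]; norm_num
    rw [h2]
    exact lt_of_le_of_lt Polynomial.degree_C_le (by norm_num)
  have hσ₀map : σ₀.map (algebraMap ℝ ℂ) =
      (Polynomial.X - Polynomial.C z) * (Polynomial.X - Polynomial.C (starRingEnd ℂ z)) := by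
    have hI : (Polynomial.C Complex.I)^2 = (-1 : Polynomial ℂ) := by
      rw [← map_pow, Complex.I_sq, map_neg, map_one]
    have hz1 : Polynomial.C (z : ℂ) =
        Polynomial.C (z.re : ℂ) + Polynomial.C (z.im : ℂ) * Polynomial.C Complex.I := by
      rw [← map_mul, ← map_add]
      congr 1
      exact (Complex.re_add_im z).symm
    have hz2 : Polynomial.C (starRingEnd ℂ z) =
        Polynomial.C (z.re : ℂ) - Polynomial.C (z.im : ℂ) * Polynomial.C Complex.I := by
      rw [← map_mul, ← map_sub]
      congr 1
      rw [Complex.ext_iff]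
      simp
    rw [hσ₀]
    rw [Polynomial.map_add, Polynomial.map_pow, Polynomial.map_sub, Polynomial.map_X,
      Polynomial.map_C, Polynomial.map_C]
    rw [hz1, hz2]
    have : ((z.re^2 : ℝ) : ℂ) = (z.re : ℂ)^2 := by push_cast; ring
    have him2 : ((z.im^2 : ℝ) : ℂ) = (z.im : ℂ)^2 := by push_cast; ring
    rw [show ((algebraMap ℝ ℂ) (z.re)) = (z.re : ℂ) from rfl,
      show ((algebraMap ℝ ℂ) (z.im^2)) = ((z.im^2 : ℝ) : ℂ) from rfl, him2]
    rw [show Polynomial.C ((z.im : ℂ)^2) = (Polynomial.C (z.im : ℂ))^2 from by rw [map_pow]]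
    linear_combination (Polynomial.C (z.im : ℂ))^2 * hI
  -- σ₀ divides σ over ℂ, hence over ℝ
  have hdvdc : σ₀.map (algebraMap ℝ ℂ) ∣ σ.map (algebraMap ℝ ℂ) := by
    rw [hσ₀map]
    have hne : z ≠ starRingEnd ℂ z := by
      intro h
      apply him
      have h2 := congrArg Complex.im h
      simp at h2
      linarith
    refine (Polynomial.isCoprime_X_sub_C_of_isUnit_sub ?_).mul_dvd ?_ ?_
    · exact isUnit_iff_ne_zero.mpr (sub_ne_zero.mpr hne)
    · exact Polynomial.dvd_iff_isRoot.mpr hz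
    · exact Polynomial.dvd_iff_isRoot.mpr hzbar
  have hdvdr : σ₀ ∣ σ :=
    (Polynomial.map_dvd_map (algebraMap ℝ ℂ) (algebraMap ℝ ℂ).injective hσ₀mon).mp hdvdc
  obtain ⟨w, hw⟩ := hdvdr
  have hσ₀deg : σ₀.natDegree = 2 := by
    have h2 : ((Polynomial.X - Polynomial.C z.re)^2 : Polynomial ℝ).degree = 2 := by
      rw [Polynomial.degree_pow, Polynomial.degree_X_sub_C]; norm_num
    have : σ₀.degree = 2 := by
      rw [hσ₀]
      rw [Polynomial.degree_add_eq_left_of_degree_lt]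
      · exact h2
      · rw [h2]; exact lt_of_le_of_lt Polynomial.degree_C_le (by norm_num)
    exact Polynomial.natDegree_eq_of_degree_eq_some this
  have hwunit : IsUnit w := by
    rcases hirr.isUnit_or_isUnit hw with h | h
    · exfalso
      have := Polynomial.isUnit_iff_degree_eq_zero.mp h
      have h0 : σ₀.natDegree = 0 := Polynomial.natDegree_eq_of_degree_eq_some this
      omega
    · exact h
  -- w is a nonzero real constant; but σ monic and σ₀ monic force w = 1
  obtain ⟨c, hc⟩ := Polynomial.isUnit_iff.mp hwunit
  obtain ⟨hcu, hcC⟩ := hc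
  have hc1 : c = 1 := by
    have hlc := congrArg Polynomial.leadingCoeff hw
    rw [Polynomial.leadingCoeff_mul, hσ₀mon.leadingCoeff, hmon.leadingCoeff, one_mul, ← hcC,
      Polynomial.leadingCoeff_C] at hlc
    exact hlc.symm
  have hσeq : σ = σ₀ := by
    rw [hw, ← hcC, hc1, map_one, mul_one]
  refine ⟨z.re, z.im^2, ?_, by rw [hσeq, hσ₀]⟩
  positivity

end SOCP

namespace SOCP
open Polynomial

lemma shape_natDegree (b μ : ℝ) (hμ : μ ≠ 0) :
    ((Polynomial.X - Polynomial.C b)^2 + Polynomial.C μ : Polynomial ℝ).natDegree = 2 := by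
  have h2 : ((Polynomial.X - Polynomial.C b)^2 : Polynomial ℝ).degree = 2 := by
    rw [Polynomial.degree_pow, Polynomial.degree_X_sub_C]; norm_num
  have : ((Polynomial.X - Polynomial.C b)^2 + Polynomial.C μ : Polynomial ℝ).degree = 2 := by
    rw [Polynomial.degree_add_eq_left_of_degree_lt]
    · exact h2
    · rw [h2]; exact lt_of_le_of_lt Polynomial.degree_C_le (by norm_num)
  exact Polynomial.natDegree_eq_of_degree_eq_some this

lemma monic_irred_deg {σ : Polynomial ℝ} (hmon : σ.Monic) (hirr : Irreducible σ) :
    σ.natDegree = 1 ∨ σ.natDegree = 2 := by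
  have h1 : 1 ≤ σ.natDegree := by
    by_contra h
    push_neg at h
    interval_cases hd : σ.natDegree
    · obtain ⟨c, hc⟩ := Polynomial.natDegree_eq_zero.mp hd
      have : IsUnit σ := by
        rw [← hc]
        apply Polynomial.isUnit_C.mpr
        have : σ ≠ 0 := hmon.ne_zero
        rw [← hc] at this
        exact isUnit_iff_ne_zero.mpr (fun h0 => this (by rw [h0, map_zero]))
      exact hirr.not_isUnit this
  rcases Nat.lt_or_ge σ.natDegree 2 with h | h
  · left; omega
  · right
    obtain ⟨b, μ, hμ, hshape⟩ := irreducible_shape hmon hirr h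
    rw [hshape]
    exact shape_natDegree b μ (ne_of_gt hμ)

lemma finset_linear_dvd (J : Finset ℝ) (F : Polynomial ℝ) (h : ∀ x ∈ J, F.eval x = 0) :
    (∏ x ∈ J, (Polynomial.X - Polynomial.C x)) ∣ F := by
  classical
  induction J using Finset.induction_on with
  | empty => simpa using one_dvd F
  | @insert a J' ha IH =>
    rw [Finset.prod_insert ha]
    have h1 : (Polynomial.X - Polynomial.C a) ∣ F :=
      Polynomial.dvd_iff_isRoot.mpr (h a (Finset.mem_insert_self a J'))
    have h2 : (∏ x ∈ J', (Polynomial.X - Polynomial.C x)) ∣ F :=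
      IH (fun x hx => h x (Finset.mem_insert_of_mem hx))
    have hcop : IsCoprime (Polynomial.X - Polynomial.C a)
        (∏ x ∈ J', (Polynomial.X - Polynomial.C x)) := by
      apply IsCoprime.prod_right
      intro x hx
      apply Polynomial.isCoprime_X_sub_C_of_isUnit_sub
      have : a ≠ x := fun hax => ha (hax ▸ hx)
      exact isUnit_iff_ne_zero.mpr (sub_ne_zero.mpr this)
    exact hcop.mul_dvd h1 h2

lemma real_linear_rep {γ : Polynomial ℝ} (hγ : γ ≠ 0) (hsf : Squarefree γ)
    (hnq : ∀ σ : Polynomial ℝ, σ.Monic → Irreducible σ → σ ∣ γ → σ.natDegree ≠ 2) :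
    γ.roots.Nodup ∧
      γ = Polynomial.C γ.leadingCoeff * ∏ x ∈ γ.roots.toFinset, (Polynomial.X - Polynomial.C x) := by
  classical
  have hsplits : γ.Splits := by
    rw [Polynomial.splits_iff_splits]
    right
    intro g hg hgdvd
    have hg0 : g ≠ 0 := hg.ne_zero
    have hlc : g.leadingCoeff ≠ 0 := Polynomial.leadingCoeff_ne_zero.mpr hg0
    set g' := g * Polynomial.C g.leadingCoeff⁻¹ with hg'
    have hassoc : Associated g g' := by
      refine ⟨(Polynomial.isUnit_C.mpr (isUnit_iff_ne_zero.mpr (inv_ne_zero hlc))).unit, rfl⟩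
    have hg'irr : Irreducible g' := hassoc.irreducible hg
    have hg'mon : g'.Monic := Polynomial.monic_mul_leadingCoeff_inv hg0
    have hg'dvd : g' ∣ γ := (hassoc.symm.dvd).trans hgdvd
    have hdeg : g'.natDegree = 1 ∨ g'.natDegree = 2 := monic_irred_deg hg'mon hg'irr
    have hne2 : g'.natDegree ≠ 2 := hnq g' hg'mon hg'irr hg'dvd
    have hg'1 : g'.natDegree = 1 := by tauto
    have : g.natDegree = 1 := by
      have := Polynomial.natDegree_mul hg0 (Polynomial.C_ne_zero.mpr (inv_ne_zero hlc))
      rw [← hg', hg'1, Polynomial.natDegree_C] at this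
      omega
    rw [Polynomial.degree_eq_natDegree hg0, this]
    rfl
  have hnodup : γ.roots.Nodup := by
    apply Polynomial.nodup_roots
    exact (PerfectField.separable_iff_squarefree).mpr hsf
  constructor
  · exact hnodup
  · have h1 := hsplits.eq_prod_roots
    have hJ : γ.roots.toFinset.val = γ.roots := by
      rw [Multiset.toFinset_val, Multiset.dedup_eq_self.mpr hnodup]
    rw [Finset.prod_eq_multiset_prod, hJ]
    exact h1
end SOCP

namespace SOCP
open Polynomial MvPolynomial

/-- All data and hypotheses for the core argument. -/
structure Ctx where
  d : ℕ
  B : MvPolynomial (Fin 2) ℝ → MvPolynomial (Fin 2) ℝ → ℝ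
  r : MvPolynomial (Fin 2) ℝ
  u₁ : MvPolynomial (Fin 2) ℝ
  u₂ : MvPolynomial (Fin 2) ℝ
  hB1 : ∀ a b c, B (a + b) c = B a c + B b c
  hBs1 : ∀ (k : ℝ) a b, B (k • a) b = k * B a b
  hu₁ : u₁.IsHomogeneous d
  hu₂ : u₂.IsHomogeneous d
  hu1ne : u₁ ≠ 0
  hdeg : (toUni u₁).natDegree = d
  hgrad : ∀ v₁ v₂, v₁.IsHomogeneous d → v₂.IsHomogeneous d →
    B (u₁*v₁ + u₂*v₂) r = 0
  hhess : ∀ v₁ v₂, v₁.IsHomogeneous d → v₂.IsHomogeneous d →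
    0 ≤ B (v₁^2 + v₂^2) r + 2 * B (u₁*v₁+u₂*v₂) (u₁*v₁+u₂*v₂)

namespace Ctx

variable (c : Ctx)

noncomputable def hu1 : Polynomial ℝ := toUni c.u₁
noncomputable def hu2 : Polynomial ℝ := toUni c.u₂
noncomputable def gg : Polynomial ℝ := EuclideanDomain.gcd c.hu1 c.hu2
noncomputable def e : ℕ := c.gg.natDegree
noncomputable def hh1 : Polynomial ℝ := c.hu1 / c.gg
noncomputable def hh2 : Polynomial ℝ := c.hu2 / c.gg
noncomputable def HH : Polynomial ℝ := c.hh1^2 + c.hh2^2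
noncomputable def L (P : Polynomial ℝ) : ℝ := c.B (homog P (2*c.d)) c.r

lemma hu1_ne : c.hu1 ≠ 0 := by
  intro h
  exact c.hu1ne (by
    have := toUni_inj c.hu₁ (MvPolynomial.isHomogeneous_zero _ _ c.d) (by simpa [hu1] using h)
    simpa using this)

lemma natDegree_hu1 : c.hu1.natDegree = c.d := c.hdeg

lemma natDegree_hu2 : c.hu2.natDegree ≤ c.d := natDegree_toUni c.hu₂

lemma gg_dvd1 : c.gg ∣ c.hu1 := EuclideanDomain.gcd_dvd_left _ _
lemma gg_dvd2 : c.gg ∣ c.hu2 := EuclideanDomain.gcd_dvd_right _ _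

lemma gg_ne : c.gg ≠ 0 := by
  rw [gg, Ne, EuclideanDomain.gcd_eq_zero_iff]
  rintro ⟨h, -⟩
  exact c.hu1_ne h

lemma e_le_d : c.e ≤ c.d := by
  rw [e, ← c.natDegree_hu1]
  exact Polynomial.natDegree_le_of_dvd c.gg_dvd1 c.hu1_ne

lemma gg_mul_hh1 : c.gg * c.hh1 = c.hu1 :=
  EuclideanDomain.mul_div_cancel' c.gg_ne c.gg_dvd1

lemma gg_mul_hh2 : c.gg * c.hh2 = c.hu2 :=
  EuclideanDomain.mul_div_cancel' c.gg_ne c.gg_dvd2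

lemma hh1_ne : c.hh1 ≠ 0 := by
  intro h
  have := c.gg_mul_hh1
  rw [h, mul_zero] at this
  exact c.hu1_ne this.symm

lemma natDegree_hh1 : c.e + c.hh1.natDegree = c.d := by
  have := Polynomial.natDegree_mul c.gg_ne c.hh1_ne
  rw [c.gg_mul_hh1, c.natDegree_hu1] at this
  rw [e]; omega

lemma natDegree_hh2 : c.e + c.hh2.natDegree ≤ c.d := by
  rcases eq_or_ne c.hh2 0 with h | h
  · rw [h]; simpa using c.e_le_d
  · have := Polynomial.natDegree_mul c.gg_ne h
    rw [c.gg_mul_hh2] at this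
    have h2 := c.natDegree_hu2
    rw [this] at h2
    exact h2

lemma HH_ne : c.HH ≠ 0 := sq_add_sq_ne_zero c.hh1_ne

lemma natDegree_HH : c.HH.natDegree + 2*c.e ≤ 2*c.d := by
  have h1 : (c.hh1^2).natDegree = 2 * c.hh1.natDegree := Polynomial.natDegree_pow _ _
  have h2 : (c.hh2^2).natDegree = 2 * c.hh2.natDegree := Polynomial.natDegree_pow _ _
  have := Polynomial.natDegree_add_le (c.hh1^2) (c.hh2^2)
  have e1 := c.natDegree_hh1
  have e2 := c.natDegree_hh2
  rw [HH]
  omega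

lemma coprime_hh : IsUnit (EuclideanDomain.gcd c.hh1 c.hh2) := by
  set δ := EuclideanDomain.gcd c.hh1 c.hh2 with hδ
  have hd1 : δ ∣ c.hh1 := EuclideanDomain.gcd_dvd_left _ _
  have hd2 : δ ∣ c.hh2 := EuclideanDomain.gcd_dvd_right _ _
  have h1 : δ * c.gg ∣ c.hu1 := by
    rw [← c.gg_mul_hh1]
    obtain ⟨w, hw⟩ := hd1
    exact ⟨w, by rw [hw]; ring⟩
  have h2 : δ * c.gg ∣ c.hu2 := by
    rw [← c.gg_mul_hh2]
    obtain ⟨w, hw⟩ := hd2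
    exact ⟨w, by rw [hw]; ring⟩
  have hdg : δ * c.gg ∣ c.gg := EuclideanDomain.dvd_gcd h1 h2
  obtain ⟨w, hw⟩ := hdg
  have h3 : c.gg * (δ * w) = c.gg * 1 := by linear_combination (-1 : Polynomial ℝ) * hw
  have := mul_left_cancel₀ c.gg_ne h3
  exact IsUnit.of_mul_eq_one w this

/-- forms corresponding to the univariate data -/
noncomputable def gf : MvPolynomial (Fin 2) ℝ := homog c.gg c.e
noncomputable def h1f : MvPolynomial (Fin 2) ℝ := homog c.hh1 (c.d - c.e)
noncomputable def h2f : MvPolynomial (Fin 2) ℝ := homog c.hh2 (c.d - c.e)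

lemma u1_eq : c.u₁ = c.gf * c.h1f := by
  apply toUni_inj c.hu₁ ?_ ?_
  · have := (homog_isHomogeneous c.gg c.e).mul (homog_isHomogeneous c.hh1 (c.d - c.e))
    rw [show c.e + (c.d - c.e) = c.d by have := c.e_le_d; omega] at this
    exact this
  · rw [map_mul]
    rw [gf, h1f, toUni_homog (le_refl c.e : c.gg.natDegree ≤ c.e),
      toUni_homog (by have := c.natDegree_hh1; omega : c.hh1.natDegree ≤ c.d - c.e)]
    exact c.gg_mul_hh1.symm

lemma u2_eq : c.u₂ = c.gf * c.h2f := by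
  apply toUni_inj c.hu₂ ?_ ?_
  · have := (homog_isHomogeneous c.gg c.e).mul (homog_isHomogeneous c.hh2 (c.d - c.e))
    rw [show c.e + (c.d - c.e) = c.d by have := c.e_le_d; omega] at this
    exact this
  · rw [map_mul]
    rw [gf, h2f, toUni_homog (le_refl c.e : c.gg.natDegree ≤ c.e),
      toUni_homog (by have h1 := c.natDegree_hh2; have := c.e_le_d; omega : c.hh2.natDegree ≤ c.d - c.e)]
    exact c.gg_mul_hh2.symm

lemma B_zero_left (y : MvPolynomial (Fin 2) ℝ) : c.B 0 y = 0 := by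
  have := c.hB1 0 0 y
  rw [add_zero] at this
  linarith

lemma L_add (P Q : Polynomial ℝ) : c.L (P + Q) = c.L P + c.L Q := by
  rw [L, L, L, homog_add, c.hB1]

lemma L_Cmul (a : ℝ) (P : Polynomial ℝ) : c.L (Polynomial.C a * P) = a * c.L P := by
  rw [L, L, homog_smul, c.hBs1]

lemma L_zero : c.L 0 = 0 := by
  rw [L, homog_zero]
  exact c.B_zero_left _

end Ctx
end SOCP

namespace SOCP
namespace Ctx
open Polynomial MvPolynomial

variable (c : Ctx)

lemma Ugrad (P₁ P₂ : Polynomial ℝ) (h1 : P₁.natDegree ≤ c.d) (h2 : P₂.natDegree ≤ c.d) :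
    c.L (c.hu1 * P₁ + c.hu2 * P₂) = 0 := by
  have hform : homog (c.hu1*P₁ + c.hu2*P₂) (2*c.d)
      = c.u₁ * homog P₁ c.d + c.u₂ * homog P₂ c.d := by
    apply toUni_inj (homog_isHomogeneous _ _) ?_ ?_
    · have ha := c.hu₁.mul (homog_isHomogeneous P₁ c.d)
      have hb := c.hu₂.mul (homog_isHomogeneous P₂ c.d)
      rw [show c.d + c.d = 2*c.d by ring] at ha hb
      exact ha.add hb
    · rw [toUni_homog, map_add, map_mul, map_mul, toUni_homog h1, toUni_homog h2]
      · rfl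
      · refine le_trans (Polynomial.natDegree_add_le _ _) ?_
        have b1 := Polynomial.natDegree_mul_le (p := c.hu1) (q := P₁)
        have b2 := Polynomial.natDegree_mul_le (p := c.hu2) (q := P₂)
        have := c.natDegree_hu1
        have := c.natDegree_hu2
        omega
  rw [L, hform]
  exact c.hgrad _ _ (homog_isHomogeneous _ _) (homog_isHomogeneous _ _)

lemma kernel_form_eq (ss : Polynomial ℝ) (hs : ss.natDegree ≤ c.e) :
    (-(c.h2f * homog ss c.e))^2 + (c.h1f * homog ss c.e)^2
      = homog (c.HH * ss^2) (2*c.d) := by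
  have hd : (c.d - c.e) + c.e = c.d := by have := c.e_le_d; omega
  have hhom : ∀ hf : MvPolynomial (Fin 2) ℝ, hf.IsHomogeneous (c.d - c.e) →
      ((hf * homog ss c.e)^2).IsHomogeneous (2*c.d) := by
    intro hf h
    have := (h.mul (homog_isHomogeneous ss c.e)).pow 2
    rw [hd] at this
    rw [show c.d * 2 = 2*c.d by ring] at this
    exact this
  symm
  apply toUni_inj (homog_isHomogeneous _ _) ?_ ?_
  · have h1 := hhom c.h2f (homog_isHomogeneous _ _)
    have h2 := hhom c.h1f (homog_isHomogeneous _ _)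
    rw [show (-(c.h2f * homog ss c.e))^2 = (c.h2f * homog ss c.e)^2 by ring]
    exact h1.add h2
  · rw [toUni_homog, map_add, map_pow, map_pow, map_neg, map_mul, map_mul]
    · rw [h1f, h2f, toUni_homog (by have := c.natDegree_hh1; omega : c.hh1.natDegree ≤ c.d - c.e),
        toUni_homog (by have := c.natDegree_hh2; have := c.e_le_d; omega : c.hh2.natDegree ≤ c.d - c.e),
        toUni_homog hs]
      rw [HH]; ring
    · have hH := c.natDegree_HH
      have hs2 : (ss^2).natDegree = 2 * ss.natDegree := Polynomial.natDegree_pow _ _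
      refine le_trans (Polynomial.natDegree_mul_le) ?_
      omega

lemma m_zero (ss : Polynomial ℝ) :
    c.u₁ * (-(c.h2f * homog ss c.e)) + c.u₂ * (c.h1f * homog ss c.e) = 0 := by
  rw [c.u1_eq, c.u2_eq]; ring

lemma kernel_homog (ss : Polynomial ℝ) :
    (-(c.h2f * homog ss c.e)).IsHomogeneous c.d ∧ (c.h1f * homog ss c.e).IsHomogeneous c.d := by
  have hd : (c.d - c.e) + c.e = c.d := by have := c.e_le_d; omega
  constructor
  · have := ((homog_isHomogeneous c.hh2 (c.d - c.e)).mul (homog_isHomogeneous ss c.e)).neg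
    rw [hd] at this; exact this
  · have := (homog_isHomogeneous c.hh1 (c.d - c.e)).mul (homog_isHomogeneous ss c.e)
    rw [hd] at this; exact this

lemma Ukpos (ss : Polynomial ℝ) (hs : ss.natDegree ≤ c.e) : 0 ≤ c.L (c.HH * ss^2) := by
  obtain ⟨hv1, hv2⟩ := c.kernel_homog ss
  have h := c.hhess _ _ hv1 hv2
  rw [c.m_zero ss, c.kernel_form_eq ss hs, c.B_zero_left] at h
  rw [L]
  linarith

lemma forall_linear_nonneg {D K : ℝ} (h : ∀ lam : ℝ, 0 ≤ D + lam * K) : K = 0 := by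
  by_contra hK
  have := h (-(D + 1)/K)
  rw [div_mul_cancel₀ _ hK] at this
  linarith

end Ctx
end SOCP

namespace SOCP
namespace Ctx
open Polynomial MvPolynomial

variable (c : Ctx)

lemma spanning (ww : Polynomial ℝ) (hw : ww.natDegree ≤ 2*c.d - c.e) :
    ∃ Z₁ Z₂ : Polynomial ℝ, Z₁.natDegree ≤ c.d ∧ Z₂.natDegree ≤ c.d ∧
      c.hh1 * Z₂ - c.hh2 * Z₁ = ww := by
  have hed := c.e_le_d
  have hd1 := c.natDegree_hh1
  rcases eq_or_ne c.hh2 0 with h2 | h2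
  · -- u₂ dehomogenizes to zero, so `gg ~ hu1` and `hh1` is a nonzero constant
    have hu20 : c.hu2 = 0 := by rw [← c.gg_mul_hh2, h2, mul_zero]
    have hgg : c.gg = c.hu1 := by
      rw [gg, hu20]
      exact EuclideanDomain.gcd_zero_right _
    have hed' : c.e = c.d := by rw [e, hgg, c.natDegree_hu1]
    have hh1one : c.hh1 = 1 := by
      have := c.gg_mul_hh1
      rw [hgg] at this
      have h1 : c.hu1 * c.hh1 = c.hu1 * 1 := by rw [mul_one]; exact this
      exact mul_left_cancel₀ c.hu1_ne h1
    refine ⟨0, ww, by simp, by omega, ?_⟩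
    rw [hh1one, h2]; ring
  · have hgcd : IsUnit (EuclideanDomain.gcd c.hh1 c.hh2) := c.coprime_hh
    have hdd2 := c.natDegree_hh2
    obtain ⟨A, B₀, hF, hA, hB, hBor⟩ := BL c.hh1 c.hh2 ww (2*c.d - c.e)
      c.hh1_ne h2 (by omega) (by omega) hw (by omega) (hgcd.dvd)
    refine ⟨-B₀, A, ?_, by omega, ?_⟩
    · rw [Polynomial.natDegree_neg]
      rcases hBor with h | h
      · rw [h]; simp
      · omega
    · rw [hF]; ring

lemma Unull (ss : Polynomial ℝ) (hs : ss.natDegree ≤ c.e) (h0 : c.L (c.HH * ss^2) = 0)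
    (ww : Polynomial ℝ) (hw : ww.natDegree ≤ 2*c.d - c.e) : c.L (ss * ww) = 0 := by
  obtain ⟨Z₁, Z₂, hZ1, hZ2, hZ⟩ := c.spanning ww hw
  set z₁ := homog Z₁ c.d with hz₁def
  set z₂ := homog Z₂ c.d with hz₂def
  set v₁ := -(c.h2f * homog ss c.e) with hv₁def
  set v₂ := c.h1f * homog ss c.e with hv₂def
  obtain ⟨hv1h, hv2h⟩ := c.kernel_homog ss
  have key : ∀ lam : ℝ,
      0 ≤ (c.B (z₁^2 + z₂^2) c.r
            + 2 * c.B (c.u₁*z₁+c.u₂*z₂) (c.u₁*z₁+c.u₂*z₂))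
          + lam * (2 * c.B (z₁*v₁+z₂*v₂) c.r) := by
    intro lam
    have hz1h : (z₁ + MvPolynomial.C lam * v₁).IsHomogeneous c.d :=
      (homog_isHomogeneous _ _).add (hv1h.C_mul lam)
    have hz2h : (z₂ + MvPolynomial.C lam * v₂).IsHomogeneous c.d :=
      (homog_isHomogeneous _ _).add (hv2h.C_mul lam)
    have h := c.hhess _ _ hz1h hz2h
    have hC2 : (MvPolynomial.C (2*lam) : MvPolynomial (Fin 2) ℝ)
        = (2*lam) • (1 : MvPolynomial (Fin 2) ℝ) := by
      rw [MvPolynomial.smul_eq_C_mul, mul_one]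
    have hsq : (z₁ + MvPolynomial.C lam * v₁)^2 + (z₂ + MvPolynomial.C lam * v₂)^2
        = (z₁^2 + z₂^2) + ((2*lam) • (z₁*v₁ + z₂*v₂)
            + (lam^2) • (v₁^2+v₂^2)) := by
      rw [MvPolynomial.smul_eq_C_mul, MvPolynomial.smul_eq_C_mul]
      rw [show (MvPolynomial.C (2*lam) : MvPolynomial (Fin 2) ℝ)
          = 2 * MvPolynomial.C lam by rw [map_mul, map_ofNat]]
      rw [show (MvPolynomial.C (lam^2) : MvPolynomial (Fin 2) ℝ)
          = (MvPolynomial.C lam)^2 by rw [map_pow]]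
      ring
    have hm : c.u₁ * (z₁ + MvPolynomial.C lam * v₁) + c.u₂ * (z₂ + MvPolynomial.C lam * v₂)
        = c.u₁*z₁ + c.u₂*z₂ := by
      have h0m := c.m_zero ss
      rw [← hv₁def, ← hv₂def] at h0m
      linear_combination (MvPolynomial.C lam) * h0m
    rw [hsq, hm] at h
    have e1 := c.hB1 (z₁^2+z₂^2) ((2*lam) • (z₁*v₁+z₂*v₂) + (lam^2) • (v₁^2+v₂^2)) c.r
    have e2 := c.hB1 ((2*lam) • (z₁*v₁+z₂*v₂)) ((lam^2) • (v₁^2+v₂^2)) c.r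
    have e3 := c.hBs1 (2*lam) (z₁*v₁+z₂*v₂) c.r
    have e4 := c.hBs1 (lam^2) (v₁^2+v₂^2) c.r
    rw [e1, e2, e3, e4] at h
    have hT : c.B (v₁^2 + v₂^2) c.r = 0 := by
      rw [hv₁def, hv₂def, c.kernel_form_eq ss hs]
      exact h0
    rw [hT, mul_zero] at h
    have hrw : c.B (z₁^2+z₂^2) c.r + (2*lam * c.B (z₁*v₁+z₂*v₂) c.r + 0)
          + 2 * c.B (c.u₁*z₁+c.u₂*z₂) (c.u₁*z₁+c.u₂*z₂)
        = (c.B (z₁^2 + z₂^2) c.r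
            + 2 * c.B (c.u₁*z₁+c.u₂*z₂) (c.u₁*z₁+c.u₂*z₂))
          + lam * (2 * c.B (z₁*v₁+z₂*v₂) c.r) := by ring
    rw [hrw] at h
    exact h
  have hK := forall_linear_nonneg key
  have hform : z₁*v₁ + z₂*v₂ = homog (ss*ww) (2*c.d) := by
    apply toUni_inj ?_ (homog_isHomogeneous _ _) ?_
    · have h1 := (homog_isHomogeneous Z₁ c.d).mul hv1h
      have h2 := (homog_isHomogeneous Z₂ c.d).mul hv2h
      rw [show c.d + c.d = 2*c.d by ring] at h1 h2
      exact h1.add h2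
    · have hb : (ss*ww).natDegree ≤ 2*c.d := by
        refine le_trans (Polynomial.natDegree_mul_le) ?_
        have := c.e_le_d
        omega
      rw [toUni_homog hb, hz₁def, hz₂def, hv₁def, hv₂def]
      rw [map_add, map_mul, map_mul, map_neg, map_mul, map_mul, h1f, h2f]
      rw [toUni_homog hZ1, toUni_homog hZ2,
        toUni_homog (by have := c.natDegree_hh1; omega : c.hh1.natDegree ≤ c.d - c.e),
        toUni_homog (by have := c.natDegree_hh2; have := c.e_le_d; omega
          : c.hh2.natDegree ≤ c.d - c.e),
        toUni_homog hs]
      rw [← hZ]; ring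
  have : c.L (ss * ww) = c.B (z₁*v₁ + z₂*v₂) c.r := by
    rw [L, hform]
  rw [this]
  linarith [hK]

end Ctx
end SOCP

namespace SOCP
namespace Ctx
open Polynomial MvPolynomial

variable (c : Ctx)

lemma L_sum {ι : Type*} (s : Finset ι) (f : ι → Polynomial ℝ) :
    c.L (∑ x ∈ s, f x) = ∑ x ∈ s, c.L (f x) := by
  classical
  induction s using Finset.induction_on with
  | empty => simpa using c.L_zero
  | @insert a s' ha IH =>
    rw [Finset.sum_insert ha, Finset.sum_insert ha, c.L_add, IH]

lemma deg_le_e {γ : Polynomial ℝ} (hγg : γ ∣ c.gg) : γ.natDegree ≤ c.e :=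
  Polynomial.natDegree_le_of_dvd hγg c.gg_ne

lemma init_inv (P : Polynomial ℝ) (hP : P.natDegree ≤ 2*c.d) (hdvd : c.gg ∣ P) :
    c.L P = 0 := by
  have hed := c.e_le_d
  have hd1 := c.natDegree_hu1
  have hd2 := c.natDegree_hu2
  rcases eq_or_ne c.hu2 0 with h2 | h2
  · have hgg : c.gg = c.hu1 := by rw [gg, h2]; exact EuclideanDomain.gcd_zero_right _
    rw [hgg] at hdvd
    obtain ⟨A, hA⟩ := hdvd
    have hAdeg : A.natDegree ≤ c.d := by
      rcases eq_or_ne A 0 with h | h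
      · rw [h]; simp
      · have := Polynomial.natDegree_mul c.hu1_ne h
        rw [← hA] at this
        omega
    have hPeq : P = c.hu1 * A + c.hu2 * 0 := by rw [h2, hA]; ring
    rw [hPeq]
    exact c.Ugrad A 0 hAdeg (by simp)
  · obtain ⟨A, B₀, hF, hA, hB, hBor⟩ := BL c.hu1 c.hu2 P (2*c.d) c.hu1_ne h2
      (by omega) (by omega) hP (by rw [hd1]; rw [show (EuclideanDomain.gcd c.hu1 c.hu2).natDegree = c.e from rfl]; omega) hdvd
    have hPeq : P = c.hu1 * A + c.hu2 * B₀ := by rw [hF]; ring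
    rw [hPeq]
    exact c.Ugrad A B₀ (by omega) (by
      rcases hBor with h | h
      · rw [h]; simp
      · omega)

lemma progress (γ ss : Polynomial ℝ) (hγ0 : γ ≠ 0) (hγg : γ ∣ c.gg)
    (hinv : ∀ P, P.natDegree ≤ 2*c.d → γ ∣ P → c.L P = 0)
    (hs0 : ss ≠ 0) (hse : ss.natDegree ≤ c.e)
    (hL0 : c.L (c.HH * ss^2) = 0) :
    ∀ P, P.natDegree ≤ 2*c.d → EuclideanDomain.gcd γ ss ∣ P → c.L P = 0 := by
  intro P hP hdvd
  have hγe : γ.natDegree ≤ c.e := c.deg_le_e hγg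
  have hed := c.e_le_d
  obtain ⟨A, B₀, hF, hA, hB, hBor⟩ := BL γ ss P (2*c.d) hγ0 hs0
    (by omega) (by omega) hP (by omega) hdvd
  have h1 : c.L (A * γ) = 0 := by
    apply hinv _ ?_ ⟨A, by ring⟩
    refine le_trans (Polynomial.natDegree_mul_le) (by omega)
  have h2 : c.L (B₀ * ss) = 0 := by
    rcases hBor with h | h
    · rw [h, zero_mul]; exact c.L_zero
    · rw [show B₀ * ss = ss * B₀ by ring]
      exact c.Unull ss hse hL0 B₀ (by omega)
  rw [show P = A*γ + B₀*ss from hF, c.L_add, h1, h2]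
  ring

lemma final_step (γ : Polynomial ℝ) (hγ0 : γ ≠ 0) (hγg : γ ∣ c.gg)
    (hinv : ∀ P, P.natDegree ≤ 2*c.d → γ ∣ P → c.L P = 0)
    (hsf : Squarefree γ) (hcop : IsUnit (EuclideanDomain.gcd γ c.HH))
    (hnq : ∀ σ : Polynomial ℝ, σ.Monic → Irreducible σ → σ ∣ γ → σ.natDegree ≠ 2)
    (T : Polynomial ℝ) (hT : T.natDegree ≤ c.d) :
    0 ≤ c.L (T^2) := by
  classical
  obtain ⟨hnodup, hrep⟩ := real_linear_rep hγ0 hsf hnq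
  set J := γ.roots.toFinset with hJ
  have hγe : γ.natDegree ≤ c.e := c.deg_le_e hγg
  have hed := c.e_le_d
  have hHdeg := c.natDegree_HH
  have hroot : ∀ x ∈ J, γ.eval x = 0 := by
    intro x hx
    rw [hJ, Multiset.mem_toFinset] at hx
    exact (Polynomial.mem_roots hγ0).mp hx
  have hcard : J.card ≤ c.e := by
    have h1 : J.card ≤ Multiset.card γ.roots := γ.roots.toFinset_card_le
    have h2 := Polynomial.card_roots' γ
    omega
  set sfun : ℝ → Polynomial ℝ := fun x => ∏ y ∈ J.erase x, (Polynomial.X - Polynomial.C y)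
    with hsfun
  have hsdeg : ∀ x ∈ J, (sfun x).natDegree ≤ c.e := by
    intro x hx
    rw [hsfun]
    refine le_trans (Polynomial.natDegree_prod_le _ _) ?_
    have : ∀ y ∈ J.erase x, (Polynomial.X - Polynomial.C y).natDegree = 1 := fun y _ =>
      Polynomial.natDegree_X_sub_C y
    rw [Finset.sum_congr rfl this]
    simp only [Finset.sum_const, smul_eq_mul, mul_one]
    have := Finset.card_erase_le (a := x) (s := J)
    omega
  have hsx : ∀ x ∈ J, (sfun x).eval x ≠ 0 := by
    intro x hx
    rw [hsfun]
    simp only [Polynomial.eval_prod, Polynomial.eval_sub, Polynomial.eval_X, Polynomial.eval_C]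
    rw [Finset.prod_ne_zero_iff]
    intro y hy
    have : y ≠ x := (Finset.ne_of_mem_erase hy)
    exact sub_ne_zero.mpr (fun h => this (by linarith))
  have hHx : ∀ x ∈ J, 0 < c.HH.eval x := by
    intro x hx
    have hnn : 0 ≤ c.HH.eval x := by
      rw [HH]
      simp only [Polynomial.eval_add, Polynomial.eval_pow]
      positivity
    rcases hnn.lt_or_eq with h | h
    · exact h
    · exfalso
      have hdvdH : (Polynomial.X - Polynomial.C x) ∣ c.HH :=
        Polynomial.dvd_iff_isRoot.mpr h.symm
      have hdvdγ : (Polynomial.X - Polynomial.C x) ∣ γ :=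
        Polynomial.dvd_iff_isRoot.mpr (hroot x hx)
      have := EuclideanDomain.dvd_gcd hdvdγ hdvdH
      have hunit := isUnit_of_dvd_unit this hcop
      exact Polynomial.not_isUnit_X_sub_C x hunit
  set lam : ℝ → ℝ := fun x => (T.eval x)^2 / (c.HH.eval x * ((sfun x).eval x)^2) with hlam
  have hlam0 : ∀ x ∈ J, 0 ≤ lam x := by
    intro x hx
    apply div_nonneg (sq_nonneg _)
    have := hHx x hx
    positivity
  set F := T^2 - ∑ x ∈ J, Polynomial.C (lam x) * (c.HH * (sfun x)^2) with hF
  have hFroot : ∀ x ∈ J, F.eval x = 0 := by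
    intro x hx
    rw [hF]
    rw [Polynomial.eval_sub, Polynomial.eval_pow, Polynomial.eval_finset_sum]
    rw [Finset.sum_eq_single x ?_ ?_]
    · simp only [Polynomial.eval_mul, Polynomial.eval_C, Polynomial.eval_pow]
      rw [hlam]
      have hD : c.HH.eval x * ((sfun x).eval x)^2 ≠ 0 := by
        have := hHx x hx
        have := hsx x hx
        positivity
      field_simp
      rw [div_self (by intro h; apply hD; rw [sq, ← mul_assoc, h, zero_mul]), sub_self, mul_zero]
    · intro y hy hyx
      simp only [Polynomial.eval_mul, Polynomial.eval_C, Polynomial.eval_pow]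
      have : (sfun y).eval x = 0 := by
        rw [hsfun]
        rw [Polynomial.eval_prod]
        apply Finset.prod_eq_zero (i := x)
        · exact Finset.mem_erase.mpr ⟨fun h => hyx h.symm, hx⟩
        · simp
      simp [this]
    · intro h
      exact absurd hx h
  have hdvdF : γ ∣ F := by
    have hprod : (∏ x ∈ J, (Polynomial.X - Polynomial.C x)) ∣ F :=
      finset_linear_dvd J F hFroot
    have hlc : γ.leadingCoeff ≠ 0 := Polynomial.leadingCoeff_ne_zero.mpr hγ0
    have hassoc : Associated (∏ x ∈ J, (Polynomial.X - Polynomial.C x)) γ := by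
      refine ⟨(Polynomial.isUnit_C.mpr (isUnit_iff_ne_zero.mpr hlc)).unit, ?_⟩
      rw [IsUnit.unit_spec]
      linear_combination -hrep
    exact (hassoc.symm.dvd).trans hprod
  have hdegF : F.natDegree ≤ 2*c.d := by
    rw [hF]
    refine le_trans (Polynomial.natDegree_sub_le _ _) ?_
    rw [max_le_iff]
    constructor
    · rw [Polynomial.natDegree_pow]; omega
    · refine le_trans (Polynomial.natDegree_sum_le_of_forall_le _ _ ?_) (le_refl _)
      intro x hx
      refine le_trans (Polynomial.natDegree_mul_le) ?_
      have h1 : (c.HH * (sfun x)^2).natDegree ≤ c.HH.natDegree + 2*(sfun x).natDegree := by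
        refine le_trans (Polynomial.natDegree_mul_le) ?_
        rw [Polynomial.natDegree_pow]
      have := hsdeg x hx
      simp only [Polynomial.natDegree_C]
      omega
  have hLF : c.L F = 0 := hinv F hdegF hdvdF
  have hsplit : c.L (T^2) = c.L F + ∑ x ∈ J, lam x * c.L (c.HH * (sfun x)^2) := by
    have hTF : T^2 = F + ∑ x ∈ J, Polynomial.C (lam x) * (c.HH * (sfun x)^2) := by
      rw [hF]; ring
    rw [hTF, c.L_add, c.L_sum]
    congr 1
    refine Finset.sum_congr rfl fun x _ => ?_
    rw [c.L_Cmul]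
  rw [hsplit, hLF, zero_add]
  apply Finset.sum_nonneg
  intro x hx
  exact mul_nonneg (hlam0 x hx) (c.Ukpos (sfun x) (hsdeg x hx))

end Ctx
end SOCP

namespace SOCP

lemma one_le_natDegree_of_nonunit {p : Polynomial ℝ} (h0 : p ≠ 0) (hu : ¬IsUnit p) :
    1 ≤ p.natDegree := by
  by_contra h
  push_neg at h
  have h0' : p.natDegree = 0 := by omega
  exact hu (Polynomial.isUnit_iff_degree_eq_zero.mpr
    (by rw [Polynomial.degree_eq_natDegree h0, h0']; rfl))

namespace Ctx
open Polynomial MvPolynomial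

variable (c : Ctx)

lemma unit_case {γ : Polynomial ℝ} (hγ0 : γ ≠ 0) (h0 : γ.natDegree = 0)
    (hinv : ∀ P, P.natDegree ≤ 2*c.d → γ ∣ P → c.L P = 0)
    (T : Polynomial ℝ) (hT : T.natDegree ≤ c.d) : 0 ≤ c.L (T^2) := by
  have hu : IsUnit γ := Polynomial.isUnit_iff_degree_eq_zero.mpr
    (by rw [Polynomial.degree_eq_natDegree hγ0, h0]; rfl)
  have := hinv (T^2) (by rw [Polynomial.natDegree_pow]; omega) hu.dvd
  exact le_of_eq this.symm

lemma key (n : ℕ) : ∀ (γ : Polynomial ℝ), γ ≠ 0 → γ.natDegree ≤ n → γ ∣ c.gg →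
    (∀ P, P.natDegree ≤ 2*c.d → γ ∣ P → c.L P = 0) →
    ∀ T : Polynomial ℝ, T.natDegree ≤ c.d → 0 ≤ c.L (T^2) := by
  induction n with
  | zero =>
    intro γ hγ0 hγn hγg hinv T hT
    exact c.unit_case hγ0 (by omega) hinv T hT
  | succ n IH =>
    intro γ hγ0 hγn hγg hinv T hT
    rcases Nat.eq_zero_or_pos γ.natDegree with h0 | hpos
    · exact c.unit_case hγ0 h0 hinv T hT
    have hγe : γ.natDegree ≤ c.e := c.deg_le_e hγg
    have hed := c.e_le_d
    have hHdeg := c.natDegree_HH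
    -- the common recursion step
    have step : ∀ ss : Polynomial ℝ, ss ≠ 0 → ss.natDegree ≤ c.e →
        ss.natDegree < γ.natDegree → c.L (c.HH * ss^2) = 0 → 0 ≤ c.L (T^2) := by
      intro ss hs0 hse hslt hL0
      set γ₂ := EuclideanDomain.gcd γ ss with hγ₂
      have hγ₂0 : γ₂ ≠ 0 := by
        rw [hγ₂, Ne, EuclideanDomain.gcd_eq_zero_iff]
        rintro ⟨h, -⟩; exact hγ0 h
      have hγ₂dvd : γ₂ ∣ ss := EuclideanDomain.gcd_dvd_right _ _
      have hγ₂deg : γ₂.natDegree ≤ n :=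
        le_trans (Polynomial.natDegree_le_of_dvd hγ₂dvd hs0) (by omega)
      have hγ₂g : γ₂ ∣ c.gg := (EuclideanDomain.gcd_dvd_left γ ss).trans hγg
      exact IH γ₂ hγ₂0 hγ₂deg hγ₂g (c.progress γ ss hγ0 hγg hinv hs0 hse hL0) T hT
    by_cases hsf : Squarefree γ
    case neg =>
      -- a repeated factor
      have hex : ∃ x : Polynomial ℝ, x*x ∣ γ ∧ ¬IsUnit x := by
        simp only [Squarefree] at hsf
        push_neg at hsf
        exact hsf
      obtain ⟨π, hππ, hπu⟩ := hex
      have hπ0 : π ≠ 0 := by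
        rintro rfl
        rw [mul_zero, zero_dvd_iff] at hππ
        exact hγ0 hππ
      obtain ⟨τ, hτ⟩ := hππ
      set ss := π * τ with hssdef
      have hss : γ = π * ss := by rw [hτ, hssdef]; ring
      have hs0 : ss ≠ 0 := by
        rintro h
        rw [h, mul_zero] at hss
        exact hγ0 hss
      have hπdeg : 1 ≤ π.natDegree := one_le_natDegree_of_nonunit hπ0 hπu
      have hdegmul : γ.natDegree = π.natDegree + ss.natDegree := by
        rw [hss]; exact Polynomial.natDegree_mul hπ0 hs0
      have hdegss : ss.natDegree < γ.natDegree := by omega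
      have hsse : ss.natDegree ≤ c.e := by omega
      have hγdvd : γ ∣ ss^2 := ⟨τ, by rw [hτ, hssdef]; ring⟩
      have hL0 : c.L (c.HH * ss^2) = 0 := by
        apply hinv _ ?_ (hγdvd.mul_left c.HH)
        refine le_trans (Polynomial.natDegree_mul_le) ?_
        rw [Polynomial.natDegree_pow]
        omega
      exact step ss hs0 hsse hdegss hL0
    case pos =>
    by_cases hcop : IsUnit (EuclideanDomain.gcd γ c.HH)
    case neg =>
      set δ := EuclideanDomain.gcd γ c.HH with hδdef
      have hδ0 : δ ≠ 0 := by
        rw [hδdef, Ne, EuclideanDomain.gcd_eq_zero_iff]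
        rintro ⟨h, -⟩; exact hγ0 h
      obtain ⟨ss, hss⟩ := EuclideanDomain.gcd_dvd_left γ c.HH
      have hδH : δ ∣ c.HH := EuclideanDomain.gcd_dvd_right _ _
      have hs0 : ss ≠ 0 := by
        rintro rfl
        rw [mul_zero] at hss
        exact hγ0 hss
      have hδdeg : 1 ≤ δ.natDegree := one_le_natDegree_of_nonunit hδ0 hcop
      have hdegmul : γ.natDegree = δ.natDegree + ss.natDegree := by
        rw [hss]; exact Polynomial.natDegree_mul hδ0 hs0
      have hdegss : ss.natDegree < γ.natDegree := by omega
      have hsse : ss.natDegree ≤ c.e := by omega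
      have hγdvd : γ ∣ c.HH * ss^2 := by
        obtain ⟨ρ, hρ⟩ := hδH
        exact ⟨ρ * ss, by linear_combination ss^2 * hρ - (ρ*ss) * hss⟩
      have hL0 : c.L (c.HH * ss^2) = 0 := by
        apply hinv _ ?_ hγdvd
        refine le_trans (Polynomial.natDegree_mul_le) ?_
        rw [Polynomial.natDegree_pow]
        omega
      exact step ss hs0 hsse hdegss hL0
    case pos =>
    by_cases hquad : ∃ σ : Polynomial ℝ, σ.Monic ∧ Irreducible σ ∧ σ ∣ γ ∧ σ.natDegree = 2
    case pos =>
      obtain ⟨σ, hσmon, hσirr, hσdvd, hσ2⟩ := hquad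
      obtain ⟨b, μ, hμ, hshape⟩ := irreducible_shape hσmon hσirr (by omega)
      obtain ⟨A, hA⟩ := hσdvd
      have hσ0 : σ ≠ 0 := hσmon.ne_zero
      have hA0 : A ≠ 0 := by
        rintro rfl
        rw [mul_zero] at hA
        exact hγ0 hA
      have hdegmul : γ.natDegree = 2 + A.natDegree := by
        rw [hA, Polynomial.natDegree_mul hσ0 hA0, hσ2]
      have hsdeg' : (A * (Polynomial.X - Polynomial.C b)).natDegree ≤ c.e := by
        refine le_trans (Polynomial.natDegree_mul_le) ?_
        rw [Polynomial.natDegree_X_sub_C]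
        omega
      have hdvd : γ ∣ c.HH * A^2 * σ := ⟨c.HH * A, by rw [hA]; ring⟩
      have hdeg : (c.HH * A^2 * σ).natDegree ≤ 2*c.d := by
        refine le_trans (Polynomial.natDegree_mul_le) ?_
        have h1 : (c.HH * A^2).natDegree ≤ c.HH.natDegree + 2*A.natDegree := by
          refine le_trans (Polynomial.natDegree_mul_le) ?_
          rw [Polynomial.natDegree_pow]
        omega
      have hzero := hinv _ hdeg hdvd
      have hrw : c.HH * A^2 * σ
          = Polynomial.C μ * (c.HH * A^2) + c.HH * (A*(Polynomial.X - Polynomial.C b))^2 := by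
        rw [hshape]; ring
      rw [hrw, c.L_add, c.L_Cmul] at hzero
      have h1 := c.Ukpos A (by omega)
      have h2 := c.Ukpos (A * (Polynomial.X - Polynomial.C b)) hsdeg'
      have hL0 : c.L (c.HH * A^2) = 0 := by nlinarith [hμ, h1, h2, hzero]
      exact step A hA0 (by omega) (by omega) hL0
    case neg =>
      push_neg at hquad
      apply c.final_step γ hγ0 hγg hinv hsf hcop ?_ T hT
      intro σ h1 h2 h3
      exact hquad σ h1 h2 h3
end Ctx
end SOCP

namespace SOCP
namespace Ctx
open Polynomial MvPolynomial

variable (c : Ctx)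

lemma core : ∀ t : MvPolynomial (Fin 2) ℝ, t.IsHomogeneous c.d → 0 ≤ c.B (t^2) c.r := by
  intro t ht
  have hT : (toUni t).natDegree ≤ c.d := natDegree_toUni ht
  have h := c.key c.gg.natDegree c.gg c.gg_ne (le_refl _) dvd_rfl c.init_inv (toUni t) hT
  have hdegT2 : ((toUni t)^2).natDegree ≤ 2*c.d := by
    rw [Polynomial.natDegree_pow]; omega
  have hform : homog ((toUni t)^2) (2*c.d) = t^2 := by
    apply toUni_inj (homog_isHomogeneous _ _) ?_ ?_
    · have h2 := ht.pow 2
      rw [show c.d*2 = 2*c.d by ring] at h2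
      exact h2
    · rw [toUni_homog hdegT2, map_pow]
  rw [L, hform] at h
  exact h

end Ctx
end SOCP

namespace SOCP
open Polynomial MvPolynomial

/-- swap of the two variables -/
noncomputable def swapF : MvPolynomial (Fin 2) ℝ →ₐ[ℝ] MvPolynomial (Fin 2) ℝ :=
  MvPolynomial.aeval ![MvPolynomial.X 1, MvPolynomial.X 0]

lemma swapF_swapF (f : MvPolynomial (Fin 2) ℝ) : swapF (swapF f) = f := by
  have : (swapF.comp swapF) = AlgHom.id ℝ (MvPolynomial (Fin 2) ℝ) := by
    apply MvPolynomial.algHom_ext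
    intro i
    match i with
    | 0 => simp [swapF]
    | 1 => simp [swapF]
  calc swapF (swapF f) = (swapF.comp swapF) f := rfl
  _ = f := by rw [this]; rfl

lemma swapF_homog {f : MvPolynomial (Fin 2) ℝ} {n : ℕ} (hf : f.IsHomogeneous n) :
    (swapF f).IsHomogeneous n := by
  have hg : ∀ i : Fin 2,
      ((![MvPolynomial.X 1, MvPolynomial.X 0] : Fin 2 → MvPolynomial (Fin 2) ℝ) i).IsHomogeneous 1 := by
    intro i
    match i with
    | 0 => exact MvPolynomial.isHomogeneous_X _ _
    | 1 => exact MvPolynomial.isHomogeneous_X _ _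
  have h2 := hf.aeval _ hg
  rw [one_mul] at h2
  exact h2

/-- coefficient of top power via evaluation at (1,0) -/
lemma coeff_top_toUni {f : MvPolynomial (Fin 2) ℝ} {n : ℕ} (hf : f.IsHomogeneous n) :
    (toUni f).coeff n = MvPolynomial.eval ![(1:ℝ), 0] f := by
  rw [toUni_coeff hf n]
  rw [MvPolynomial.eval_eq']
  have hterm : ∀ m : Fin 2 →₀ ℕ,
      MvPolynomial.coeff m f * ∏ i, (![(1:ℝ), 0]) i ^ m i
      = if m 1 = 0 then MvPolynomial.coeff m f else 0 := by
    intro m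
    rw [Fin.prod_univ_two]
    by_cases h : m 1 = 0 <;> simp [h, zero_pow]
  rw [Finset.sum_congr rfl (fun m _ => hterm m)]
  have hmjn : mj n n 1 = 0 := by rw [mj_apply1]; omega
  rcases eq_or_ne (MvPolynomial.coeff (mj n n) f) 0 with h0 | h0
  · rw [h0]
    symm
    apply Finset.sum_eq_zero
    intro m hm
    rw [MvPolynomial.mem_support_iff] at hm
    by_cases h : m 1 = 0
    · exfalso
      have hsum := ishomog_support_sum hf hm
      have : m = mj n n := mj_eq (by omega) hsum
      rw [this] at hm
      exact hm h0
    · simp [h]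
  · rw [Finset.sum_eq_single (mj n n)]
    · simp [hmjn]
    · intro m hm hne
      rw [MvPolynomial.mem_support_iff] at hm
      by_cases h : m 1 = 0
      · exact absurd (mj_eq (by have := ishomog_support_sum hf hm; omega) (ishomog_support_sum hf hm)) hne
      · simp [h]
    · intro h
      rw [MvPolynomial.notMem_support_iff] at h
      exact absurd h h0

/-- The shearing substitution x ↦ x, y ↦ y + s·x. -/
noncomputable def Phi (s : ℝ) : MvPolynomial (Fin 2) ℝ →ₐ[ℝ] MvPolynomial (Fin 2) ℝ :=
  MvPolynomial.aeval ![MvPolynomial.X 0, MvPolynomial.X 1 + MvPolynomial.C s * MvPolynomial.X 0]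

lemma Phi_Phi (s : ℝ) (f : MvPolynomial (Fin 2) ℝ) : Phi (-s) (Phi s f) = f := by
  have : ((Phi (-s)).comp (Phi s)) = AlgHom.id ℝ (MvPolynomial (Fin 2) ℝ) := by
    apply MvPolynomial.algHom_ext
    intro i
    match i with
    | 0 => simp [Phi]
    | 1 => simp [Phi]
  calc Phi (-s) (Phi s f) = ((Phi (-s)).comp (Phi s)) f := rfl
  _ = f := by rw [this]; rfl

lemma Phi_homog (s : ℝ) {f : MvPolynomial (Fin 2) ℝ} {n : ℕ} (hf : f.IsHomogeneous n) :
    (Phi s f).IsHomogeneous n := by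
  have hg : ∀ i : Fin 2,
      ((![MvPolynomial.X 0, MvPolynomial.X 1 + MvPolynomial.C s * MvPolynomial.X 0]
        : Fin 2 → MvPolynomial (Fin 2) ℝ) i).IsHomogeneous 1 := by
    intro i
    match i with
    | 0 => exact MvPolynomial.isHomogeneous_X _ _
    | 1 =>
      exact (MvPolynomial.isHomogeneous_X _ _).add
        ((MvPolynomial.isHomogeneous_X _ _).C_mul s)
  have h2 := hf.aeval _ hg
  rw [one_mul] at h2
  exact h2

lemma Phi_ne_zero (s : ℝ) {f : MvPolynomial (Fin 2) ℝ} (hf : f ≠ 0) : Phi s f ≠ 0 := by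
  intro h
  apply hf
  have := congrArg (Phi (-s)) h
  rw [Phi_Phi, map_zero] at this
  exact this

lemma eval10_Phi (s : ℝ) (f : MvPolynomial (Fin 2) ℝ) :
    MvPolynomial.eval ![(1:ℝ), 0] (Phi s f) = MvPolynomial.eval ![(1:ℝ), s] f := by
  have : ((MvPolynomial.eval ![(1:ℝ), 0]).comp (Phi s).toRingHom)
      = MvPolynomial.eval ![(1:ℝ), s] := by
    apply MvPolynomial.ringHom_ext
    · intro a; simp [Phi]
    · intro i
      match i with
      | 0 => simp [Phi]
      | 1 => simp [Phi]
  calc MvPolynomial.eval ![(1:ℝ), 0] (Phi s f)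
      = ((MvPolynomial.eval ![(1:ℝ), 0]).comp (Phi s).toRingHom) f := rfl
  _ = _ := by rw [this]

lemma exists_good_shear {u : MvPolynomial (Fin 2) ℝ} {n : ℕ} (hu : u.IsHomogeneous n)
    (hune : u ≠ 0) : ∃ s : ℝ, MvPolynomial.eval ![(1:ℝ), s] u ≠ 0 := by
  by_contra h
  push_neg at h
  -- the polynomial c ↦ u(1,c)
  set Q : Polynomial ℝ := MvPolynomial.aeval ![(1 : Polynomial ℝ), Polynomial.X] u with hQ
  have hQeval : ∀ s : ℝ, Q.eval s = MvPolynomial.eval ![(1:ℝ), s] u := by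
    intro s
    have : ((Polynomial.evalRingHom s).comp (MvPolynomial.aeval
        ![(1 : Polynomial ℝ), Polynomial.X]).toRingHom) = MvPolynomial.eval ![(1:ℝ), s] := by
      apply MvPolynomial.ringHom_ext
      · intro a; simp
      · intro i
        match i with
        | 0 => simp
        | 1 => simp
    calc Q.eval s = ((Polynomial.evalRingHom s).comp (MvPolynomial.aeval
        ![(1 : Polynomial ℝ), Polynomial.X]).toRingHom) u := rfl
    _ = _ := by rw [this]
  have hQ0 : Q = 0 := by
    apply Polynomial.funext
    intro s
    rw [hQeval s, h s, Polynomial.eval_zero]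
  -- Q is toUni of the swap, so u = 0
  have hQswap : Q = toUni (swapF u) := by
    have : ((toUni.comp swapF) : MvPolynomial (Fin 2) ℝ →ₐ[ℝ] Polynomial ℝ)
        = MvPolynomial.aeval ![(1 : Polynomial ℝ), Polynomial.X] := by
      apply MvPolynomial.algHom_ext
      intro i
      match i with
      | 0 => simp [toUni, swapF]
      | 1 => simp [toUni, swapF]
    rw [hQ, ← this]
    rfl
  have : swapF u = 0 :=
    toUni_inj (swapF_homog hu) (MvPolynomial.isHomogeneous_zero _ _ n)
      (by rw [← hQswap, hQ0, map_zero])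
  apply hune
  have h2 := congrArg swapF this
  rw [swapF_swapF, map_zero] at h2
  exact h2

end SOCP

namespace SOCP
open Polynomial MvPolynomial

/-- Core lemma, assuming `u₁ ≠ 0`. -/
lemma core_ne (d : ℕ) (B : MvPolynomial (Fin 2) ℝ →ₗ[ℝ] MvPolynomial (Fin 2) ℝ →ₗ[ℝ] ℝ)
    (u₁ u₂ r : MvPolynomial (Fin 2) ℝ)
    (hu₁ : u₁.IsHomogeneous d) (hu₂ : u₂.IsHomogeneous d) (hne : u₁ ≠ 0)
    (hgrad : ∀ v₁ v₂ : MvPolynomial (Fin 2) ℝ, v₁.IsHomogeneous d → v₂.IsHomogeneous d →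
      B (u₁ * v₁ + u₂ * v₂) r = 0)
    (hhess : ∀ v₁ v₂ : MvPolynomial (Fin 2) ℝ, v₁.IsHomogeneous d → v₂.IsHomogeneous d →
      0 ≤ B (v₁ ^ 2 + v₂ ^ 2) r + 2 * B (u₁ * v₁ + u₂ * v₂) (u₁ * v₁ + u₂ * v₂)) :
    ∀ t : MvPolynomial (Fin 2) ℝ, t.IsHomogeneous d → 0 ≤ B (t^2) r := by
  obtain ⟨s, hs⟩ := exists_good_shear hu₁ hne
  have hPhihom : ∀ {f : MvPolynomial (Fin 2) ℝ} {n : ℕ}, f.IsHomogeneous n →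
      ((Phi s) f).IsHomogeneous n := fun hf => Phi_homog s hf
  have hPsihom : ∀ {f : MvPolynomial (Fin 2) ℝ} {n : ℕ}, f.IsHomogeneous n →
      ((Phi (-s)) f).IsHomogeneous n := fun hf => Phi_homog (-s) hf
  set c : Ctx :=
    { d := d
      B := fun a b => B (Phi (-s) a) (Phi (-s) b)
      r := Phi s r
      u₁ := Phi s u₁
      u₂ := Phi s u₂
      hB1 := by
        intro a b y
        show B (Phi (-s) (a+b)) (Phi (-s) y) = _
        rw [map_add, map_add, LinearMap.add_apply]
      hBs1 := by
        intro k a y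
        show B (Phi (-s) (k • a)) (Phi (-s) y) = _
        rw [map_smul, map_smul, LinearMap.smul_apply, smul_eq_mul]
      hu₁ := hPhihom hu₁
      hu₂ := hPhihom hu₂
      hu1ne := Phi_ne_zero s hne
      hdeg := by
        apply le_antisymm (natDegree_toUni (Phi_homog s hu₁))
        apply Polynomial.le_natDegree_of_ne_zero
        rw [coeff_top_toUni (Phi_homog s hu₁), eval10_Phi]
        exact hs
      hgrad := by
        intro v₁ v₂ hv₁ hv₂
        have h1 : Phi (-s) (Phi s u₁ * v₁ + Phi s u₂ * v₂)
            = u₁ * (Phi (-s) v₁) + u₂ * (Phi (-s) v₂) := by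
          rw [map_add, map_mul, map_mul, Phi_Phi, Phi_Phi]
        show B (Phi (-s) (Phi s u₁ * v₁ + Phi s u₂ * v₂)) (Phi (-s) (Phi s r)) = 0
        rw [h1, Phi_Phi]
        exact hgrad _ _ (hPsihom hv₁) (hPsihom hv₂)
      hhess := by
        intro v₁ v₂ hv₁ hv₂
        have h1 : Phi (-s) (Phi s u₁ * v₁ + Phi s u₂ * v₂)
            = u₁ * (Phi (-s) v₁) + u₂ * (Phi (-s) v₂) := by
          rw [map_add, map_mul, map_mul, Phi_Phi, Phi_Phi]
        have h2 : Phi (-s) (v₁^2 + v₂^2) = (Phi (-s) v₁)^2 + (Phi (-s) v₂)^2 := by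
          rw [map_add, map_pow, map_pow]
        show 0 ≤ B (Phi (-s) (v₁^2+v₂^2)) (Phi (-s) (Phi s r))
          + 2 * B (Phi (-s) (Phi s u₁ * v₁ + Phi s u₂ * v₂))
              (Phi (-s) (Phi s u₁ * v₁ + Phi s u₂ * v₂))
        rw [h1, h2, Phi_Phi]
        exact hhess _ _ (hPsihom hv₁) (hPsihom hv₂) } with hc
  intro t ht
  have h := c.core (Phi s t) (hPhihom ht)
  have hb : c.B ((Phi s t)^2) c.r = B (t^2) r := by
    show B (Phi (-s) ((Phi s t)^2)) (Phi (-s) (Phi s r)) = B (t^2) r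
    rw [map_pow, Phi_Phi, Phi_Phi]
  rw [hb] at h
  exact h

/-- Core lemma: at a second-order critical point, `B (t²) (u₁²+u₂²-p) ≥ 0`. -/
lemma core_full (d : ℕ) (B : MvPolynomial (Fin 2) ℝ →ₗ[ℝ] MvPolynomial (Fin 2) ℝ →ₗ[ℝ] ℝ)
    (u₁ u₂ r : MvPolynomial (Fin 2) ℝ)
    (hu₁ : u₁.IsHomogeneous d) (hu₂ : u₂.IsHomogeneous d)
    (hgrad : ∀ v₁ v₂ : MvPolynomial (Fin 2) ℝ, v₁.IsHomogeneous d → v₂.IsHomogeneous d →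
      B (u₁ * v₁ + u₂ * v₂) r = 0)
    (hhess : ∀ v₁ v₂ : MvPolynomial (Fin 2) ℝ, v₁.IsHomogeneous d → v₂.IsHomogeneous d →
      0 ≤ B (v₁ ^ 2 + v₂ ^ 2) r + 2 * B (u₁ * v₁ + u₂ * v₂) (u₁ * v₁ + u₂ * v₂)) :
    ∀ t : MvPolynomial (Fin 2) ℝ, t.IsHomogeneous d → 0 ≤ B (t^2) r := by
  rcases eq_or_ne u₁ 0 with h1 | h1
  · rcases eq_or_ne u₂ 0 with h2 | h2
    · -- both zero: Hessian gives the result directly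
      intro t ht
      have h := hhess t 0 ht (MvPolynomial.isHomogeneous_zero _ _ d)
      have e1 : t^2 + 0^2 = t^2 := by ring
      have e2 : u₁ * t + u₂ * 0 = 0 := by rw [h1]; ring
      rw [e1, e2] at h
      simpa using h
    · -- swap the roles of u₁ and u₂
      apply core_ne d B u₂ u₁ r hu₂ hu₁ h2
      · intro v₁ v₂ hv₁ hv₂
        rw [show u₂ * v₁ + u₁ * v₂ = u₁ * v₂ + u₂ * v₁ by ring]
        exact hgrad v₂ v₁ hv₂ hv₁
      · intro v₁ v₂ hv₁ hv₂
        have := hhess v₂ v₁ hv₂ hv₁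
        rw [show u₁ * v₂ + u₂ * v₁ = u₂ * v₁ + u₁ * v₂ by ring,
          show v₂^2 + v₁^2 = v₁^2 + v₂^2 by ring] at this
        exact this
  · exact core_ne d B u₁ u₂ r hu₁ hu₂ h1 hgrad hhess

end SOCP

open MvPolynomial in
theorem socp_is_projection'
    (d : ℕ)
    (B : MvPolynomial (Fin 2) ℝ →ₗ[ℝ] MvPolynomial (Fin 2) ℝ →ₗ[ℝ] ℝ)
    (hsymm : ∀ a b : MvPolynomial (Fin 2) ℝ, B a b = B b a)
    (hpos : ∀ q : MvPolynomial (Fin 2) ℝ, q.IsHomogeneous (2 * d) → q ≠ 0 → 0 < B q q)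
    (u₁ u₂ p : MvPolynomial (Fin 2) ℝ)
    (hu₁ : u₁.IsHomogeneous d) (hu₂ : u₂.IsHomogeneous d)
    (hp : p.IsHomogeneous (2 * d))
    (hgrad : ∀ v₁ v₂ : MvPolynomial (Fin 2) ℝ, v₁.IsHomogeneous d → v₂.IsHomogeneous d →
      B (u₁ * v₁ + u₂ * v₂) (u₁ ^ 2 + u₂ ^ 2 - p) = 0)
    (hhess : ∀ v₁ v₂ : MvPolynomial (Fin 2) ℝ, v₁.IsHomogeneous d → v₂.IsHomogeneous d →
      0 ≤ B (v₁ ^ 2 + v₂ ^ 2) (u₁ ^ 2 + u₂ ^ 2 - p)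
        + 2 * B (u₁ * v₁ + u₂ * v₂) (u₁ * v₁ + u₂ * v₂)) :
    ∀ q : MvPolynomial (Fin 2) ℝ, q.IsHomogeneous (2 * d) →
      (∃ (N : ℕ) (t : Fin N → MvPolynomial (Fin 2) ℝ),
        (∀ i, (t i).IsHomogeneous d) ∧ q = ∑ i, (t i) ^ 2) →
      B (u₁ ^ 2 + u₂ ^ 2 - p) (u₁ ^ 2 + u₂ ^ 2 - p) ≤ B (q - p) (q - p) := by
  intro q hq hsos
  obtain ⟨N, t, ht, hqe⟩ := hsos
  -- gradient at (u₁,u₂) : B (u₁²+u₂²) r = 0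
  have hBur : B (u₁^2 + u₂^2) (u₁ ^ 2 + u₂ ^ 2 - p) = 0 := by
    have h := hgrad u₁ u₂ hu₁ hu₂
    rw [show u₁*u₁ + u₂*u₂ = u₁^2 + u₂^2 by ring] at h
    exact h
  -- each square pairs nonnegatively with r
  have hcore : ∀ i, 0 ≤ B ((t i)^2) (u₁ ^ 2 + u₂ ^ 2 - p) := fun i =>
    SOCP.core_full d B u₁ u₂ (u₁ ^ 2 + u₂ ^ 2 - p) hu₁ hu₂ hgrad hhess (t i) (ht i)
  have hBqr : 0 ≤ B q (u₁ ^ 2 + u₂ ^ 2 - p) := by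
    rw [hqe, map_sum, LinearMap.coe_sum, Finset.sum_apply]
    exact Finset.sum_nonneg fun i _ => hcore i
  -- the difference q - (u₁²+u₂²) is homogeneous of degree 2d
  have huhom : (u₁^2 + u₂^2).IsHomogeneous (2*d) := by
    have h1 := hu₁.pow 2
    have h2 := hu₂.pow 2
    rw [show d*2 = 2*d by ring] at h1 h2
    exact h1.add h2
  have hquu : 0 ≤ B (q - (u₁^2+u₂^2)) (q - (u₁^2+u₂^2)) := by
    rcases eq_or_ne (q - (u₁^2+u₂^2)) 0 with h | h
    · rw [h]
      simp
    · exact le_of_lt (hpos _ (hq.sub huhom) h)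
  -- expansion helpers (second argument kept as a variable so that rewrites hit the first slot)
  have hsplit : q - p = (q - (u₁^2+u₂^2)) + (u₁ ^ 2 + u₂ ^ 2 - p) := by ring
  have e2 : ∀ y, B (q - p) y = B (q - (u₁^2+u₂^2)) y + B (u₁ ^ 2 + u₂ ^ 2 - p) y := by
    intro y
    rw [hsplit, map_add, LinearMap.add_apply]
  have e3 : ∀ y, B (q - (u₁^2+u₂^2)) y = B q y - B (u₁^2+u₂^2) y := by
    intro y
    rw [map_sub, LinearMap.sub_apply]
  have h1 := e2 (q - p)
  have h2 := e2 (q - (u₁^2+u₂^2))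
  have h3 := e2 (u₁^2+u₂^2-p)
  have s1 := hsymm (q - (u₁^2+u₂^2)) (q-p)
  have s2 := hsymm (u₁ ^ 2 + u₂ ^ 2 - p) (q-p)
  have s3 := hsymm (u₁ ^ 2 + u₂ ^ 2 - p) (q - (u₁^2+u₂^2))
  have h4 := e3 (u₁^2+u₂^2-p)
  linarith

/-- Projection onto the sum of squares cone: at any second-order critical point of `f_p`,
`u₁² + u₂²` is the projection of `p` onto the sum of squares cone. -/
theorem socp_is_projection
    (d : ℕ)
    (B : MvPolynomial (Fin 2) ℝ →ₗ[ℝ] MvPolynomial (Fin 2) ℝ →ₗ[ℝ] ℝ)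
    (hsymm : ∀ a b : MvPolynomial (Fin 2) ℝ, B a b = B b a)
    (hpos : ∀ q : MvPolynomial (Fin 2) ℝ, q.IsHomogeneous (2 * d) → q ≠ 0 → 0 < B q q)
    (u₁ u₂ p : MvPolynomial (Fin 2) ℝ)
    (hu₁ : u₁.IsHomogeneous d) (hu₂ : u₂.IsHomogeneous d)
    (hp : p.IsHomogeneous (2 * d))
    (hgrad : ∀ v₁ v₂ : MvPolynomial (Fin 2) ℝ, v₁.IsHomogeneous d → v₂.IsHomogeneous d →
      B (u₁ * v₁ + u₂ * v₂) (u₁ ^ 2 + u₂ ^ 2 - p) = 0)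
    (hhess : ∀ v₁ v₂ : MvPolynomial (Fin 2) ℝ, v₁.IsHomogeneous d → v₂.IsHomogeneous d →
      0 ≤ B (v₁ ^ 2 + v₂ ^ 2) (u₁ ^ 2 + u₂ ^ 2 - p)
        + 2 * B (u₁ * v₁ + u₂ * v₂) (u₁ * v₁ + u₂ * v₂)) :
    ∀ q : MvPolynomial (Fin 2) ℝ, q.IsHomogeneous (2 * d) →
      (∃ (N : ℕ) (t : Fin N → MvPolynomial (Fin 2) ℝ),
        (∀ i, (t i).IsHomogeneous d) ∧ q = ∑ i, (t i) ^ 2) →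
      B (u₁ ^ 2 + u₂ ^ 2 - p) (u₁ ^ 2 + u₂ ^ 2 - p) ≤ B (q - p) (q - p) := by
  exact socp_is_projection' d B hsymm hpos u₁ u₂ p hu₁ hu₂ hp hgrad hhess
end
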